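/- arXiv:2604.26415 — 6 statements merged into one kernel-verified Lean document; each statement's English description precedes it below -/
import Mathlib

section
/- Let A = (a, h_1*a + d*b_1, h_2*a + d*b_2, ..., h_k*a + d*b_k), where a ≥ 2 and k ≥ 1 are integers, d is a nonzero integer, B = (b_1, ..., b_k) and H = (h_1, ..., h_k) are sequences of positive integers, and gcd of all entries of A equals 1; if d < 0, assume additionally that h_i*a + d*b_i > 1 for all 1 ≤ i ≤ k. Let p be a positive divisor of a. Then for every r with 0 ≤ r ≤ a/p − 1, the element N_{dr,p} of the Apéry set of a/p in the numerical semigroup ⟨A⟩/p (that is, the minimum element of ⟨A⟩/p congruent to d*r modulo a/p) equals min over m ∈ ℕ of O_B^H(m*a + r*p) * (a/p) + (m*a/p + r)*d. -/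
/-- `OBH k b h M = min { Σ_{i=1}^k h i * x i : Σ_{i=1}^k b i * x i = M, x i ∈ ℕ }`
(1-indexed, as an infimum in `ℕ`). -/
noncomputable def OBH (k : ℕ) (b h : ℕ → ℕ) (M : ℕ) : ℕ :=
  sInf {n : ℕ | ∃ x : ℕ → ℕ, ∑ i ∈ Finset.Icc 1 k, b i * x i = M ∧
    n = ∑ i ∈ Finset.Icc 1 k, h i * x i}

set_option maxHeartbeats 1000000 in
/-- for `A = (a, h₁a+db₁, …, hₖa+dbₖ)` and `p` a positive divisor of `a`,
the Apéry element `N_{dr,p}` of `a/p` in `⟨A⟩/p` (the least element of `⟨A⟩/p`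
congruent to `d·r mod a/p`) equals
`min_{m ∈ ℕ} O_B^H(ma + rp) · (a/p) + (ma/p + r)·d`. -/
theorem stmt_0 (a k p : ℕ) (d : ℤ) (b h : ℕ → ℕ)
    (ha : 2 ≤ a) (hk : 1 ≤ k)
    (hd : d ≠ 0)
    (hbpos : ∀ i, 1 ≤ i → i ≤ k → 0 < b i)
    (hhpos : ∀ i, 1 ≤ i → i ≤ k → 0 < h i)
    (hgcd : Finset.gcd (Finset.Icc 0 k)
      (fun i => if i = 0 then (a : ℤ) else (h i : ℤ) * a + d * b i) = 1)
    (hneg : d < 0 → ∀ i, 1 ≤ i → i ≤ k → 1 < (h i : ℤ) * a + d * b i)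
    (hp : 0 < p) (hpa : p ∣ a)
    (r : ℕ) (hr : r ≤ a / p - 1)
    (N : ℕ)
    (hN : IsLeast {n : ℕ |
      (∃ x : ℕ → ℕ, (p * n : ℤ) = (x 0 : ℤ) * a +
        ∑ i ∈ Finset.Icc 1 k, (x i : ℤ) * ((h i : ℤ) * a + d * b i)) ∧
      ((a / p : ℕ) : ℤ) ∣ (n : ℤ) - d * r} N) :
    IsLeast {z : ℤ | ∃ m : ℕ,
      (∃ x : ℕ → ℕ, ∑ i ∈ Finset.Icc 1 k, b i * x i = m * a + r * p) ∧
      z = (OBH k b h (m * a + r * p) : ℤ) * ((a / p : ℕ) : ℤ) +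
        ((m * (a / p) + r : ℕ) : ℤ) * d}
      (N : ℤ) := by
  obtain ⟨⟨⟨x, hx⟩, hdvd⟩, hmin⟩ := hN
  obtain ⟨q, hq⟩ := hpa
  have hp' : (0:ℤ) < (p:ℤ) := by exact_mod_cast hp
  have hqp : a / p = q := by rw [hq, Nat.mul_div_cancel_left _ hp]
  have hq1 : 0 < q := Nat.pos_of_ne_zero (fun h0 => by subst h0; omega)
  have hrq : r < q := by rw [hqp] at hr; omega
  have haZ : (a:ℤ) = (p:ℤ) * (q:ℤ) := by exact_mod_cast hq
  -- coprimality of a and d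
  have hcop : IsCoprime (a:ℤ) d := by
    rw [Int.isCoprime_iff_gcd_eq_one]
    have hdg : ((Int.gcd (a:ℤ) d : ℕ) : ℤ) ∣ 1 := by
      rw [← hgcd]
      apply Finset.dvd_gcd
      intro i hi
      by_cases h0 : i = 0
      · simpa [h0] using (Int.gcd_dvd_left _ _ : ((Int.gcd (a:ℤ) d : ℕ):ℤ) ∣ (a:ℤ))
      · simp only [h0, if_false]
        exact dvd_add ((Int.gcd_dvd_left _ _ : ((Int.gcd (a:ℤ) d : ℕ):ℤ) ∣ (a:ℤ)).mul_left _)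
          ((Int.gcd_dvd_right _ _ : ((Int.gcd (a:ℤ) d : ℕ):ℤ) ∣ d).mul_right _)
    exact Nat.dvd_one.mp (Int.ofNat_dvd.mp (by exact_mod_cast hdg))
  -- sum manipulation lemma
  have hsum : ∀ y : ℕ → ℕ, ∑ i ∈ Finset.Icc 1 k, (y i : ℤ) * ((h i:ℤ) * a + d * b i)
      = (a:ℤ) * ∑ i ∈ Finset.Icc 1 k, (h i:ℤ) * (y i : ℤ)
        + d * ∑ i ∈ Finset.Icc 1 k, (b i:ℤ) * (y i : ℤ) := by
    intro y
    rw [Finset.mul_sum, Finset.mul_sum, ← Finset.sum_add_distrib]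
    exact Finset.sum_congr rfl fun i _ => by ring
  have hterm : ∀ i ∈ Finset.Icc 1 k, (0:ℤ) ≤ (h i:ℤ) * a + d * b i := by
    intro i hi
    simp only [Finset.mem_Icc] at hi
    rcases lt_or_ge d 0 with hd' | hd'
    · linarith [hneg hd' i hi.1 hi.2]
    · have h1 : (0:ℤ) ≤ (h i:ℤ) * a := by positivity
      have h2 : (0:ℤ) ≤ d * b i := mul_nonneg hd' (by positivity)
      linarith
  -- key construction: from a representation of m*a+r*p we get an element of the Apery-type set
  have key : ∀ (m : ℕ) (y : ℕ → ℕ),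
      (∑ i ∈ Finset.Icc 1 k, b i * y i) = m * a + r * p →
      ∃ n : ℕ, ((n:ℤ) = ((∑ i ∈ Finset.Icc 1 k, h i * y i : ℕ) : ℤ) * q
          + ((m * q + r : ℕ) : ℤ) * d)
        ∧ (∃ x : ℕ → ℕ, (p * n : ℤ) = (x 0 : ℤ) * a +
            ∑ i ∈ Finset.Icc 1 k, (x i : ℤ) * ((h i : ℤ) * a + d * b i))
        ∧ ((a / p : ℕ) : ℤ) ∣ (n : ℤ) - d * r := by
    intro m y hy
    set X : ℤ := ((∑ i ∈ Finset.Icc 1 k, h i * y i : ℕ) : ℤ) * q + ((m * q + r : ℕ) : ℤ) * d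
      with hX
    have hyZ : (∑ i ∈ Finset.Icc 1 k, (b i:ℤ) * (y i:ℤ)) = (m:ℤ) * a + (r:ℤ) * p := by
      have := congrArg (Nat.cast : ℕ → ℤ) hy
      push_cast at this
      rw [← this]
    have hHZ : ((∑ i ∈ Finset.Icc 1 k, h i * y i : ℕ) : ℤ)
        = ∑ i ∈ Finset.Icc 1 k, (h i:ℤ) * (y i:ℤ) := by push_cast; rfl
    have h1 : (p:ℤ) * X = ∑ i ∈ Finset.Icc 1 k, (y i:ℤ) * ((h i:ℤ) * a + d * b i) := by
      rw [hsum y, hyZ, hX, hHZ]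
      push_cast
      rw [haZ]
      ring
    have h2 : (0:ℤ) ≤ ∑ i ∈ Finset.Icc 1 k, (y i:ℤ) * ((h i:ℤ) * a + d * b i) :=
      Finset.sum_nonneg fun i hi => mul_nonneg (by positivity) (hterm i hi)
    have hz : (0:ℤ) ≤ X := by
      have h3 : (p:ℤ) * 0 ≤ (p:ℤ) * X := by rw [mul_zero, h1]; exact h2
      exact le_of_mul_le_mul_left h3 hp'
    refine ⟨X.toNat, by rw [Int.toNat_of_nonneg hz], ?_, ?_⟩
    · refine ⟨fun i => if i = 0 then 0 else y i, ?_⟩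
      have hcast : ((p : ℤ) * (X.toNat : ℤ)) = (p:ℤ) * X := by rw [Int.toNat_of_nonneg hz]
      push_cast
      rw [hcast, h1]
      norm_num
      refine Finset.sum_congr rfl fun i hi => ?_
      have : i ≠ 0 := by simp only [Finset.mem_Icc] at hi; omega
      simp [this]
    · refine ⟨((∑ i ∈ Finset.Icc 1 k, h i * y i : ℕ) : ℤ) + (m:ℤ) * d, ?_⟩
      rw [hqp, Int.toNat_of_nonneg hz, hX]
      push_cast
      ring
  constructor
  · -- N belongs to the set
    -- decompose p*N
    set S : ℕ := ∑ i ∈ Finset.Icc 1 k, b i * x i with hS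
    set T : ℤ := (x 0 : ℤ) + ∑ i ∈ Finset.Icc 1 k, (h i:ℤ) * (x i:ℤ) with hT
    have hSZ : ((S:ℕ):ℤ) = ∑ i ∈ Finset.Icc 1 k, (b i:ℤ) * (x i:ℤ) := by
      rw [hS]; push_cast; rfl
    have hpN : (p:ℤ) * N = T * a + d * S := by
      rw [hx, hsum x, hSZ, hT]; ring
    rw [hqp] at hdvd
    obtain ⟨t, ht⟩ := hdvd
    have haS : (a:ℤ) ∣ d * ((S:ℤ) - (p:ℤ) * r) := by
      refine ⟨t - T, ?_⟩
      linear_combination -hpN + (p:ℤ) * ht - t * haZ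
    have hdS : (a:ℤ) ∣ (S:ℤ) - (p:ℤ) * r := hcop.dvd_of_dvd_mul_left haS
    obtain ⟨c, hc⟩ := hdS
    have hpr : (p:ℤ) * r < a := by
      rw [haZ]
      have : p * r < p * q := (Nat.mul_lt_mul_left hp).mpr hrq
      exact_mod_cast this
    have ha' : (0:ℤ) < a := by exact_mod_cast (by omega : 0 < a)
    have hSnn : (0:ℤ) ≤ (S:ℤ) := by positivity
    have hc0 : 0 ≤ c := by
      by_contra hcn
      push_neg at hcn
      have h1 : (a:ℤ) * c ≤ (a:ℤ) * (-1) := by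
        apply mul_le_mul_of_nonneg_left (by omega) (le_of_lt ha')
      linarith
    set m : ℕ := c.toNat with hm
    have hcm : (c:ℤ) = (m:ℤ) := (Int.toNat_of_nonneg hc0).symm
    have hSm : S = m * a + r * p := by
      have : (S:ℤ) = (m:ℤ) * a + (r:ℤ) * p := by rw [← hcm]; linarith [hc]
      exact_mod_cast this
    refine ⟨m, ⟨x, hSm⟩, ?_⟩
    -- compute N in terms of OBH
    have hOle : OBH k b h (m * a + r * p) ≤ ∑ i ∈ Finset.Icc 1 k, h i * x i :=
      Nat.sInf_le ⟨x, hSm, rfl⟩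
    have hne : {n : ℕ | ∃ y : ℕ → ℕ, ∑ i ∈ Finset.Icc 1 k, b i * y i = m * a + r * p ∧
        n = ∑ i ∈ Finset.Icc 1 k, h i * y i}.Nonempty := ⟨_, x, hSm, rfl⟩
    obtain ⟨y', hy', hOy'⟩ := Nat.sInf_mem hne
    have hOBH : OBH k b h (m * a + r * p) = ∑ i ∈ Finset.Icc 1 k, h i * y' i := hOy'
    obtain ⟨n, hn1, hn2, hn3⟩ := key m y' hy'
    have hNn : N ≤ n := hmin ⟨hn2, hn3⟩
    -- reverse inequality: n ≤ N
    have hNval : (p:ℤ) * N = (p:ℤ) * ((T + d * m) * q + d * r) := by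
      rw [hpN]
      have : (S:ℤ) = (m:ℤ) * a + (r:ℤ) * p := by exact_mod_cast hSm
      rw [this, haZ]
      ring
    have hNeq : (N:ℤ) = (T + d * m) * q + d * r := by
      have := mul_left_cancel₀ (ne_of_gt hp') hNval
      exact this
    have hOle' : (∑ i ∈ Finset.Icc 1 k, h i * y' i) ≤ ∑ i ∈ Finset.Icc 1 k, h i * x i := by
      rw [← hOBH]; exact hOle
    have hTO : ((∑ i ∈ Finset.Icc 1 k, h i * y' i : ℕ):ℤ) ≤ T := by
      rw [hT]
      have h2 : ((∑ i ∈ Finset.Icc 1 k, h i * x i : ℕ):ℤ)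
          = ∑ i ∈ Finset.Icc 1 k, (h i:ℤ) * (x i:ℤ) := by push_cast; rfl
      have h1 : ((∑ i ∈ Finset.Icc 1 k, h i * y' i : ℕ):ℤ)
          ≤ ∑ i ∈ Finset.Icc 1 k, (h i:ℤ) * (x i:ℤ) := by
        rw [← h2]; exact_mod_cast hOle'
      have h3 : (0:ℤ) ≤ (x 0 : ℤ) := Int.natCast_nonneg _
      linarith
    have hnN : (n:ℤ) ≤ (N:ℤ) := by
      rw [hn1, hNeq]
      have hqZ : (0:ℤ) ≤ (q:ℤ) := Int.natCast_nonneg q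
      have hmul := mul_le_mul_of_nonneg_right hTO hqZ
      push_cast
      push_cast at hmul
      linarith [hmul]
    have hNneq : (N:ℤ) = (n:ℤ) := le_antisymm (by exact_mod_cast hNn) hnN
    rw [hNneq, hn1, hOBH, hqp]
  · rintro z ⟨m, ⟨y, hy⟩, rfl⟩
    have hne : {n : ℕ | ∃ x : ℕ → ℕ, ∑ i ∈ Finset.Icc 1 k, b i * x i = m * a + r * p ∧
        n = ∑ i ∈ Finset.Icc 1 k, h i * x i}.Nonempty := ⟨_, y, hy, rfl⟩
    obtain ⟨y', hy', hOy'⟩ := Nat.sInf_mem hne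
    obtain ⟨n, hn1, hn2, hn3⟩ := key m y' hy'
    have hNn : N ≤ n := hmin ⟨hn2, hn3⟩
    have hOBH : OBH k b h (m * a + r * p) = ∑ i ∈ Finset.Icc 1 k, h i * y' i := hOy'
    rw [hOBH, hqp]
    calc (N:ℤ) ≤ (n:ℤ) := by exact_mod_cast hNn
    _ = _ := by rw [hn1]
end

section
/- Let B = (b_1, b_2, ..., b_k) with b_1 = 1, b_{i+1} = s_i*b_i + 1 and s_i ≥ s_{i−1} ≥ 1 for 1 ≤ i ≤ k−1. Then for any positive integer M, there is a unique tuple (x_1, ..., x_k) of nonnegative integers with Σ_{i=1}^k b_i*x_i = M satisfying: (1) x_k = ⌊M/b_k⌋; (2) x_i ∈ {0, 1, ..., s_i} for every 1 ≤ i ≤ k−1; (3) if x_i = s_i for some 2 ≤ i ≤ k−1, then x_1 = ⋯ = x_{i−1} = 0. Moreover, this tuple achieves the minimum opt_B(M) = x_1 + x_2 + ⋯ + x_k. -/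
namespace Stmt2Aux

def gr (b : ℕ → ℕ) : ℕ → ℕ → ℕ
  | 0, _ => 0
  | j+1, N => N / b (j+1) + gr b j (N % b (j+1))

def ra (b : ℕ → ℕ) (k M : ℕ) : ℕ → ℕ
  | 0 => M
  | t+1 => ra b k M t % b (k - t)

lemma gr_succ (b : ℕ → ℕ) (j N : ℕ) :
    gr b (j+1) N = N / b (j+1) + gr b j (N % b (j+1)) := rfl

lemma gr_zero (b : ℕ → ℕ) : ∀ j, gr b j 0 = 0
  | 0 => rfl
  | j+1 => by simp [gr, gr_zero b j]

lemma gr_one {b : ℕ → ℕ} (hb1 : b 1 = 1) (N : ℕ) : gr b 1 N = N := by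
  simp [gr, hb1]

lemma gr_mul {b : ℕ → ℕ} {j : ℕ} (hj : 1 ≤ j) (hbj : 0 < b j) (c : ℕ) :
    gr b j (c * b j) = c := by
  obtain ⟨t, rfl⟩ : ∃ t, j = t + 1 := ⟨j - 1, by omega⟩
  simp [gr, Nat.mul_div_cancel _ hbj, Nat.mul_mod_left, gr_zero]

lemma gr_add_mul {b : ℕ → ℕ} {t : ℕ} (hm : 0 < b (t+1)) (A c : ℕ) :
    gr b (t+1) (A + b (t+1) * c) = gr b (t+1) A + c := by
  simp [gr, Nat.add_mul_mod_self_left, Nat.add_mul_div_left _ _ hm]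
  omega

section
variable {k : ℕ} {b s : ℕ → ℕ}

lemma bpos (hb1 : b 1 = 1)
    (hbrec : ∀ i, 1 ≤ i → i ≤ k - 1 → b (i + 1) = s i * b i + 1) :
    ∀ i, 1 ≤ i → i ≤ k → 1 ≤ b i := by
  intro i h1 h2
  match i, h1 with
  | 1, _ => omega
  | (n+2), _ =>
    rw [hbrec (n+1) (by omega) (by omega)]
    omega

lemma lemE (hk : 2 ≤ k) (hb1 : b 1 = 1)
    (hbrec : ∀ i, 1 ≤ i → i ≤ k - 1 → b (i + 1) = s i * b i + 1)
    (hsmono : ∀ i, 2 ≤ i → i ≤ k - 1 → s (i - 1) ≤ s i) :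
    ∀ j, 1 ≤ j → j ≤ k → ∀ c, (2 ≤ j → s (j-1) ≤ c) → ∀ N,
      gr b j N + 1 ≤ gr b j (N+1) + c := by
  intro j
  induction j with
  | zero => omega
  | succ j ih =>
    intro _ hjk c hc N
    rcases Nat.eq_zero_or_pos j with rfl | hj
    · rw [gr_one hb1, gr_one hb1]; omega
    · have hbj1 : b (j+1) = s j * b j + 1 := hbrec j hj (by omega)
      have hbj : 1 ≤ b j := bpos hb1 hbrec j hj (by omega)
      set m := b (j+1) with hm
      have hmpos : 0 < m := by omega
      obtain ⟨q, r, hrm, rfl⟩ : ∃ q r, r < m ∧ N = m * q + r :=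
        ⟨N / m, N % m, Nat.mod_lt _ hmpos, (Nat.div_add_mod N m).symm⟩
      have hq : (m*q + r) / m = q := by
        rw [Nat.mul_add_div hmpos, Nat.div_eq_of_lt hrm]; omega
      have hr : (m*q + r) % m = r := by
        rw [Nat.mul_add_mod, Nat.mod_eq_of_lt hrm]
      rw [gr_succ, gr_succ, ← hm, hq, hr]
      by_cases hcase : r + 1 < m
      · have hq' : (m*q + r + 1) / m = q := by
          rw [add_assoc, Nat.mul_add_div hmpos, Nat.div_eq_of_lt hcase]; omega
        have hr' : (m*q + r + 1) % m = r + 1 := by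
          rw [add_assoc, Nat.mul_add_mod, Nat.mod_eq_of_lt hcase]
        rw [hq', hr']
        have key : gr b j r + 1 ≤ gr b j (r+1) + c :=
          ih hj (by omega) c
            (fun h2 => le_trans (hsmono j h2 (by omega)) (hc (by omega))) r
        omega
      · have hrm1 : r + 1 = m := by omega
        have hreq : r = s j * b j := by omega
        have hgr : gr b j r = s j := by rw [hreq]; exact gr_mul hj (by omega) _
        have hmul : m*q + r + 1 = m * (q+1) := by rw [Nat.mul_add, Nat.mul_one]; omega
        have hq' : (m*q + r + 1) / m = q + 1 := by
          rw [hmul, Nat.mul_div_cancel_left _ hmpos]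
        have hr' : (m*q + r + 1) % m = 0 := by
          rw [hmul, Nat.mul_mod_right]
        rw [hq', hr', hgr, gr_zero]
        have : s j ≤ c := hc (by omega)
        omega

lemma lemD (hk : 2 ≤ k) (hb1 : b 1 = 1)
    (hbrec : ∀ i, 1 ≤ i → i ≤ k - 1 → b (i + 1) = s i * b i + 1)
    (hsmono : ∀ i, 2 ≤ i → i ≤ k - 1 → s (i - 1) ≤ s i) :
    ∀ j, 1 ≤ j → j ≤ k - 1 → ∀ N, gr b j N + 1 ≤ gr b j (N + b (j+1)) := by
  intro j
  induction j with
  | zero => omega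
  | succ j ih =>
    intro _ hjk N
    have hbtop : b (j+1+1) = s (j+1) * b (j+1) + 1 := hbrec (j+1) (by omega) (by omega)
    rcases Nat.eq_zero_or_pos j with rfl | hj
    · rw [gr_one hb1, gr_one hb1]
      omega
    · have hbj1 : b (j+1) = s j * b j + 1 := hbrec j hj (by omega)
      have hbj : 1 ≤ b j := bpos hb1 hbrec j hj (by omega)
      set m := b (j+1) with hm
      have hmpos : 0 < m := by omega
      obtain ⟨q, r, hrm, rfl⟩ : ∃ q r, r < m ∧ N = m * q + r :=
        ⟨N / m, N % m, Nat.mod_lt _ hmpos, (Nat.div_add_mod N m).symm⟩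
      have hq : (m*q + r) / m = q := by
        rw [Nat.mul_add_div hmpos, Nat.div_eq_of_lt hrm]; omega
      have hr : (m*q + r) % m = r := by
        rw [Nat.mul_add_mod, Nat.mod_eq_of_lt hrm]
      have hNe : m*q + r + b (j+1+1) = m * (q + s (j+1)) + (r + 1) := by
        rw [hbtop, Nat.mul_add, Nat.mul_comm m (s (j+1))]; omega
      rw [gr_succ, gr_succ, ← hm, hq, hr]
      by_cases hcase : r + 1 < m
      · have hq' : (m*q + r + b (j+1+1)) / m = q + s (j+1) := by
          rw [hNe, Nat.mul_add_div hmpos, Nat.div_eq_of_lt hcase]; omega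
        have hr' : (m*q + r + b (j+1+1)) % m = r + 1 := by
          rw [hNe, Nat.mul_add_mod, Nat.mod_eq_of_lt hcase]
        rw [hq', hr']
        have key : gr b j r + 1 ≤ gr b j (r+1) + s (j+1) := by
          refine lemE hk hb1 hbrec hsmono j hj (by omega) (s (j+1)) (fun h2 => ?_) r
          exact le_trans (hsmono j h2 (by omega)) (hsmono (j+1) (by omega) (by omega))
        omega
      · have hrm1 : r + 1 = m := by omega
        have hreq : r = s j * b j := by omega
        have hgr : gr b j r = s j := by rw [hreq]; exact gr_mul hj (by omega) _
        have hNe2 : m*q + r + b (j+1+1) = m * (q + s (j+1) + 1) := by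
          rw [Nat.mul_add, Nat.mul_one]; omega
        have hq' : (m*q + r + b (j+1+1)) / m = q + s (j+1) + 1 := by
          rw [hNe2, Nat.mul_div_cancel_left _ hmpos]
        have hr' : (m*q + r + b (j+1+1)) % m = 0 := by
          rw [hNe2, Nat.mul_mod_right]
        rw [hq', hr', hgr, gr_zero]
        have : s j ≤ s (j+1) := hsmono (j+1) (by omega) (by omega)
        omega

lemma lemH (hk : 2 ≤ k) (hb1 : b 1 = 1)
    (hbrec : ∀ i, 1 ≤ i → i ≤ k - 1 → b (i + 1) = s i * b i + 1)
    (hsmono : ∀ i, 2 ≤ i → i ≤ k - 1 → s (i - 1) ≤ s i)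
    {j : ℕ} (hj : 1 ≤ j) (hjk : j ≤ k - 1) (A : ℕ) :
    gr b (j+1) A ≤ gr b j A := by
  have hmpos : 0 < b (j+1) := by
    rw [hbrec j hj hjk]; omega
  have key : ∀ q r, gr b j r + q ≤ gr b j (r + b (j+1) * q) := by
    intro q
    induction q with
    | zero => simp
    | succ q ih =>
      intro r
      have h1 := lemD hk hb1 hbrec hsmono j hj hjk (r + b (j+1) * q)
      have h2 : r + b (j+1) * (q+1) = r + b (j+1) * q + b (j+1) := by ring
      rw [h2]
      have := ih r
      omega
  have hA : A % b (j+1) + b (j+1) * (A / b (j+1)) = A := Nat.mod_add_div A (b (j+1))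
  have hk2 := key (A / b (j+1)) (A % b (j+1))
  rw [hA] at hk2
  rw [gr_succ]
  omega

lemma lemF (hk : 2 ≤ k) (hb1 : b 1 = 1)
    (hbrec : ∀ i, 1 ≤ i → i ≤ k - 1 → b (i + 1) = s i * b i + 1)
    (hsmono : ∀ i, 2 ≤ i → i ≤ k - 1 → s (i - 1) ≤ s i) :
    ∀ j, j ≤ k → ∀ y : ℕ → ℕ,
      gr b j (∑ i ∈ Finset.Icc 1 j, b i * y i) ≤ ∑ i ∈ Finset.Icc 1 j, y i := by
  intro j
  induction j with
  | zero => intro _ y; simp [gr]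
  | succ j ih =>
    intro hjk y
    rw [Finset.sum_Icc_succ_top (by omega : 1 ≤ j + 1),
        Finset.sum_Icc_succ_top (by omega : 1 ≤ j + 1)]
    have hmpos : 0 < b (j+1) := bpos hb1 hbrec (j+1) (by omega) hjk
    rw [gr_add_mul hmpos]
    rcases Nat.eq_zero_or_pos j with rfl | hj
    · simp [gr_one hb1]
    · have h1 := lemH hk hb1 hbrec hsmono hj (by omega) (∑ i ∈ Finset.Icc 1 j, b i * y i)
      have h2 := ih (by omega) y
      omega


lemma ra_succ (b : ℕ → ℕ) (k M t : ℕ) :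
    ra b k M (t+1) = ra b k M t % b (k - t) := rfl

section
variable {k : ℕ} {b s : ℕ → ℕ}

lemma ra_step (M : ℕ) {j : ℕ} (hj : j + 1 ≤ k) :
    ra b k M (k - j) = ra b k M (k - (j+1)) % b (j+1) := by
  have h1 : k - j = (k - (j+1)) + 1 := by omega
  rw [h1, ra_succ]
  congr 2
  omega

lemma ra_k (hb1 : b 1 = 1) (hk1 : 1 ≤ k) (M : ℕ) : ra b k M k = 0 := by
  have := ra_step (b := b) (k := k) M (j := 0) (by omega)
  simpa [hb1, Nat.mod_one] using this

lemma ra_zero_of (M : ℕ) {t : ℕ} (ht : ra b k M t = 0) :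
    ∀ u, t ≤ u → ra b k M u = 0 := by
  intro u hu
  induction u with
  | zero => exact (show t = 0 by omega) ▸ ht
  | succ u ih =>
    rcases Nat.eq_or_lt_of_le hu with h | h
    · rw [← h]; exact ht
    · rw [ra_succ, ih (by omega), Nat.zero_mod]

lemma sum_bx (hb1 : b 1 = 1) (hk1 : 1 ≤ k) (M : ℕ) :
    ∀ j, j ≤ k → ∑ i ∈ Finset.Icc 1 j, b i * (ra b k M (k - i) / b i)
        = ra b k M (k - j) := by
  intro j
  induction j with
  | zero => simp [ra_k hb1 hk1 M]
  | succ j ih =>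
    intro hjk
    rw [Finset.sum_Icc_succ_top (by omega : 1 ≤ j + 1), ih (by omega),
        ra_step M hjk, Nat.mod_add_div]

lemma sum_x_gr (hb1 : b 1 = 1) (hk1 : 1 ≤ k) (M : ℕ) :
    ∀ j, j ≤ k → ∑ i ∈ Finset.Icc 1 j, (ra b k M (k - i) / b i)
        = gr b j (ra b k M (k - j)) := by
  intro j
  induction j with
  | zero => simp [gr]
  | succ j ih =>
    intro hjk
    rw [Finset.sum_Icc_succ_top (by omega : 1 ≤ j + 1), ih (by omega),
        gr_succ, ← ra_step M hjk]
    omega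

lemma lemU (hk : 2 ≤ k) (hb1 : b 1 = 1)
    (hbrec : ∀ i, 1 ≤ i → i ≤ k - 1 → b (i + 1) = s i * b i + 1)
    (y : ℕ → ℕ)
    (hy2 : ∀ i, 1 ≤ i → i ≤ k - 1 → y i ≤ s i)
    (hy3 : ∀ i, 2 ≤ i → i ≤ k - 1 → y i = s i → ∀ j, 1 ≤ j → j < i → y j = 0) :
    ∀ j, 1 ≤ j → j ≤ k - 1 → ∑ i ∈ Finset.Icc 1 j, b i * y i < b (j+1) := by
  intro j
  induction j with
  | zero => omega
  | succ j ih =>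
    intro _ hjk
    have htop : b (j+1+1) = s (j+1) * b (j+1) + 1 := hbrec (j+1) (by omega) hjk
    rw [Finset.sum_Icc_succ_top (by omega : 1 ≤ j + 1)]
    rcases Nat.eq_zero_or_pos j with rfl | hj
    · have hy1 : y 1 ≤ s 1 := hy2 1 (by omega) (by omega)
      simp only [Nat.zero_add] at htop ⊢
      rw [Finset.Icc_eq_empty (by omega : ¬(1:ℕ) ≤ 0), Finset.sum_empty, hb1]
      rw [hb1, Nat.mul_one] at htop
      omega
    · by_cases hcase : y (j+1) = s (j+1)
      · have hzero : ∑ i ∈ Finset.Icc 1 j, b i * y i = 0 := by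
          apply Finset.sum_eq_zero
          intro i hi
          simp only [Finset.mem_Icc] at hi
          rw [hy3 (j+1) (by omega) hjk hcase i hi.1 (by omega), Nat.mul_zero]
        rw [hzero, hcase, htop, Nat.mul_comm (s (j+1)) (b (j+1))]
        omega
      · have h1 : y (j+1) + 1 ≤ s (j+1) := by
          have := hy2 (j+1) (by omega) hjk
          omega
        have h2 := ih (by omega) (by omega)
        calc ∑ i ∈ Finset.Icc 1 j, b i * y i + b (j+1) * y (j+1)
            < b (j+1) + b (j+1) * y (j+1) := by omega
          _ = b (j+1) * (y (j+1) + 1) := by ring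
          _ ≤ b (j+1) * s (j+1) := Nat.mul_le_mul_left _ h1
          _ < b (j+1+1) := by rw [htop, Nat.mul_comm (b (j+1)) (s (j+1))]; omega

end
end
end Stmt2Aux


/-- existence and uniqueness of the greedy presentation of a positive
integer `M` with respect to `B = (b_1, …, b_k)` (with `b_1 = 1`, `b_{i+1} = s_i b_i + 1`,
`s_i ≥ s_{i-1} ≥ 1`), and the fact that it achieves `opt_B(M) = x_1 + ⋯ + x_k`. -/
theorem stmt_2 (k : ℕ) (b s : ℕ → ℕ) (hk : 2 ≤ k)
    (hb1 : b 1 = 1)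
    (hbrec : ∀ i, 1 ≤ i → i ≤ k - 1 → b (i + 1) = s i * b i + 1)
    (hs1 : ∀ i, 1 ≤ i → i ≤ k - 1 → 1 ≤ s i)
    (hsmono : ∀ i, 2 ≤ i → i ≤ k - 1 → s (i - 1) ≤ s i)
    (M : ℕ) (hM : 1 ≤ M) :
    ∃ x : ℕ → ℕ,
      (∑ i ∈ Finset.Icc 1 k, b i * x i = M ∧
       x k = M / b k ∧
       (∀ i, 1 ≤ i → i ≤ k - 1 → x i ≤ s i) ∧
       (∀ i, 2 ≤ i → i ≤ k - 1 → x i = s i → ∀ j, 1 ≤ j → j < i → x j = 0)) ∧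
      (∀ y : ℕ → ℕ,
        (∑ i ∈ Finset.Icc 1 k, b i * y i = M ∧
         y k = M / b k ∧
         (∀ i, 1 ≤ i → i ≤ k - 1 → y i ≤ s i) ∧
         (∀ i, 2 ≤ i → i ≤ k - 1 → y i = s i → ∀ j, 1 ≤ j → j < i → y j = 0)) →
        ∀ i, 1 ≤ i → i ≤ k → y i = x i) ∧
      IsLeast {n : ℕ | ∃ y : ℕ → ℕ, ∑ i ∈ Finset.Icc 1 k, b i * y i = M ∧
        n = ∑ i ∈ Finset.Icc 1 k, y i} (∑ i ∈ Finset.Icc 1 k, x i) := by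
  classical
  set X : ℕ → ℕ := fun i => Stmt2Aux.ra b k M (k - i) / b i with hX
  have hbpos := Stmt2Aux.bpos hb1 hbrec
  have hXk : X k = M / b k := by
    simp only [hX, Nat.sub_self]
    rfl
  have hsum : ∑ i ∈ Finset.Icc 1 k, b i * X i = M := by
    have h := Stmt2Aux.sum_bx hb1 (by omega) M k le_rfl
    rw [Nat.sub_self] at h
    exact h
  have hra_le : ∀ i, 1 ≤ i → i ≤ k - 1 → Stmt2Aux.ra b k M (k - i) ≤ s i * b i := by
    intro i h1 h2
    have hstep := Stmt2Aux.ra_step (b := b) M (show i + 1 ≤ k by omega)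
    have hb : b (i+1) = s i * b i + 1 := hbrec i h1 h2
    have hlt : Stmt2Aux.ra b k M (k - i) < b (i+1) := by
      rw [hstep]; exact Nat.mod_lt _ (by rw [hb]; omega)
    omega
  have hX2 : ∀ i, 1 ≤ i → i ≤ k - 1 → X i ≤ s i := by
    intro i h1 h2
    have hbi : 0 < b i := hbpos i h1 (by omega)
    have h := Nat.div_le_div_right (c := b i) (hra_le i h1 h2)
    rwa [Nat.mul_div_cancel _ hbi] at h
  have hX3 : ∀ i, 2 ≤ i → i ≤ k - 1 → X i = s i → ∀ j, 1 ≤ j → j < i → X j = 0 := by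
    intro i h2 hik hxi j hj hji
    have hbi : 0 < b i := hbpos i (by omega) (by omega)
    have hge : s i * b i ≤ Stmt2Aux.ra b k M (k - i) :=
      (Nat.le_div_iff_mul_le hbi).mp (le_of_eq hxi.symm)
    have heq : Stmt2Aux.ra b k M (k - i) = s i * b i :=
      le_antisymm (hra_le i (by omega) hik) hge
    have hnext : Stmt2Aux.ra b k M ((k - i) + 1) = 0 := by
      rw [Stmt2Aux.ra_succ]
      have hbb : b (k - (k - i)) = b i := by congr 1; omega
      rw [hbb, heq, Nat.mul_mod_left]
    have hzero : Stmt2Aux.ra b k M (k - j) = 0 :=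
      Stmt2Aux.ra_zero_of M hnext _ (by omega)
    simp only [hX, hzero, Nat.zero_div]
  have huniq : ∀ y : ℕ → ℕ,
      (∑ i ∈ Finset.Icc 1 k, b i * y i = M ∧
       y k = M / b k ∧
       (∀ i, 1 ≤ i → i ≤ k - 1 → y i ≤ s i) ∧
       (∀ i, 2 ≤ i → i ≤ k - 1 → y i = s i → ∀ j, 1 ≤ j → j < i → y j = 0)) →
      ∀ i, 1 ≤ i → i ≤ k → y i = X i := by
    rintro y ⟨hy1, hy2, hy3, hy4⟩
    have hU := Stmt2Aux.lemU hk hb1 hbrec y hy3 hy4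
    have step : ∀ j, j + 1 ≤ k →
        ∑ i ∈ Finset.Icc 1 (j+1), b i * y i = Stmt2Aux.ra b k M (k - (j+1)) →
        (∑ i ∈ Finset.Icc 1 j, b i * y i = Stmt2Aux.ra b k M (k - j) ∧
          y (j+1) = X (j+1)) := by
      intro j hjk hsum'
      have hS : ∑ i ∈ Finset.Icc 1 j, b i * y i < b (j+1) := by
        rcases Nat.eq_zero_or_pos j with rfl | hj
        · rw [Finset.Icc_eq_empty (by omega : ¬(1:ℕ) ≤ 0), Finset.sum_empty]
          exact hbpos 1 le_rfl (by omega)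
        · exact hU j hj (by omega)
      rw [Finset.sum_Icc_succ_top (by omega : 1 ≤ j+1)] at hsum'
      have hpos : 0 < b (j+1) := hbpos (j+1) (by omega) hjk
      have hdm := (Nat.div_mod_unique hpos).mpr ⟨hsum', hS⟩
      constructor
      · rw [Stmt2Aux.ra_step M hjk]
        exact hdm.2.symm
      · exact hdm.1.symm
    have main : ∀ d, d ≤ k →
        (∑ i ∈ Finset.Icc 1 (k - d), b i * y i = Stmt2Aux.ra b k M (k - (k - d)) ∧
         ∀ i, k - d < i → i ≤ k → y i = X i) := by
      intro d
      induction d with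
      | zero =>
        intro _
        refine ⟨?_, fun i h1 h2 => by omega⟩
        rw [Nat.sub_zero, Nat.sub_self]
        exact hy1
      | succ d ih =>
        intro hdk
        obtain ⟨ihs, ihy⟩ := ih (by omega)
        have hj : (k - (d+1)) + 1 = k - d := by omega
        have hstep := step (k - (d+1)) (by omega) (by rw [hj]; exact ihs)
        refine ⟨hstep.1, ?_⟩
        intro i h1 h2
        rcases Nat.eq_or_lt_of_le (show k - (d+1) + 1 ≤ i by omega) with h | h
        · rw [← h]; exact hstep.2
        · exact ihy i (by omega) h2
    intro i h1 h2
    exact (main k le_rfl).2 i (by omega) h2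
  have hgrsum : ∑ i ∈ Finset.Icc 1 k, X i = Stmt2Aux.gr b k M := by
    have h := Stmt2Aux.sum_x_gr hb1 (by omega) M k le_rfl
    rw [Nat.sub_self] at h
    exact h
  refine ⟨X, ⟨hsum, hXk, hX2, hX3⟩, huniq, ⟨⟨X, hsum, rfl⟩, ?_⟩⟩
  rintro n ⟨y, hy, rfl⟩
  rw [hgrsum, ← hy]
  exact Stmt2Aux.lemF hk hb1 hbrec hsmono k le_rfl y
end

section
/- Let ⟨A⟩ be a GCNS numerical semigroup with parameters a, k, d, u, B = (b_1,...,b_k), s_1 ≤ ⋯ ≤ s_{k−1}, and let p be a positive divisor of a. Assume u*a + d + k − 2 ≥ Σ_{i=1}^{k−1} s_i. Then for every 0 ≤ r ≤ a/p − 1, the function N_{dr,p}(m) = O_B^H(m*a + r*p) * (a/p) + (m*a/p + r)*d is increasing in m ∈ ℕ; in particular, if X(r*p) = (x_1, ..., x_k) is the greedy presentation of r*p, then the element of the Apéry set of a/p in ⟨A⟩/p congruent to d*r modulo a/p equals N_{dr,p} = (Σ_{i=1}^k (u*b_i + 1)*x_i) * (a/p) + r*d. -/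
open Finset


lemma sum_s_ge (k : ℕ) (s : ℕ → ℕ) (hs1 : ∀ i, 1 ≤ i → i ≤ k - 1 → 1 ≤ s i) :
    ∀ n, n ≤ k - 1 → n ≤ ∑ i ∈ Finset.Icc 1 n, s i := by
  intro n hn
  calc n = ∑ _i ∈ Finset.Icc 1 n, 1 := by simp
    _ ≤ ∑ i ∈ Finset.Icc 1 n, s i := by
        apply Finset.sum_le_sum
        intro i hi
        simp only [Finset.mem_Icc] at hi
        exact hs1 i hi.1 (le_trans hi.2 hn)

lemma b_ge_one (k : ℕ) (b s : ℕ → ℕ) (hb1 : b 1 = 1)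
    (hbrec : ∀ i, 1 ≤ i → i ≤ k - 1 → b (i + 1) = s i * b i + 1) :
    ∀ i, 1 ≤ i → i ≤ k → 1 ≤ b i := by
  intro i hi hik
  rcases Nat.lt_or_ge i 2 with h | h
  · interval_cases i
    omega
  · obtain ⟨j, rfl⟩ : ∃ j, i = j + 1 := ⟨i - 1, by omega⟩
    rw [hbrec j (by omega) (by omega)]; omega

lemma b_succ_gt (k : ℕ) (b s : ℕ → ℕ) (hb1 : b 1 = 1)
    (hbrec : ∀ i, 1 ≤ i → i ≤ k - 1 → b (i + 1) = s i * b i + 1)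
    (hs1 : ∀ i, 1 ≤ i → i ≤ k - 1 → 1 ≤ s i) :
    ∀ i, 1 ≤ i → i ≤ k - 1 → b i < b (i + 1) := by
  intro i hi hik
  have h1 := b_ge_one k b s hb1 hbrec i hi (by omega)
  have h2 := hs1 i hi hik
  rw [hbrec i hi hik]
  nlinarith

lemma b_mono (k : ℕ) (b s : ℕ → ℕ) (hb1 : b 1 = 1)
    (hbrec : ∀ i, 1 ≤ i → i ≤ k - 1 → b (i + 1) = s i * b i + 1)
    (hs1 : ∀ i, 1 ≤ i → i ≤ k - 1 → 1 ≤ s i) :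
    ∀ i j, 1 ≤ i → i ≤ j → j ≤ k → b i ≤ b j := by
  intro i j hi
  induction j with
  | zero => omega
  | succ n ih =>
    intro hij hjk
    rcases Nat.lt_or_ge i (n + 1) with h | h
    · have h1 := b_succ_gt k b s hb1 hbrec hs1 n (by omega) (by omega)
      have h2 := ih (by omega) (by omega)
      omega
    · have : i = n + 1 := by omega
      rw [this]

lemma b_strict_mono (k : ℕ) (b s : ℕ → ℕ) (hb1 : b 1 = 1)
    (hbrec : ∀ i, 1 ≤ i → i ≤ k - 1 → b (i + 1) = s i * b i + 1)
    (hs1 : ∀ i, 1 ≤ i → i ≤ k - 1 → 1 ≤ s i) :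
    ∀ i j, 1 ≤ i → i < j → j ≤ k → b i < b j := by
  intro i j hi hij hjk
  have h1 := b_succ_gt k b s hb1 hbrec hs1 i hi (by omega)
  have h2 := b_mono k b s hb1 hbrec hs1 (i + 1) j (by omega) (by omega) hjk
  omega

lemma smono' (k : ℕ) (s : ℕ → ℕ)
    (hsmono : ∀ i, 2 ≤ i → i ≤ k - 1 → s (i - 1) ≤ s i) :
    ∀ i j, 1 ≤ i → i ≤ j → j ≤ k - 1 → s i ≤ s j := by
  intro i j hi
  induction j with
  | zero => omega
  | succ n ih =>
    intro hij hjk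
    rcases Nat.lt_or_ge i (n + 1) with h | h
    · have h2 := hsmono (n + 1) (by omega) (by omega)
      simp only [Nat.add_sub_cancel] at h2
      have := ih (by omega) (by omega)
      omega
    · have : i = n + 1 := by omega
      rw [this]

lemma sum_update_eq (S : Finset ℕ) (f w : ℕ → ℕ) (j c : ℕ) (hj : j ∈ S) :
    (∑ i ∈ S, f i * (Function.update w j c) i) + f j * w j
      = (∑ i ∈ S, f i * w i) + f j * c := by
  classical
  have he : ∑ i ∈ S.erase j, f i * (Function.update w j c) i
      = ∑ i ∈ S.erase j, f i * w i :=
    Finset.sum_congr rfl (fun i hi => by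
      rw [Function.update_apply, if_neg (Finset.ne_of_mem_erase hi)])
  rw [← Finset.add_sum_erase S _ hj, ← Finset.add_sum_erase S (fun i => f i * w i) hj, he,
      Function.update_self]
  ring

lemma greedy_exists (k : ℕ) (b s : ℕ → ℕ) (hk : 2 ≤ k) (hb1 : b 1 = 1)
    (hbrec : ∀ i, 1 ≤ i → i ≤ k - 1 → b (i + 1) = s i * b i + 1)
    (hs1 : ∀ i, 1 ≤ i → i ≤ k - 1 → 1 ≤ s i) :
    ∀ j, 2 ≤ j → j ≤ k → ∀ R, R < b j →
    ∃ w : ℕ → ℕ, (∀ i, i ∉ Finset.Icc 1 (j - 1) → w i = 0) ∧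
      (∑ i ∈ Finset.Icc 1 k, b i * w i = R) ∧
      (∑ i ∈ Finset.Icc 1 k, w i) + j ≤ (∑ i ∈ Finset.Icc 1 (j - 1), s i) + 2 := by
  intro j hj
  induction j, hj using Nat.le_induction with
  | base =>
    intro hk2 R hR
    have hb2 : b 2 = s 1 + 1 := by
      have := hbrec 1 le_rfl (by omega)
      rw [this, hb1]; ring
    rw [hb2] at hR
    refine ⟨Function.update (fun _ => 0) 1 R, ?_, ?_, ?_⟩
    · intro i hi
      simp only [Finset.mem_Icc] at hi
      rw [Function.update_apply, if_neg (by omega)]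
    · have h1 : (1 : ℕ) ∈ Finset.Icc 1 k := by simp; omega
      have := sum_update_eq (Finset.Icc 1 k) b (fun _ => 0) 1 R h1
      simp only [mul_zero, Finset.sum_const_zero, add_zero, zero_add, hb1, one_mul] at this
      simpa using this
    · have h1 : (1 : ℕ) ∈ Finset.Icc 1 k := by simp; omega
      have := sum_update_eq (Finset.Icc 1 k) (fun _ => 1) (fun _ => 0) 1 R h1
      simp only [mul_zero, Finset.sum_const_zero, add_zero, zero_add, one_mul] at this
      rw [show (2:ℕ) - 1 = 1 by rfl, Finset.Icc_self, Finset.sum_singleton]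
      omega
  | succ n hn ih =>
    intro hnk R hR
    have hbn : b (n + 1) = s n * b n + 1 := hbrec n (by omega) (by omega)
    have hbpos : 1 ≤ b n := b_ge_one k b s hb1 hbrec n (by omega) (by omega)
    rw [hbn] at hR
    set c := R / b n with hc
    set R' := R % b n with hR'
    have hcsn : c ≤ s n := by
      have : R / b n < s n + 1 := by
        rw [Nat.div_lt_iff_lt_mul (by omega)]
        nlinarith
      omega
    have hR'lt : R' < b n := Nat.mod_lt _ (by omega)
    obtain ⟨w', hsupp', hsum', hcount'⟩ := ih (by omega) R' hR'lt
    have hw'n : w' n = 0 := hsupp' n (by simp; omega)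
    have hnmem : n ∈ Finset.Icc 1 k := by simp; omega
    refine ⟨Function.update w' n c, ?_, ?_, ?_⟩
    · intro i hi
      simp only [Finset.mem_Icc] at hi
      rw [Function.update_apply, if_neg (by omega)]
      exact hsupp' i (by simp; omega)
    · have := sum_update_eq (Finset.Icc 1 k) b w' n c hnmem
      rw [hw'n, mul_zero, add_zero, hsum'] at this
      rw [this]
      have := Nat.div_add_mod R (b n)
      rw [← hc, ← hR'] at this
      omega
    · have hcnt := sum_update_eq (Finset.Icc 1 k) (fun _ => 1) w' n c hnmem
      simp only [one_mul, hw'n, add_zero] at hcnt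
      rw [hcnt]
      have hsplit : ∑ i ∈ Finset.Icc 1 (n + 1 - 1), s i
          = (∑ i ∈ Finset.Icc 1 (n - 1), s i) + s n := by
        rw [show n + 1 - 1 = (n - 1) + 1 by omega]
        rw [Finset.sum_Icc_succ_top (by omega)]
        rw [show n - 1 + 1 = n by omega]
      rw [hsplit]
      rcases Nat.lt_or_ge c (s n) with hlt | hge
      · omega
      · -- c = s n, so R' = 0 and w' = 0
        have hceq : c = s n := le_antisymm hcsn hge
        have hR0 : R' = 0 := by
          have h1 := Nat.div_add_mod R (b n)
          rw [← hc, ← hR'] at h1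
          nlinarith
        have hw0 : ∑ i ∈ Finset.Icc 1 k, w' i = 0 := by
          rw [hR0] at hsum'
          have hle : ∑ i ∈ Finset.Icc 1 k, w' i ≤ ∑ i ∈ Finset.Icc 1 k, b i * w' i := by
            apply Finset.sum_le_sum
            intro i hi
            simp only [Finset.mem_Icc] at hi
            have hbi : 1 ≤ b i := b_ge_one k b s hb1 hbrec i hi.1 hi.2
            nlinarith
          omega
        have hsge := sum_s_ge k s hs1 (n - 1) (by omega)
        omega



lemma sum_update_eq' (S : Finset ℕ) (f w : ℕ → ℕ) (j c : ℕ) (hj : j ∈ S) :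
    (∑ i ∈ S, f i * (Function.update w j c) i) + f j * w j
      = (∑ i ∈ S, f i * w i) + f j * c := by
  classical
  have he : ∑ i ∈ S.erase j, f i * (Function.update w j c) i
      = ∑ i ∈ S.erase j, f i * w i :=
    Finset.sum_congr rfl (fun i hi => by
      rw [Function.update_apply, if_neg (Finset.ne_of_mem_erase hi)])
  rw [← Finset.add_sum_erase S _ hj, ← Finset.add_sum_erase S (fun i => f i * w i) hj, he,
      Function.update_self]
  ring

lemma OBH_le (k : ℕ) (b h : ℕ → ℕ) (M : ℕ) (x : ℕ → ℕ)
    (hx : ∑ i ∈ Finset.Icc 1 k, b i * x i = M) :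
    OBH k b h M ≤ ∑ i ∈ Finset.Icc 1 k, h i * x i :=
  Nat.sInf_le ⟨x, hx, rfl⟩

lemma OBH_spec (k : ℕ) (b h : ℕ → ℕ) (M : ℕ) (hk : 1 ≤ k) (hb1 : b 1 = 1) :
    ∃ x : ℕ → ℕ, (∑ i ∈ Finset.Icc 1 k, b i * x i = M) ∧
      OBH k b h M = ∑ i ∈ Finset.Icc 1 k, h i * x i := by
  have hne : {n : ℕ | ∃ x : ℕ → ℕ, ∑ i ∈ Finset.Icc 1 k, b i * x i = M ∧
      n = ∑ i ∈ Finset.Icc 1 k, h i * x i}.Nonempty := by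
    have h1 : (1 : ℕ) ∈ Finset.Icc 1 k := by simp; omega
    refine ⟨∑ i ∈ Finset.Icc 1 k, h i * (Function.update (fun _ => 0) 1 M) i,
      Function.update (fun _ => 0) 1 M, ?_, rfl⟩
    have := sum_update_eq' (Finset.Icc 1 k) b (fun _ => 0) 1 M h1
    simp only [mul_zero, Finset.sum_const_zero, add_zero, zero_add, hb1, one_mul] at this
    simpa using this
  obtain ⟨x, hx, hn⟩ := Nat.sInf_mem hne
  exact ⟨x, hx, hn⟩

lemma sum_h_split (k u : ℕ) (b w : ℕ → ℕ) :
    ∑ i ∈ Finset.Icc 1 k, (u * b i + 1) * w i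
      = u * (∑ i ∈ Finset.Icc 1 k, b i * w i) + ∑ i ∈ Finset.Icc 1 k, w i := by
  rw [Finset.mul_sum, ← Finset.sum_add_distrib]
  apply Finset.sum_congr rfl
  intro i _
  ring

lemma OBH_upper (a k u : ℕ) (b s : ℕ → ℕ) (hk : 2 ≤ k) (hb1 : b 1 = 1)
    (hbrec : ∀ i, 1 ≤ i → i ≤ k - 1 → b (i + 1) = s i * b i + 1)
    (hs1 : ∀ i, 1 ≤ i → i ≤ k - 1 → 1 ≤ s i) (M : ℕ) :
    OBH k b (fun i => u * b i + 1) M + k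
      ≤ u * M + M / b k + (∑ i ∈ Finset.Icc 1 (k - 1), s i) + 2 := by
  have hbk : 1 ≤ b k := b_ge_one k b s hb1 hbrec k (by omega) le_rfl
  obtain ⟨w', hsupp', hsum', hcount'⟩ :=
    greedy_exists k b s hk hb1 hbrec hs1 k hk le_rfl (M % b k) (Nat.mod_lt _ (by omega))
  have hw'k : w' k = 0 := hsupp' k (by simp; omega)
  have hkmem : k ∈ Finset.Icc 1 k := by simp; omega
  set w := Function.update w' k (M / b k) with hw
  have hsumw : ∑ i ∈ Finset.Icc 1 k, b i * w i = M := by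
    have := sum_update_eq' (Finset.Icc 1 k) b w' k (M / b k) hkmem
    rw [hw'k, mul_zero, add_zero, hsum'] at this
    rw [hw, this]
    have := Nat.div_add_mod M (b k)
    omega
  have hcntw : ∑ i ∈ Finset.Icc 1 k, w i
      = (∑ i ∈ Finset.Icc 1 k, w' i) + M / b k := by
    have := sum_update_eq' (Finset.Icc 1 k) (fun _ => 1) w' k (M / b k) hkmem
    simp only [one_mul, hw'k, add_zero] at this
    exact this
  have hle := OBH_le k b (fun i => u * b i + 1) M w hsumw
  rw [sum_h_split, hsumw, hcntw] at hle
  omega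

lemma OBH_lower (a k u : ℕ) (b s : ℕ → ℕ) (hk : 2 ≤ k) (hb1 : b 1 = 1)
    (hbrec : ∀ i, 1 ≤ i → i ≤ k - 1 → b (i + 1) = s i * b i + 1)
    (hs1 : ∀ i, 1 ≤ i → i ≤ k - 1 → 1 ≤ s i) (M : ℕ) :
    u * M + M / b k ≤ OBH k b (fun i => u * b i + 1) M := by
  have hbk : 1 ≤ b k := b_ge_one k b s hb1 hbrec k (by omega) le_rfl
  obtain ⟨x, hx, hOBH⟩ := OBH_spec k b (fun i => u * b i + 1) M (by omega) hb1
  rw [hOBH, sum_h_split, hx]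
  have hxk : M ≤ b k * ∑ i ∈ Finset.Icc 1 k, x i := by
    rw [← hx, Finset.mul_sum]
    apply Finset.sum_le_sum
    intro i hi
    simp only [Finset.mem_Icc] at hi
    exact Nat.mul_le_mul_right _ (b_mono k b s hb1 hbrec hs1 i k hi.1 hi.2 le_rfl)
  have : M / b k ≤ ∑ i ∈ Finset.Icc 1 k, x i := by
    calc M / b k ≤ b k * (∑ i ∈ Finset.Icc 1 k, x i) / b k := Nat.div_le_div_right hxk
      _ = _ := Nat.mul_div_cancel_left _ (by omega)
  omega

lemma OBH_step (a k u : ℕ) (d : ℤ) (b s : ℕ → ℕ) (hk : 2 ≤ k) (hb1 : b 1 = 1)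
    (hbrec : ∀ i, 1 ≤ i → i ≤ k - 1 → b (i + 1) = s i * b i + 1)
    (hs1 : ∀ i, 1 ≤ i → i ≤ k - 1 → 1 ≤ s i)
    (hcond : (∑ i ∈ Finset.Icc 1 (k - 1), (s i : ℤ)) ≤ (u : ℤ) * a + d + k - 2)
    (M : ℕ) :
    (OBH k b (fun i => u * b i + 1) M : ℤ)
      ≤ (OBH k b (fun i => u * b i + 1) (M + a) : ℤ) + d := by
  have h1 := OBH_upper a k u b s hk hb1 hbrec hs1 M
  have h2 := OBH_lower a k u b s hk hb1 hbrec hs1 (M + a)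
  have h3 : M / b k ≤ (M + a) / b k := Nat.div_le_div_right (by omega)
  have hcast : ((∑ i ∈ Finset.Icc 1 (k - 1), s i : ℕ) : ℤ)
      = ∑ i ∈ Finset.Icc 1 (k - 1), (s i : ℤ) := by push_cast; rfl
  have h1' : (OBH k b (fun i => u * b i + 1) M : ℤ) + k
      ≤ (u : ℤ) * M + (M / b k : ℕ) + (∑ i ∈ Finset.Icc 1 (k - 1), (s i : ℤ)) + 2 := by
    rw [← hcast]
    exact_mod_cast h1
  have h2' : ((u : ℤ) * (M + a) + ((M + a) / b k : ℕ) : ℤ)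
      ≤ (OBH k b (fun i => u * b i + 1) (M + a) : ℤ) := by exact_mod_cast h2
  have h3' : ((M / b k : ℕ) : ℤ) ≤ (((M + a) / b k : ℕ) : ℤ) := by exact_mod_cast h3
  push_cast at h2' ⊢
  linarith


lemma sum_coin (S : Finset ℕ) (f : ℕ → ℕ) (j c : ℕ) :
    ∑ i ∈ S, f i * (if i = j then c else 0) = if j ∈ S then f j * c else 0 := by
  simp only [mul_ite, mul_zero]
  exact Finset.sum_ite_eq' S j (fun i => f i * c)

lemma sum_shift (S : Finset ℕ) (f y y' a2 s2 : ℕ → ℕ)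
    (hpt : ∀ i ∈ S, y' i + s2 i = y i + a2 i) :
    (∑ i ∈ S, f i * y' i) + (∑ i ∈ S, f i * s2 i)
      = (∑ i ∈ S, f i * y i) + (∑ i ∈ S, f i * a2 i) := by
  rw [← Finset.sum_add_distrib, ← Finset.sum_add_distrib]
  apply Finset.sum_congr rfl
  intro i hi
  rw [← mul_add, ← mul_add, hpt i hi]

lemma phi_key (e e' B B' : ℕ) (he : 1 ≤ e) (he' : 1 ≤ e') (hee : e' ≤ e)
    (hB' : 1 ≤ B') (hBB : B' < B) :
    (e' * B' + 1) * (e' * B' + 1) + B * B * e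
      < (e * B + 1) * (e * B + 1) + B' * B' * e' := by
  obtain ⟨f, rfl⟩ : ∃ f, e = f + 1 := ⟨e - 1, by omega⟩
  obtain ⟨f', rfl⟩ : ∃ f', e' = f' + 1 := ⟨e' - 1, by omega⟩
  have hff : f' ≤ f := by omega
  have c2 : B' * B' * (f' * (f' + 1)) ≤ B * B * (f * (f + 1)) := by
    apply Nat.mul_le_mul
    · exact Nat.mul_le_mul hBB.le hBB.le
    · exact Nat.mul_le_mul hff (by omega)
  have c3 : (f' + 1) * B' < (f + 1) * B := by nlinarith
  nlinarith [c2, c3]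

lemma exchange_step (k : ℕ) (b s : ℕ → ℕ) (hk : 2 ≤ k) (hb1 : b 1 = 1)
    (hbrec : ∀ i, 1 ≤ i → i ≤ k - 1 → b (i + 1) = s i * b i + 1)
    (hs1 : ∀ i, 1 ≤ i → i ≤ k - 1 → 1 ≤ s i)
    (hsmono : ∀ i, 2 ≤ i → i ≤ k - 1 → s (i - 1) ≤ s i)
    (j m : ℕ) (hj2 : 2 ≤ j) (hjk : j ≤ k) (hm1 : 1 ≤ m) (hmj : m ≤ j - 1)
    (y : ℕ → ℕ)
    (hsub : ∀ i, (if i = m then 1 else 0) + (if i = j - 1 then s (j - 1) else 0) ≤ y i) :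
    ∃ y' : ℕ → ℕ,
      (∑ i ∈ Finset.Icc 1 k, b i * y' i = ∑ i ∈ Finset.Icc 1 k, b i * y i) ∧
      (∑ i ∈ Finset.Icc 1 k, y' i ≤ ∑ i ∈ Finset.Icc 1 k, y i) ∧
      (∑ i ∈ Finset.Icc 1 k, (b i * b i) * y i
        < ∑ i ∈ Finset.Icc 1 k, (b i * b i) * y' i) := by
  have hbge := b_ge_one k b s hb1 hbrec
  obtain ⟨j', rfl⟩ : ∃ j', j = j' + 1 := ⟨j - 1, by omega⟩
  simp only [Nat.add_sub_cancel] at hmj hsub ⊢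
  have hj'1 : 1 ≤ j' := by omega
  have hj'k : j' ≤ k - 1 := by omega
  have hbj : b (j' + 1) = s j' * b j' + 1 := hbrec j' hj'1 hj'k
  have hsj' : 1 ≤ s j' := hs1 j' hj'1 hj'k
  have hbj' : 1 ≤ b j' := hbge j' hj'1 (by omega)
  set cA := if 2 ≤ m then s (m - 1) else 0 with hcA
  set add := fun i => (if i = j' + 1 then 1 else 0) + (if i = m - 1 then cA else 0) with hadd
  set sub := fun i => (if i = m then 1 else 0) + (if i = j' then s j' else 0) with hsubdef
  have hsuble : ∀ i, sub i ≤ y i := hsub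
  have hpt : ∀ i ∈ Finset.Icc 1 k, (y i + add i - sub i) + sub i = y i + add i := by
    intro i _
    have := hsuble i
    omega
  have hmemj : j' + 1 ∈ Finset.Icc 1 k := by simp; omega
  have hmemj' : j' ∈ Finset.Icc 1 k := by simp; omega
  have hmemm : m ∈ Finset.Icc 1 k := by simp; omega
  -- sums of add and sub against any f
  have hA : ∀ f : ℕ → ℕ, ∑ i ∈ Finset.Icc 1 k, f i * add i
      = f (j' + 1) * 1 + (if m - 1 ∈ Finset.Icc 1 k then f (m - 1) * cA else 0) := by
    intro f
    rw [hadd]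
    simp only [mul_add]
    rw [Finset.sum_add_distrib, sum_coin, sum_coin, if_pos hmemj]
  have hS : ∀ f : ℕ → ℕ, ∑ i ∈ Finset.Icc 1 k, f i * sub i
      = f m * 1 + f j' * s j' := by
    intro f
    rw [hsubdef]
    simp only [mul_add]
    rw [Finset.sum_add_distrib, sum_coin, sum_coin, if_pos hmemm, if_pos hmemj']
  have hshift : ∀ f : ℕ → ℕ,
      (∑ i ∈ Finset.Icc 1 k, f i * (y i + add i - sub i)) + (f m * 1 + f j' * s j')
        = (∑ i ∈ Finset.Icc 1 k, f i * y i)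
          + (f (j' + 1) * 1 + (if m - 1 ∈ Finset.Icc 1 k then f (m - 1) * cA else 0)) := by
    intro f
    rw [← hA f, ← hS f]
    exact sum_shift _ f y _ add sub hpt
  refine ⟨fun i => y i + add i - sub i, ?_, ?_, ?_⟩
  · -- value preserved
    show ∑ i ∈ Finset.Icc 1 k, b i * (y i + add i - sub i) = _
    have h := hshift b
    rcases Nat.lt_or_ge m 2 with hm | hm
    · have hm1' : m = 1 := by omega
      subst hm1'
      rw [if_neg (by simp)] at h
      rw [hbj, hb1] at h
      have hcomm : b j' * s j' = s j' * b j' := Nat.mul_comm _ _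
      omega
    · obtain ⟨m', rfl⟩ : ∃ m', m = m' + 1 := ⟨m - 1, by omega⟩
      simp only [Nat.add_sub_cancel] at h hcA
      have hbm : b (m' + 1) = s m' * b m' + 1 := hbrec m' (by omega) (by omega)
      rw [if_pos (by simp; omega), hcA, if_pos (by omega)] at h
      rw [hbj, hbm] at h
      have hcomm : s j' * b j' + 1 + b m' * s m' = s m' * b m' + 1 + b j' * s j' := by ring
      omega
  · -- count does not increase
    show ∑ i ∈ Finset.Icc 1 k, (y i + add i - sub i) ≤ _
    have h := hshift (fun _ => 1)
    simp only [one_mul, mul_one] at h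
    rcases Nat.lt_or_ge m 2 with hm | hm
    · have hm1' : m = 1 := by omega
      subst hm1'
      rw [if_neg (by simp)] at h
      omega
    · obtain ⟨m', rfl⟩ : ∃ m', m = m' + 1 := ⟨m - 1, by omega⟩
      simp only [Nat.add_sub_cancel] at h hcA
      rw [if_pos (by simp; omega), hcA, if_pos (by omega)] at h
      have hsle : s m' ≤ s j' := smono' k s hsmono m' j' (by omega) (by omega) hj'k
      omega
  · -- Phi strictly increases
    show _ < ∑ i ∈ Finset.Icc 1 k, (b i * b i) * (y i + add i - sub i)
    have h := hshift (fun i => b i * b i)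
    simp only [mul_one] at h
    rcases Nat.lt_or_ge m 2 with hm | hm
    · have hm1' : m = 1 := by omega
      subst hm1'
      rw [if_neg (by simp)] at h
      rw [hbj, hb1] at h
      have key : 1 * 1 + (b j' * b j') * s j'
          < (s j' * b j' + 1) * (s j' * b j' + 1) := by nlinarith
      omega
    · obtain ⟨m', rfl⟩ : ∃ m', m = m' + 1 := ⟨m - 1, by omega⟩
      simp only [Nat.add_sub_cancel] at h hcA
      have hbm : b (m' + 1) = s m' * b m' + 1 := hbrec m' (by omega) (by omega)
      rw [if_pos (by simp; omega), hcA, if_pos (by omega)] at h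
      have hsle : s m' ≤ s j' := smono' k s hsmono m' j' (by omega) (by omega) hj'k
      have hblt : b m' < b j' :=
        b_strict_mono k b s hb1 hbrec hs1 m' j' (by omega) (by omega) (by omega)
      have hbm' : 1 ≤ b m' := hbge m' (by omega) (by omega)
      have hsm' : 1 ≤ s m' := hs1 m' (by omega) (by omega)
      rw [hbj, hbm] at h
      have key2 := phi_key (s j') (s m') (b j') (b m') hsj' hsm' hsle hbm' hblt
      omega

lemma phi_le (k : ℕ) (b s : ℕ → ℕ) (hb1 : b 1 = 1)
    (hbrec : ∀ i, 1 ≤ i → i ≤ k - 1 → b (i + 1) = s i * b i + 1)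
    (hs1 : ∀ i, 1 ≤ i → i ≤ k - 1 → 1 ≤ s i) (y : ℕ → ℕ) :
    ∑ i ∈ Finset.Icc 1 k, (b i * b i) * y i
      ≤ b k * ∑ i ∈ Finset.Icc 1 k, b i * y i := by
  rw [Finset.mul_sum]
  apply Finset.sum_le_sum
  intro i hi
  simp only [Finset.mem_Icc] at hi
  have hle : b i ≤ b k := b_mono k b s hb1 hbrec hs1 i k hi.1 hi.2 le_rfl
  calc (b i * b i) * y i ≤ (b k * b i) * y i :=
        Nat.mul_le_mul_right _ (Nat.mul_le_mul_right _ hle)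
    _ = b k * (b i * y i) := by ring

lemma exchange (k : ℕ) (b s : ℕ → ℕ) (hk : 2 ≤ k) (hb1 : b 1 = 1)
    (hbrec : ∀ i, 1 ≤ i → i ≤ k - 1 → b (i + 1) = s i * b i + 1)
    (hs1 : ∀ i, 1 ≤ i → i ≤ k - 1 → 1 ≤ s i)
    (hsmono : ∀ i, 2 ≤ i → i ≤ k - 1 → s (i - 1) ≤ s i) :
    ∀ (n : ℕ) (y : ℕ → ℕ),
      b k * (∑ i ∈ Finset.Icc 1 k, b i * y i) + 1
          ≤ (∑ i ∈ Finset.Icc 1 k, (b i * b i) * y i) + n →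
      ∃ w : ℕ → ℕ,
        (∑ i ∈ Finset.Icc 1 k, b i * w i = ∑ i ∈ Finset.Icc 1 k, b i * y i) ∧
        (∑ i ∈ Finset.Icc 1 k, w i ≤ ∑ i ∈ Finset.Icc 1 k, y i) ∧
        (∀ j, 2 ≤ j → j ≤ k → (∑ i ∈ Finset.Icc 1 (j - 1), b i * w i) < b j) := by
  intro n
  induction n with
  | zero =>
    intro y hm
    exfalso
    have := phi_le k b s hb1 hbrec hs1 y
    omega
  | succ n ih =>
    intro y hm
    by_cases hgood : ∀ j, 2 ≤ j → j ≤ k → (∑ i ∈ Finset.Icc 1 (j - 1), b i * y i) < b j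
    · exact ⟨y, rfl, le_rfl, hgood⟩
    · push_neg at hgood
      classical
      have hQ : ∃ j, 2 ≤ j ∧ j ≤ k ∧ b j ≤ ∑ i ∈ Finset.Icc 1 (j - 1), b i * y i := by
        obtain ⟨j, h2, hjk, hge⟩ := hgood
        exact ⟨j, h2, hjk, hge⟩
      let j₀ := Nat.find hQ
      obtain ⟨hj2, hjk, hviol⟩ : 2 ≤ j₀ ∧ j₀ ≤ k
          ∧ b j₀ ≤ ∑ i ∈ Finset.Icc 1 (j₀ - 1), b i * y i := Nat.find_spec hQ
      have hmin : ∀ j', j' < j₀ → ¬(2 ≤ j' ∧ j' ≤ k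
          ∧ b j' ≤ ∑ i ∈ Finset.Icc 1 (j' - 1), b i * y i) := fun j' h => Nat.find_min hQ h
      obtain ⟨j', hj'eq⟩ : ∃ j', j₀ = j' + 1 := ⟨j₀ - 1, by omega⟩
      rw [hj'eq] at hviol hjk hj2
      simp only [Nat.add_sub_cancel] at hviol
      have hj'1 : 1 ≤ j' := by omega
      have hbj : b (j' + 1) = s j' * b j' + 1 := hbrec j' hj'1 (by omega)
      have hsj' : 1 ≤ s j' := hs1 j' hj'1 (by omega)
      have hbj' : 1 ≤ b j' := b_ge_one k b s hb1 hbrec j' hj'1 (by omega)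
      -- find m and establish hsub
      have hmain : ∃ m, 1 ≤ m ∧ m ≤ j' ∧
          (∀ i, (if i = m then 1 else 0) + (if i = j' then s j' else 0) ≤ y i) := by
        rcases Nat.lt_or_ge j' 2 with hj'2 | hj'2
        · -- j' = 1 : y 1 ≥ s 1 + 1
          have hj'' : j' = 1 := by omega
          subst hj''
          have hP : ∑ i ∈ Finset.Icc 1 1, b i * y i = y 1 := by
            rw [Finset.Icc_self, Finset.sum_singleton, hb1, one_mul]
          rw [hP, hbj, hb1, mul_one] at hviol
          refine ⟨1, le_rfl, le_rfl, ?_⟩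
          intro i
          by_cases hi : i = 1
          · subst hi; rw [if_pos rfl, if_pos rfl]; omega
          · rw [if_neg hi, if_neg hi]; omega
        · -- j' ≥ 2
          obtain ⟨j'', rfl⟩ : ∃ j'', j' = j'' + 1 := ⟨j' - 1, by omega⟩
          have hsplit : ∑ i ∈ Finset.Icc 1 (j'' + 1), b i * y i
              = (∑ i ∈ Finset.Icc 1 j'', b i * y i) + b (j'' + 1) * y (j'' + 1) :=
            Finset.sum_Icc_succ_top (by omega) _
          have hminP : ∑ i ∈ Finset.Icc 1 j'', b i * y i < b (j'' + 1) := by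
            have := hmin (j'' + 1) (by omega)
            push_neg at this
            have h2 := this (by omega) (by omega)
            simpa using h2
          by_cases h0 : ∀ i ∈ Finset.Icc 1 j'', y i = 0
          · -- P' = 0, so y j' ≥ s j' + 1
            have hP0 : ∑ i ∈ Finset.Icc 1 j'', b i * y i = 0 := by
              apply Finset.sum_eq_zero
              intro i hi
              rw [h0 i hi, mul_zero]
            rw [hsplit, hP0, zero_add] at hviol
            have hyj : s (j'' + 1) + 1 ≤ y (j'' + 1) := by
              by_contra hcon
              push_neg at hcon
              have : b (j'' + 1) * y (j'' + 1) ≤ b (j'' + 1) * s (j'' + 1) :=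
                Nat.mul_le_mul_left _ (by omega)
              have hcomm : b (j'' + 1) * s (j'' + 1) = s (j'' + 1) * b (j'' + 1) :=
                Nat.mul_comm _ _
              rw [hbj] at hviol
              omega
            refine ⟨j'' + 1, by omega, le_rfl, ?_⟩
            intro i
            by_cases hi : i = j'' + 1
            · subst hi; rw [if_pos rfl, if_pos rfl]; omega
            · rw [if_neg hi, if_neg hi]; omega
          · -- some coin below j'
            push_neg at h0
            obtain ⟨m, hmmem, hym⟩ := h0
            simp only [Finset.mem_Icc] at hmmem
            have hyj : s (j'' + 1) ≤ y (j'' + 1) := by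
              by_contra hcon
              push_neg at hcon
              have h1 : y (j'' + 1) + 1 ≤ s (j'' + 1) := by omega
              have h2 : b (j'' + 1) * (y (j'' + 1) + 1) ≤ b (j'' + 1) * s (j'' + 1) :=
                Nat.mul_le_mul_left _ h1
              have hcomm : b (j'' + 1) * s (j'' + 1) = s (j'' + 1) * b (j'' + 1) :=
                Nat.mul_comm _ _
              rw [hsplit, hbj] at hviol
              rw [Nat.mul_add, mul_one] at h2
              omega
            refine ⟨m, hmmem.1, by omega, ?_⟩
            intro i
            by_cases hi : i = m
            · subst hi
              rw [if_pos rfl, if_neg (by omega)]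
              omega
            · rw [if_neg hi]
              by_cases hi2 : i = j'' + 1
              · subst hi2; rw [if_pos rfl]; omega
              · rw [if_neg hi2]; omega
      obtain ⟨m, hm1, hmj', hsub⟩ := hmain
      obtain ⟨y', hval, hcnt, hphi⟩ :=
        exchange_step k b s hk hb1 hbrec hs1 hsmono (j' + 1) m hj2 hjk hm1
          (by simpa using hmj') y (by simpa using hsub)
      have hmul : b k * (∑ i ∈ Finset.Icc 1 k, b i * y' i)
          = b k * (∑ i ∈ Finset.Icc 1 k, b i * y i) := by rw [hval]
      obtain ⟨w, hwval, hwcnt, hwpre⟩ := ih y' (by omega)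
      exact ⟨w, by rw [hwval, hval], le_trans hwcnt hcnt, hwpre⟩

lemma greedy_prefix (k : ℕ) (b s : ℕ → ℕ) (hk : 2 ≤ k) (hb1 : b 1 = 1)
    (hbrec : ∀ i, 1 ≤ i → i ≤ k - 1 → b (i + 1) = s i * b i + 1)
    (hs1 : ∀ i, 1 ≤ i → i ≤ k - 1 → 1 ≤ s i)
    (z : ℕ → ℕ)
    (hzle : ∀ i, 1 ≤ i → i ≤ k - 1 → z i ≤ s i)
    (hzzero : ∀ i, 2 ≤ i → i ≤ k - 1 → z i = s i → ∀ j, 1 ≤ j → j < i → z j = 0) :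
    ∀ j, 2 ≤ j → j ≤ k → (∑ i ∈ Finset.Icc 1 (j - 1), b i * z i) < b j := by
  intro j hj
  induction j, hj using Nat.le_induction with
  | base =>
    intro hk2
    have hb2 : b 2 = s 1 + 1 := by
      have := hbrec 1 le_rfl (by omega)
      rw [this, hb1]; ring
    have hP : ∑ i ∈ Finset.Icc 1 (2 - 1), b i * z i = z 1 := by
      norm_num [Finset.Icc_self, hb1]
    rw [hP, hb2]
    have := hzle 1 le_rfl (by omega)
    omega
  | succ n hn ih =>
    intro hnk
    have hbn : b (n + 1) = s n * b n + 1 := hbrec n (by omega) (by omega)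
    have hbnpos : 1 ≤ b n := b_ge_one k b s hb1 hbrec n (by omega) (by omega)
    have hzn : z n ≤ s n := hzle n (by omega) (by omega)
    have hsplit : ∑ i ∈ Finset.Icc 1 (n + 1 - 1), b i * z i
        = (∑ i ∈ Finset.Icc 1 (n - 1), b i * z i) + b n * z n := by
      rw [show n + 1 - 1 = (n - 1) + 1 by omega]
      rw [Finset.sum_Icc_succ_top (by omega)]
      rw [show n - 1 + 1 = n by omega]
    rw [hsplit, hbn]
    rcases Nat.eq_or_lt_of_le hzn with heq | hlt
    · -- z n = s n, prefix is zero
      have hz0 : ∑ i ∈ Finset.Icc 1 (n - 1), b i * z i = 0 := by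
        apply Finset.sum_eq_zero
        intro i hi
        simp only [Finset.mem_Icc] at hi
        rw [hzzero n (by omega) (by omega) heq i hi.1 (by omega), mul_zero]
      rw [hz0, heq]
      have : b n * s n = s n * b n := Nat.mul_comm _ _
      omega
    · have hih := ih (by omega)
      have h2 : b n * (z n + 1) ≤ b n * s n := Nat.mul_le_mul_left _ (by omega)
      rw [Nat.mul_add, mul_one] at h2
      have : b n * s n = s n * b n := Nat.mul_comm _ _
      omega

lemma count_bound (k : ℕ) (b s : ℕ → ℕ) (hk : 2 ≤ k) (hb1 : b 1 = 1)
    (hbrec : ∀ i, 1 ≤ i → i ≤ k - 1 → b (i + 1) = s i * b i + 1)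
    (hs1 : ∀ i, 1 ≤ i → i ≤ k - 1 → 1 ≤ s i)
    (z : ℕ → ℕ)
    (hzle : ∀ i, 1 ≤ i → i ≤ k - 1 → z i ≤ s i)
    (hzzero : ∀ i, 2 ≤ i → i ≤ k - 1 → z i = s i → ∀ j, 1 ≤ j → j < i → z j = 0) :
    ∀ j, 2 ≤ j → j ≤ k →
      (∑ i ∈ Finset.Icc 1 (j - 1), z i) + j ≤ (∑ i ∈ Finset.Icc 1 (j - 1), s i) + 2 := by
  intro j hj
  induction j, hj using Nat.le_induction with
  | base =>
    intro hk2
    have hP : ∑ i ∈ Finset.Icc 1 (2 - 1), z i = z 1 := by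
      norm_num [Finset.Icc_self]
    have hS : ∑ i ∈ Finset.Icc 1 (2 - 1), s i = s 1 := by
      norm_num [Finset.Icc_self]
    rw [hP, hS]
    have := hzle 1 le_rfl (by omega)
    omega
  | succ n hn ih =>
    intro hnk
    have hzn : z n ≤ s n := hzle n (by omega) (by omega)
    have hsplitz : ∑ i ∈ Finset.Icc 1 (n + 1 - 1), z i
        = (∑ i ∈ Finset.Icc 1 (n - 1), z i) + z n := by
      rw [show n + 1 - 1 = (n - 1) + 1 by omega]
      rw [Finset.sum_Icc_succ_top (by omega)]
      rw [show n - 1 + 1 = n by omega]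
    have hsplits : ∑ i ∈ Finset.Icc 1 (n + 1 - 1), s i
        = (∑ i ∈ Finset.Icc 1 (n - 1), s i) + s n := by
      rw [show n + 1 - 1 = (n - 1) + 1 by omega]
      rw [Finset.sum_Icc_succ_top (by omega)]
      rw [show n - 1 + 1 = n by omega]
    rw [hsplitz, hsplits]
    rcases Nat.eq_or_lt_of_le hzn with heq | hlt
    · have hz0 : ∑ i ∈ Finset.Icc 1 (n - 1), z i = 0 := by
        apply Finset.sum_eq_zero
        intro i hi
        simp only [Finset.mem_Icc] at hi
        exact hzzero n (by omega) (by omega) heq i hi.1 (by omega)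
      have hsge := sum_s_ge k s hs1 (n - 1) (by omega)
      omega
    · have hih := ih (by omega)
      omega

lemma count_unique (k : ℕ) (b s : ℕ → ℕ) (hk : 2 ≤ k) (hb1 : b 1 = 1)
    (hbrec : ∀ i, 1 ≤ i → i ≤ k - 1 → b (i + 1) = s i * b i + 1)
    (hs1 : ∀ i, 1 ≤ i → i ≤ k - 1 → 1 ≤ s i)
    (v w : ℕ → ℕ)
    (hv : ∀ j, 2 ≤ j → j ≤ k → (∑ i ∈ Finset.Icc 1 (j - 1), b i * v i) < b j)
    (hw : ∀ j, 2 ≤ j → j ≤ k → (∑ i ∈ Finset.Icc 1 (j - 1), b i * w i) < b j) :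
    ∀ j, j ≤ k → (∑ i ∈ Finset.Icc 1 j, b i * v i = ∑ i ∈ Finset.Icc 1 j, b i * w i) →
      ∑ i ∈ Finset.Icc 1 j, v i = ∑ i ∈ Finset.Icc 1 j, w i := by
  intro j
  induction j with
  | zero => intro _ _; simp
  | succ n ih =>
    intro hnk heq
    rcases Nat.eq_zero_or_pos n with hn0 | hn1
    · subst hn0
      simp only [Finset.Icc_self, Finset.sum_singleton, hb1, one_mul] at heq ⊢
      exact heq
    · have hsv : ∑ i ∈ Finset.Icc 1 (n + 1), b i * v i
          = (∑ i ∈ Finset.Icc 1 n, b i * v i) + b (n + 1) * v (n + 1) :=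
        Finset.sum_Icc_succ_top (by omega) _
      have hsw : ∑ i ∈ Finset.Icc 1 (n + 1), b i * w i
          = (∑ i ∈ Finset.Icc 1 n, b i * w i) + b (n + 1) * w (n + 1) :=
        Finset.sum_Icc_succ_top (by omega) _
      have hPv : (∑ i ∈ Finset.Icc 1 n, b i * v i) < b (n + 1) := by
        have := hv (n + 1) (by omega) hnk
        simpa using this
      have hPw : (∑ i ∈ Finset.Icc 1 n, b i * w i) < b (n + 1) := by
        have := hw (n + 1) (by omega) hnk
        simpa using this
      rw [hsv, hsw] at heq
      have htop : v (n + 1) = w (n + 1) := by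
        rcases lt_trichotomy (v (n + 1)) (w (n + 1)) with h | h | h
        · exfalso
          have h2 : b (n + 1) * (v (n + 1) + 1) ≤ b (n + 1) * w (n + 1) :=
            Nat.mul_le_mul_left _ (by omega)
          rw [Nat.mul_add, mul_one] at h2
          omega
        · exact h
        · exfalso
          have h2 : b (n + 1) * (w (n + 1) + 1) ≤ b (n + 1) * v (n + 1) :=
            Nat.mul_le_mul_left _ (by omega)
          rw [Nat.mul_add, mul_one] at h2
          omega
      have hPeq : ∑ i ∈ Finset.Icc 1 n, b i * v i = ∑ i ∈ Finset.Icc 1 n, b i * w i := by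
        rw [htop] at heq
        omega
      have hcnt := ih (by omega) hPeq
      rw [Finset.sum_Icc_succ_top (by omega : 1 ≤ n + 1) v,
          Finset.sum_Icc_succ_top (by omega : 1 ≤ n + 1) w, hcnt, htop]

lemma greedy_optimal (k : ℕ) (b s : ℕ → ℕ) (hk : 2 ≤ k) (hb1 : b 1 = 1)
    (hbrec : ∀ i, 1 ≤ i → i ≤ k - 1 → b (i + 1) = s i * b i + 1)
    (hs1 : ∀ i, 1 ≤ i → i ≤ k - 1 → 1 ≤ s i)
    (hsmono : ∀ i, 2 ≤ i → i ≤ k - 1 → s (i - 1) ≤ s i)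
    (z y : ℕ → ℕ)
    (hzle : ∀ i, 1 ≤ i → i ≤ k - 1 → z i ≤ s i)
    (hzzero : ∀ i, 2 ≤ i → i ≤ k - 1 → z i = s i → ∀ j, 1 ≤ j → j < i → z j = 0)
    (heq : ∑ i ∈ Finset.Icc 1 k, b i * z i = ∑ i ∈ Finset.Icc 1 k, b i * y i) :
    ∑ i ∈ Finset.Icc 1 k, z i ≤ ∑ i ∈ Finset.Icc 1 k, y i := by
  obtain ⟨w, hwval, hwcnt, hwpre⟩ :=
    exchange k b s hk hb1 hbrec hs1 hsmono
      (b k * (∑ i ∈ Finset.Icc 1 k, b i * y i) + 1) y (by omega)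
  have hzpre := greedy_prefix k b s hk hb1 hbrec hs1 z hzle hzzero
  have := count_unique k b s hk hb1 hbrec hs1 z w hzpre hwpre k le_rfl
    (by rw [heq, hwval])
  omega

lemma gen_sum (k u : ℕ) (d : ℤ) (a : ℕ) (b y : ℕ → ℕ) :
    ∑ i ∈ Finset.Icc 1 k, (y i : ℤ) * (((u : ℤ) * b i + 1) * a + d * b i)
      = (a : ℤ) * ((∑ i ∈ Finset.Icc 1 k, (u * b i + 1) * y i : ℕ) : ℤ)
        + d * ((∑ i ∈ Finset.Icc 1 k, b i * y i : ℕ) : ℤ) := by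
  rw [Nat.cast_sum, Nat.cast_sum, Finset.mul_sum, Finset.mul_sum, ← Finset.sum_add_distrib]
  apply Finset.sum_congr rfl
  intro i _
  push_cast
  ring


set_option maxHeartbeats 1000000

/-- for a GCNS numerical semigroup `⟨A⟩`, `p` a positive divisor of `a`,
if `u*a + d + k - 2 ≥ Σ_{i=1}^{k-1} s_i`, then
`N_{dr,p}(m) = O_B^H(ma + rp)·(a/p) + (ma/p + r)·d` is increasing in `m`, and the
Apéry element of `a/p` in `⟨A⟩/p` in class `d·r` equals
`(Σ_i (u·b_i + 1)·x_i)·(a/p) + r·d`, where `(x_1,…,x_k)` is the greedy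
presentation of `r·p`. -/
theorem stmt_3 (a k u p : ℕ) (d : ℤ) (b s : ℕ → ℕ)
    (ha : 2 ≤ a) (hk : 2 ≤ k) (hu : 1 ≤ u)
    (hd : d ≠ 0) (hgcd : Int.gcd (a : ℤ) d = 1)
    (hb1 : b 1 = 1)
    (hbrec : ∀ i, 1 ≤ i → i ≤ k - 1 → b (i + 1) = s i * b i + 1)
    (hs1 : ∀ i, 1 ≤ i → i ≤ k - 1 → 1 ≤ s i)
    (hsmono : ∀ i, 2 ≤ i → i ≤ k - 1 → s (i - 1) ≤ s i)
    (hneg : d < 0 → ∀ i, 1 ≤ i → i ≤ k →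
      1 < ((u : ℤ) * b i + 1) * a + d * b i)
    (hp : 0 < p) (hpa : p ∣ a)
    (hcond : (∑ i ∈ Finset.Icc 1 (k - 1), (s i : ℤ)) ≤ (u : ℤ) * a + d + k - 2)
    -- `x r` is the greedy presentation of `r * p`, for each `0 ≤ r ≤ a/p - 1`
    (x : ℕ → ℕ → ℕ)
    (hxsum : ∀ r, r ≤ a / p - 1 → ∑ i ∈ Finset.Icc 1 k, b i * x r i = r * p)
    (hxk : ∀ r, r ≤ a / p - 1 → x r k = r * p / b k)
    (hxle : ∀ r, r ≤ a / p - 1 → ∀ i, 1 ≤ i → i ≤ k - 1 → x r i ≤ s i)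
    (hxzero : ∀ r, r ≤ a / p - 1 → ∀ i, 2 ≤ i → i ≤ k - 1 → x r i = s i →
      ∀ j, 1 ≤ j → j < i → x r j = 0)
    -- `N r` is the Apéry element: the least element of `⟨A⟩/p` congruent to `d·r mod a/p`
    (N : ℕ → ℕ)
    (hN : ∀ r, r ≤ a / p - 1 → IsLeast {n : ℕ |
      (∃ y : ℕ → ℕ, (p * n : ℤ) = (y 0 : ℤ) * a +
        ∑ i ∈ Finset.Icc 1 k, (y i : ℤ) * (((u : ℤ) * b i + 1) * a + d * b i)) ∧
      ((a / p : ℕ) : ℤ) ∣ (n : ℤ) - d * r} (N r)) :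
    (∀ r, r ≤ a / p - 1 → ∀ m : ℕ,
      (OBH k b (fun i => u * b i + 1) (m * a + r * p) : ℤ) * ((a / p : ℕ) : ℤ) +
          ((m * (a / p) + r : ℕ) : ℤ) * d
        ≤ (OBH k b (fun i => u * b i + 1) ((m + 1) * a + r * p) : ℤ) * ((a / p : ℕ) : ℤ) +
          (((m + 1) * (a / p) + r : ℕ) : ℤ) * d) ∧
    (∀ r, r ≤ a / p - 1 →
      (N r : ℤ) = ((∑ i ∈ Finset.Icc 1 k, (u * b i + 1) * x r i : ℕ) : ℤ) *
        ((a / p : ℕ) : ℤ) + (r : ℤ) * d) := by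
  have hq1 : 1 ≤ a / p := Nat.div_pos (Nat.le_of_dvd (by omega) hpa) hp
  have hapq : a = p * (a / p) := (Nat.mul_div_cancel' hpa).symm
  constructor
  · -- Part 1 : monotonicity
    intro r hr m
    have hstep := OBH_step a k u d b s hk hb1 hbrec hs1 hcond (m * a + r * p)
    have harr : (m + 1) * a + r * p = (m * a + r * p) + a := by ring
    rw [harr]
    have hQ0 : (0:ℤ) ≤ ((a / p : ℕ) : ℤ) := Int.ofNat_nonneg _
    have h2 := mul_le_mul_of_nonneg_right hstep hQ0
    rw [add_mul] at h2
    push_cast at h2 ⊢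
    linarith [h2]
  · -- Part 2 : Apery element
    intro r hr
    have hrq : r < a / p := by omega
    set Q : ℤ := ((a / p : ℕ) : ℤ) with hQdef
    have hQpos : (0:ℤ) < Q := by rw [hQdef]; exact_mod_cast hq1
    have hppos : (0:ℤ) < (p:ℤ) := by exact_mod_cast hp
    have hacast : (a:ℤ) = (p:ℤ) * Q := by
      rw [hQdef]; exact_mod_cast congrArg (Nat.cast (R := ℤ)) hapq
    have hx_sum := hxsum r hr
    have hx_k := hxk r hr
    obtain ⟨H, hHdef⟩ : ∃ H, H = ∑ i ∈ Finset.Icc 1 k, (u * b i + 1) * x r i := ⟨_, rfl⟩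
    have hHsplit : H = u * (r * p) + ∑ i ∈ Finset.Icc 1 k, x r i := by
      rw [hHdef, sum_h_split, hx_sum]
    have hgenx := gen_sum k u d a b (x r)
    rw [hx_sum, ← hHdef] at hgenx
    set n0 : ℤ := (H:ℤ) * Q + r * d with hn0def
    have hpn0 : (p:ℤ) * n0 = (a:ℤ) * (H:ℤ) + d * ((r * p : ℕ) : ℤ) := by
      rw [hn0def]
      push_cast
      linear_combination (-(H:ℤ)) * hacast
    have hgto : ∀ i, 1 ≤ i → i ≤ k → (0:ℤ) ≤ ((u : ℤ) * b i + 1) * a + d * b i := by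
      intro i hi hik
      rcases lt_or_gt_of_ne hd with hdneg | hdpos
      · have := hneg hdneg i hi hik
        omega
      · have h1 : (0:ℤ) ≤ ((u : ℤ) * b i + 1) * a := by positivity
        have h2 : (0:ℤ) ≤ d * b i := mul_nonneg (by omega) (Int.ofNat_nonneg _)
        omega
    have hn0nonneg : 0 ≤ n0 := by
      have hsum : (0:ℤ) ≤ ∑ i ∈ Finset.Icc 1 k,
          (x r i : ℤ) * (((u : ℤ) * b i + 1) * a + d * b i) := by
        apply Finset.sum_nonneg
        intro i hi
        simp only [Finset.mem_Icc] at hi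
        exact mul_nonneg (Int.ofNat_nonneg _) (hgto i hi.1 hi.2)
      rw [hgenx] at hsum
      have h0 : (p:ℤ) * 0 ≤ (p:ℤ) * n0 := by
        rw [mul_zero, hpn0]
        linarith [hsum]
      exact nonneg_of_mul_nonneg_right (by rwa [mul_zero] at h0) hppos
    set n0N : ℕ := n0.toNat with hn0Ndef
    have hn0Ncast : (n0N : ℤ) = n0 := Int.toNat_of_nonneg hn0nonneg
    have hmem : n0N ∈ {n : ℕ |
        (∃ y : ℕ → ℕ, (p * n : ℤ) = (y 0 : ℤ) * a +
          ∑ i ∈ Finset.Icc 1 k, (y i : ℤ) * (((u : ℤ) * b i + 1) * a + d * b i)) ∧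
        ((a / p : ℕ) : ℤ) ∣ (n : ℤ) - d * r} := by
      constructor
      · refine ⟨fun i => if i = 0 then 0 else x r i, ?_⟩
        have hsc : ∑ i ∈ Finset.Icc 1 k,
            (((fun i => if i = 0 then 0 else x r i) i : ℕ) : ℤ)
              * (((u : ℤ) * b i + 1) * a + d * b i)
            = ∑ i ∈ Finset.Icc 1 k,
                (x r i : ℤ) * (((u : ℤ) * b i + 1) * a + d * b i) := by
          apply Finset.sum_congr rfl
          intro i hi
          simp only [Finset.mem_Icc] at hi
          simp only [if_neg (by omega : ¬ i = 0)]
        rw [hsc, hgenx]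
        rw [show ((fun i => if i = 0 then 0 else x r i) 0) = 0 from rfl]
        simp only [Nat.cast_zero, zero_mul, zero_add]
        rw [hn0Ncast]
        exact hpn0
      · show ((a / p : ℕ) : ℤ) ∣ (n0N : ℤ) - d * r
        rw [hn0Ncast, hn0def, ← hQdef]
        exact ⟨H, by ring⟩
    have hle1 : N r ≤ n0N := (hN r hr).2 hmem
    obtain ⟨⟨y, hy⟩, hdvd⟩ := (hN r hr).1
    obtain ⟨S, hSdef⟩ : ∃ S, S = ∑ i ∈ Finset.Icc 1 k, b i * y i := ⟨_, rfl⟩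
    obtain ⟨Y, hYdef⟩ : ∃ Y, Y = ∑ i ∈ Finset.Icc 1 k, y i := ⟨_, rfl⟩
    obtain ⟨H', hH'def⟩ : ∃ H', H' = ∑ i ∈ Finset.Icc 1 k, (u * b i + 1) * y i := ⟨_, rfl⟩
    have hH'split : H' = u * S + Y := by rw [hH'def, sum_h_split, ← hSdef, ← hYdef]
    have hgeny := gen_sum k u d a b y
    rw [← hSdef, ← hH'def] at hgeny
    rw [hgeny] at hy
    have hco : IsCoprime (a:ℤ) d := Int.isCoprime_iff_gcd_eq_one.mpr hgcd
    have hpdvda : (p:ℤ) ∣ (a:ℤ) := Int.natCast_dvd_natCast.mpr hpa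
    have hcop : IsCoprime (p:ℤ) d := IsCoprime.of_isCoprime_of_dvd_left hco hpdvda
    have hpdS : (p:ℤ) ∣ d * (S:ℤ) := by
      have heq2 : d * (S:ℤ) = (p:ℤ) * (N r) - (y 0 : ℤ) * a - (a:ℤ) * (H':ℤ) := by
        linarith [hy]
      rw [heq2]
      exact dvd_sub (dvd_sub (dvd_mul_right _ _) (dvd_mul_of_dvd_right hpdvda _))
        (Dvd.dvd.mul_right hpdvda _)
    have hpS : (p:ℤ) ∣ (S:ℤ) := hcop.dvd_of_dvd_mul_left hpdS
    obtain ⟨S', hS'⟩ := hpS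
    have hS'nonneg : 0 ≤ S' := by
      have h0 : (p:ℤ) * 0 ≤ (p:ℤ) * S' := by
        rw [mul_zero, ← hS']
        exact Int.ofNat_nonneg S
      exact nonneg_of_mul_nonneg_right (by rwa [mul_zero] at h0) hppos
    have hNr_eq : (N r : ℤ) = (y 0 : ℤ) * Q + Q * (H':ℤ) + d * S' := by
      have h1 : (p:ℤ) * (N r : ℤ) = (p:ℤ) * ((y 0 : ℤ) * Q + Q * (H':ℤ) + d * S') := by
        linear_combination hy + ((y 0 : ℤ) + (H':ℤ)) * hacast + d * hS'
      exact mul_left_cancel₀ (ne_of_gt hppos) h1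
    have hqdvda : Q ∣ (a:ℤ) := ⟨p, by rw [hacast]; ring⟩
    have hcoq : IsCoprime Q d := IsCoprime.of_isCoprime_of_dvd_left hco hqdvda
    have hQdS : Q ∣ d * (S' - r) := by
      have heq3 : d * (S' - r) = ((N r : ℤ) - d * r) - Q * ((y 0 : ℤ) + (H':ℤ)) := by
        rw [hNr_eq]; ring
      rw [heq3]
      exact dvd_sub hdvd (dvd_mul_right _ _)
    have hQS : Q ∣ (S' - (r:ℤ)) := hcoq.dvd_of_dvd_mul_left hQdS
    obtain ⟨t, ht⟩ := hQS
    have hrltQ : (r:ℤ) < Q := by rw [hQdef]; exact_mod_cast hrq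
    have htnonneg : 0 ≤ t := by
      by_contra hcon
      push_neg at hcon
      have h1 : Q * t ≤ Q * (-1) := mul_le_mul_of_nonneg_left (by omega) (le_of_lt hQpos)
      linarith [ht, hS'nonneg, hrltQ]
    have hScast : (S:ℤ) = ((r * p : ℕ) : ℤ) + (a:ℤ) * t := by
      push_cast
      linear_combination hS' + (p:ℤ) * ht - t * hacast
    have hrpS : r * p ≤ S := by
      have hat : 0 ≤ (a:ℤ) * t := mul_nonneg (Int.ofNat_nonneg a) htnonneg
      have : ((r * p : ℕ) : ℤ) ≤ (S:ℤ) := by linarith [hScast]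
      exact_mod_cast this
    -- the key inequality n0 ≤ N r
    have hle2 : n0 ≤ (N r : ℤ) := by
      rcases eq_or_lt_of_le htnonneg with ht0 | ht1
      · -- t = 0 : S = r * p, use greedy optimality
        have hSeq : S = r * p := by
          have : (S:ℤ) = ((r * p : ℕ) : ℤ) := by rw [hScast, ← ht0]; ring
          exact_mod_cast this
        have hopt : ∑ i ∈ Finset.Icc 1 k, x r i ≤ Y := by
          rw [hYdef]
          exact greedy_optimal k b s hk hb1 hbrec hs1 hsmono (x r) y
            (hxle r hr) (hxzero r hr) (by rw [hx_sum, ← hSdef]; exact hSeq.symm)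
        have hHH' : H ≤ H' := by rw [hHsplit, hH'split, hSeq]; omega
        have hS'r : S' = r := by
          rw [← ht0, mul_zero] at ht
          omega
        rw [hNr_eq, hn0def, hS'r]
        have hc : (H:ℤ) ≤ (H':ℤ) := by exact_mod_cast hHH'
        have m1 : (H:ℤ) * Q ≤ (H':ℤ) * Q := mul_le_mul_of_nonneg_right hc hQpos.le
        have m2 : 0 ≤ (y 0 : ℤ) * Q := mul_nonneg (Int.ofNat_nonneg _) hQpos.le
        linarith
      · -- t ≥ 1
        have hbk : 1 ≤ b k := b_ge_one k b s hb1 hbrec k (by omega) le_rfl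
        -- count bound for x r
        have hxcnt : (∑ i ∈ Finset.Icc 1 k, x r i) + k
            ≤ r * p / b k + (∑ i ∈ Finset.Icc 1 (k - 1), s i) + 2 := by
          have hcb := count_bound k b s hk hb1 hbrec hs1 (x r) (hxle r hr) (hxzero r hr)
            k hk le_rfl
          have hsplitk : ∑ i ∈ Finset.Icc 1 k, x r i
              = (∑ i ∈ Finset.Icc 1 (k - 1), x r i) + x r k := by
            rw [show k = (k - 1) + 1 by omega]
            rw [Finset.sum_Icc_succ_top (by omega)]
            rw [show k - 1 + 1 - 1 = k - 1 by omega, show k - 1 + 1 = k by omega]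
          rw [hsplitk, hx_k]
          omega
        -- Y lower bound
        have hYge : r * p / b k ≤ Y := by
          have h1 : S ≤ b k * Y := by
            rw [hSdef, hYdef, Finset.mul_sum]
            apply Finset.sum_le_sum
            intro i hi
            simp only [Finset.mem_Icc] at hi
            calc b i * y i ≤ b k * y i :=
                  Nat.mul_le_mul_right _ (b_mono k b s hb1 hbrec hs1 i k hi.1 hi.2 le_rfl)
              _ = b k * y i := rfl
          calc r * p / b k ≤ S / b k := Nat.div_le_div_right hrpS
            _ ≤ (b k * Y) / b k := Nat.div_le_div_right h1
            _ = Y := Nat.mul_div_cancel_left _ (by omega)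
        -- cast everything to ℤ
        have hsge := sum_s_ge k s hs1 (k - 1) le_rfl
        have hscast : ((∑ i ∈ Finset.Icc 1 (k - 1), s i : ℕ) : ℤ)
            = ∑ i ∈ Finset.Icc 1 (k - 1), (s i : ℤ) := by push_cast; rfl
        have c1 : ((∑ i ∈ Finset.Icc 1 k, x r i : ℕ) : ℤ) + k
            ≤ ((r * p / b k : ℕ) : ℤ) + (∑ i ∈ Finset.Icc 1 (k - 1), (s i : ℤ)) + 2 := by
          rw [← hscast]
          exact_mod_cast hxcnt
        have c2 : ((r * p / b k : ℕ) : ℤ) ≤ (Y:ℤ) := by exact_mod_cast hYge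
        have c4 : (1:ℤ) ≤ (u:ℤ) * a + d := by
          have : ((k - 1 : ℕ) : ℤ) ≤ ((∑ i ∈ Finset.Icc 1 (k - 1), s i : ℕ) : ℤ) := by
            exact_mod_cast hsge
          rw [hscast] at this
          have hkcast : ((k - 1 : ℕ) : ℤ) = (k:ℤ) - 1 := by
            have : (1:ℕ) ≤ k := by omega
            push_cast [this]
            ring
          omega
        have c5 : (u:ℤ) * a + d ≤ ((u:ℤ) * a + d) * t :=
          le_mul_of_one_le_right (by linarith [c4]) (by omega)
        have hH'cast : (H':ℤ) = (u:ℤ) * ((r * p : ℕ) : ℤ) + (u:ℤ) * a * t + (Y:ℤ) := by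
          have h1 : (H':ℤ) = (u:ℤ) * (S:ℤ) + (Y:ℤ) := by exact_mod_cast hH'split
          rw [h1, hScast]
          ring
        have hHcast : (H:ℤ) = (u:ℤ) * ((r * p : ℕ) : ℤ)
            + ((∑ i ∈ Finset.Icc 1 k, x r i : ℕ) : ℤ) := by exact_mod_cast hHsplit
        have hkey : (H:ℤ) ≤ (y 0 : ℤ) + (H':ℤ) + d * t := by
          have hy0 : (0:ℤ) ≤ (y 0 : ℤ) := Int.ofNat_nonneg _
          rw [hHcast, hH'cast]
          have hexp : (u:ℤ) * a * t + d * t = ((u:ℤ) * a + d) * t := by ring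
          linarith [hcond]
        rw [hn0def, hNr_eq]
        have hdS' : d * S' = d * r + d * Q * t := by
          have : S' = r + Q * t := by linarith [ht]
          rw [this]; ring
        rw [hdS']
        have m1 : (H:ℤ) * Q ≤ ((y 0 : ℤ) + (H':ℤ) + d * t) * Q :=
          mul_le_mul_of_nonneg_right hkey hQpos.le
        have m2 : ((y 0 : ℤ) + (H':ℤ) + d * t) * Q
            = (y 0 : ℤ) * Q + (H':ℤ) * Q + d * t * Q := by ring
        linarith
    have hfinal : (N r : ℤ) = n0 := by
      have h1 : (N r : ℤ) ≤ (n0N : ℤ) := by exact_mod_cast hle1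
      rw [hn0Ncast] at h1
      omega
    rw [hfinal, hn0def, hHdef, hQdef]
end

section
/- Let B = (b_1,...,b_k) with b_1 = 1, b_{i+1} = s_i*b_i + 1 and s_i ≥ s_{i−1} ≥ 1 for 1 ≤ i ≤ k−1, let u be a positive integer, and assume s_i ≤ u + 1 for all 1 ≤ i ≤ k−1. Let m_1, m_2 ∈ ℕ with greedy presentations X(m_1) = (x'_1,...,x'_k) and X(m_2) = (x_1,...,x_k). If X(m_1) ⪯ X(m_2) in the colexicographic order, then w(m_1) ≤ w(m_2). Moreover, if m_1 ≠ m_2 and s_i < u + 1 for all 1 ≤ i ≤ k−1, then w(m_1) < w(m_2). -/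
/-- monotonicity of the weight `w(M) = Σ_i (u·b_i + 1)·x_i` with respect to
the colexicographic order on greedy presentations: if `X(m₁) ⪯ X(m₂)` then
`w(m₁) ≤ w(m₂)`; and if moreover `m₁ ≠ m₂` and `s_i < u + 1` for all `i`, then
`w(m₁) < w(m₂)`. -/
theorem stmt_4 (k u : ℕ) (b s : ℕ → ℕ) (hk : 2 ≤ k) (hu : 1 ≤ u)
    (hb1 : b 1 = 1)
    (hbrec : ∀ i, 1 ≤ i → i ≤ k - 1 → b (i + 1) = s i * b i + 1)
    (hs1 : ∀ i, 1 ≤ i → i ≤ k - 1 → 1 ≤ s i)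
    (hsmono : ∀ i, 2 ≤ i → i ≤ k - 1 → s (i - 1) ≤ s i)
    (hsu : ∀ i, 1 ≤ i → i ≤ k - 1 → s i ≤ u + 1)
    (m₁ m₂ : ℕ)
    -- `x'` is the greedy presentation of `m₁`
    (x' : ℕ → ℕ)
    (hx'sum : ∑ i ∈ Finset.Icc 1 k, b i * x' i = m₁)
    (hx'k : x' k = m₁ / b k)
    (hx'le : ∀ i, 1 ≤ i → i ≤ k - 1 → x' i ≤ s i)
    (hx'zero : ∀ i, 2 ≤ i → i ≤ k - 1 → x' i = s i → ∀ j, 1 ≤ j → j < i → x' j = 0)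
    -- `x` is the greedy presentation of `m₂`
    (x : ℕ → ℕ)
    (hxsum : ∑ i ∈ Finset.Icc 1 k, b i * x i = m₂)
    (hxk : x k = m₂ / b k)
    (hxle : ∀ i, 1 ≤ i → i ≤ k - 1 → x i ≤ s i)
    (hxzero : ∀ i, 2 ≤ i → i ≤ k - 1 → x i = s i → ∀ j, 1 ≤ j → j < i → x j = 0)
    -- `X(m₁) ⪯ X(m₂)` in the colexicographic order
    (hcolex : (∀ i, 1 ≤ i → i ≤ k → x' i = x i) ∨
      (∃ j, 1 ≤ j ∧ j ≤ k ∧ x' j < x j ∧ ∀ i, j < i → i ≤ k → x' i = x i)) :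
    (∑ i ∈ Finset.Icc 1 k, (u * b i + 1) * x' i ≤
      ∑ i ∈ Finset.Icc 1 k, (u * b i + 1) * x i) ∧
    (m₁ ≠ m₂ → (∀ i, 1 ≤ i → i ≤ k - 1 → s i < u + 1) →
      ∑ i ∈ Finset.Icc 1 k, (u * b i + 1) * x' i <
        ∑ i ∈ Finset.Icc 1 k, (u * b i + 1) * x i) := by
  -- step lemma: bound the partial weight through index m
  have step : ∀ m : ℕ, 1 ≤ m → m ≤ k - 1 →
      (∑ i ∈ Finset.Icc 1 (m - 1), (u * b i + 1) * x' i ≤ u * b m + 1) →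
      ∑ i ∈ Finset.Icc 1 m, (u * b i + 1) * x' i ≤ (u * b m + 1) * s m := by
    intro m hm hmk ih
    obtain ⟨n, rfl⟩ : ∃ n, m = n + 1 := ⟨m - 1, by omega⟩
    simp only [Nat.add_sub_cancel] at ih
    rw [Finset.sum_Icc_succ_top (by omega)]
    rcases eq_or_lt_of_le (hx'le (n + 1) (by omega) hmk) with heq | hlt
    · rcases Nat.eq_zero_or_pos n with rfl | hn
      · rw [Finset.Icc_eq_empty (by omega), Finset.sum_empty, heq, zero_add]
      · have hz : ∑ i ∈ Finset.Icc 1 n, (u * b i + 1) * x' i = 0 := by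
          apply Finset.sum_eq_zero
          intro i hi
          have hi' := Finset.mem_Icc.mp hi
          rw [hx'zero (n + 1) (by omega) hmk heq i hi'.1 (by omega), mul_zero]
        rw [hz, heq, zero_add]
    · have hx1 : x' (n + 1) + 1 ≤ s (n + 1) := hlt
      have h2 : (u * b (n + 1) + 1) * (x' (n + 1) + 1) ≤ (u * b (n + 1) + 1) * s (n + 1) :=
        Nat.mul_le_mul_left _ hx1
      rw [mul_add, mul_one] at h2
      linarith
  -- weak key lemma
  have key : ∀ j : ℕ, 1 ≤ j → j ≤ k →
      ∑ i ∈ Finset.Icc 1 (j - 1), (u * b i + 1) * x' i ≤ u * b j + 1 := by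
    intro j hj
    induction j, hj using Nat.le_induction with
    | base =>
      intro _
      rw [show (1 : ℕ) - 1 = 0 from rfl, Finset.Icc_eq_empty (by omega), Finset.sum_empty]
      exact Nat.zero_le _
    | succ n hn ih =>
      intro hnk
      simp only [Nat.add_sub_cancel]
      have h1 : ∑ i ∈ Finset.Icc 1 n, (u * b i + 1) * x' i ≤ (u * b n + 1) * s n :=
        step n hn (by omega) (ih (by omega))
      have hb' : b (n + 1) = s n * b n + 1 := hbrec n hn (by omega)
      have hs' : s n ≤ u + 1 := hsu n hn (by omega)
      calc ∑ i ∈ Finset.Icc 1 n, (u * b i + 1) * x' i ≤ (u * b n + 1) * s n := h1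
        _ ≤ u * b (n + 1) + 1 := by rw [hb']; nlinarith
  -- strict key lemma (when s i ≤ u)
  have keystrict : (∀ i, 1 ≤ i → i ≤ k - 1 → s i < u + 1) → ∀ j : ℕ, 1 ≤ j → j ≤ k →
      ∑ i ∈ Finset.Icc 1 (j - 1), (u * b i + 1) * x' i ≤ u * b j := by
    intro hsu' j hj hjk
    rcases Nat.lt_or_ge j 2 with hj2 | hj2
    · have : j = 1 := by omega
      subst this
      rw [show (1 : ℕ) - 1 = 0 from rfl, Finset.Icc_eq_empty (by omega), Finset.sum_empty]
      exact Nat.zero_le _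
    · obtain ⟨n, rfl⟩ : ∃ n, j = n + 1 := ⟨j - 1, by omega⟩
      simp only [Nat.add_sub_cancel]
      have h1 : ∑ i ∈ Finset.Icc 1 n, (u * b i + 1) * x' i ≤ (u * b n + 1) * s n :=
        step n (by omega) (by omega) (key n (by omega) (by omega))
      have hb' : b (n + 1) = s n * b n + 1 := hbrec n (by omega) (by omega)
      have hs' : s n ≤ u := by have := hsu' n (by omega) (by omega); omega
      calc ∑ i ∈ Finset.Icc 1 n, (u * b i + 1) * x' i ≤ (u * b n + 1) * s n := h1
        _ ≤ u * b (n + 1) := by rw [hb']; nlinarith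
  rcases hcolex with heq | ⟨j₀, hj1, hjk, hlt, htail⟩
  · have e1 : ∑ i ∈ Finset.Icc 1 k, (u * b i + 1) * x' i
        = ∑ i ∈ Finset.Icc 1 k, (u * b i + 1) * x i :=
      Finset.sum_congr rfl fun i hi => by
        have h := Finset.mem_Icc.mp hi; rw [heq i h.1 h.2]
    have e2 : m₁ = m₂ := by
      rw [← hx'sum, ← hxsum]
      exact Finset.sum_congr rfl fun i hi => by
        have h := Finset.mem_Icc.mp hi; rw [heq i h.1 h.2]
    exact ⟨le_of_eq e1, fun hne _ => absurd e2 hne⟩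
  · obtain ⟨n, rfl⟩ : ∃ n, j₀ = n + 1 := ⟨j₀ - 1, by omega⟩
    have hsplit : ∀ f : ℕ → ℕ, ∑ i ∈ Finset.Icc 1 k, f i
        = ∑ i ∈ Finset.Icc 1 (n + 1), f i + ∑ i ∈ Finset.Ioc (n + 1) k, f i := by
      intro f
      rw [show Finset.Icc 1 k = Finset.Ioc 0 k from by rw [← Finset.Icc_add_one_left_eq_Ioc, zero_add],
        show Finset.Icc 1 (n + 1) = Finset.Ioc 0 (n + 1) from by rw [← Finset.Icc_add_one_left_eq_Ioc, zero_add],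
        Finset.sum_Ioc_consecutive _ (by omega) hjk]
    have htaileq : ∑ i ∈ Finset.Ioc (n + 1) k, (u * b i + 1) * x' i
        = ∑ i ∈ Finset.Ioc (n + 1) k, (u * b i + 1) * x i :=
      Finset.sum_congr rfl fun i hi => by
        have h := Finset.mem_Ioc.mp hi; rw [htail i h.1 h.2]
    have hxbig : (u * b (n + 1) + 1) * (x' (n + 1) + 1) ≤ (u * b (n + 1) + 1) * x (n + 1) :=
      Nat.mul_le_mul_left _ hlt
    rw [mul_add, mul_one] at hxbig
    have hsingle : (u * b (n + 1) + 1) * x (n + 1)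
        ≤ ∑ i ∈ Finset.Icc 1 (n + 1), (u * b i + 1) * x i :=
      Finset.single_le_sum (f := fun i => (u * b i + 1) * x i) (fun i _ => Nat.zero_le _)
        (Finset.mem_Icc.mpr ⟨by omega, le_refl _⟩)
    have hhead' : ∑ i ∈ Finset.Icc 1 (n + 1), (u * b i + 1) * x' i
        = ∑ i ∈ Finset.Icc 1 n, (u * b i + 1) * x' i + (u * b (n + 1) + 1) * x' (n + 1) :=
      Finset.sum_Icc_succ_top (by omega) _
    have hW := key (n + 1) (by omega) hjk
    simp only [Nat.add_sub_cancel] at hW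
    constructor
    · rw [hsplit, hsplit, htaileq]
      have hhle : ∑ i ∈ Finset.Icc 1 (n + 1), (u * b i + 1) * x' i
          ≤ ∑ i ∈ Finset.Icc 1 (n + 1), (u * b i + 1) * x i := by
        rw [hhead']
        linarith
      exact Nat.add_le_add_right hhle _
    · intro hne hsu'
      have hWs := keystrict hsu' (n + 1) (by omega) hjk
      simp only [Nat.add_sub_cancel] at hWs
      rw [hsplit, hsplit, htaileq]
      have hhlt : ∑ i ∈ Finset.Icc 1 (n + 1), (u * b i + 1) * x' i
          < ∑ i ∈ Finset.Icc 1 (n + 1), (u * b i + 1) * x i := by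
        rw [hhead']
        linarith
      exact Nat.add_lt_add_right hhlt _
end

section
/- Let ⟨A⟩ be a GCNS numerical semigroup with parameters a, k, d, u, B = (b_1,...,b_k), s_1 ≤ ⋯ ≤ s_{k−1}, and let p be a positive divisor of a with p ≠ a. Let X(a−p) = (x_1, x_2, ..., x_k) be the greedy presentation of a − p. If u*a + d + k − 2 ≥ Σ_{i=1}^{k−1} s_i, a + p*d ≥ 0, and s_i < u + 1 for all 1 ≤ i ≤ k−1, then the Frobenius number of the quotient is F(⟨A⟩/p) = (Σ_{i=1}^k x_i) * (a/p) + (a/p − 1)*(u*a + d) − a/p. -/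
/-- Greedy coin count using coins `b 1, ..., b j` (with `b 1 = 1`). -/
def gcnsC (b : ℕ → ℕ) : ℕ → ℕ → ℕ
  | 0, Z => Z
  | j+1, Z => Z / b (j+1) + gcnsC b j (Z % b (j+1))

lemma gcnsC_succ (b : ℕ → ℕ) (j Z : ℕ) :
    gcnsC b (j+1) Z = Z / b (j+1) + gcnsC b j (Z % b (j+1)) := rfl

lemma gcnsC_one (b : ℕ → ℕ) (hb1 : b 1 = 1) (Z : ℕ) : gcnsC b 1 Z = Z := by
  show Z / b 1 + gcnsC b 0 (Z % b 1) = Z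
  simp [hb1, gcnsC, Nat.mod_one]

lemma gcnsC_div_le (b : ℕ → ℕ) (j Z : ℕ) : Z / b (j+1) ≤ gcnsC b (j+1) Z :=
  Nat.le_add_right _ _

lemma gcnsC_top_add (b : ℕ → ℕ) (j t Z : ℕ) (hb : 1 ≤ b (j+1)) :
    gcnsC b (j+1) (b (j+1) * t + Z) = t + gcnsC b (j+1) Z := by
  rw [gcnsC_succ, gcnsC_succ, Nat.mul_add_div hb, Nat.mul_add_mod]
  omega

lemma gcnsC_zero (b : ℕ → ℕ) : ∀ j, gcnsC b j 0 = 0 := by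
  intro j; induction j with
  | zero => rfl
  | succ j ih => rw [gcnsC_succ, Nat.zero_div, Nat.zero_mod, ih]

lemma gcnsC_mul_add (b : ℕ → ℕ) (j : ℕ) (hj : 1 ≤ j) (hb : 1 ≤ b j) (t Z : ℕ) :
    gcnsC b j (b j * t + Z) = t + gcnsC b j Z := by
  obtain ⟨i, rfl⟩ : ∃ i, j = i + 1 := ⟨j - 1, by omega⟩
  rw [gcnsC_succ, gcnsC_succ, Nat.mul_add_div hb, Nat.mul_add_mod]
  omega

lemma gcnsC_div_le' (b : ℕ → ℕ) (j : ℕ) (hj : 1 ≤ j) (Z : ℕ) :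
    Z / b j ≤ gcnsC b j Z := by
  obtain ⟨i, rfl⟩ : ∃ i, j = i + 1 := ⟨j - 1, by omega⟩
  exact Nat.le_add_right _ _

lemma gcnsC_of_lt (b : ℕ → ℕ) (j Z : ℕ) (hZ : Z < b (j+1)) :
    gcnsC b (j+1) Z = gcnsC b j Z := by
  rw [gcnsC_succ, Nat.div_eq_of_lt hZ, Nat.mod_eq_of_lt hZ, Nat.zero_add]

section main
variable (b s : ℕ → ℕ) (k u : ℕ)

lemma gcns_bpos (hk : 2 ≤ k) (hb1 : b 1 = 1)
    (hbrec : ∀ i, 1 ≤ i → i ≤ k - 1 → b (i + 1) = s i * b i + 1) :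
    ∀ i, 1 ≤ i → i ≤ k → 1 ≤ b i := by
  intro i h1 h2
  rcases Nat.lt_or_ge i 2 with h | h
  · have : i = 1 := by omega
    simp [this, hb1]
  · obtain ⟨j, rfl⟩ : ∃ j, i = j + 1 := ⟨i - 1, by omega⟩
    rw [hbrec j (by omega) (by omega)]
    omega

/-- Lemma E: adding 1 drops the greedy count by at most `s j - 1`. -/
lemma gcns_lemE (hk : 2 ≤ k) (hb1 : b 1 = 1)
    (hbrec : ∀ i, 1 ≤ i → i ≤ k - 1 → b (i + 1) = s i * b i + 1)
    (hs1 : ∀ i, 1 ≤ i → i ≤ k - 1 → 1 ≤ s i)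
    (hsmono : ∀ i, 2 ≤ i → i ≤ k - 1 → s (i - 1) ≤ s i) :
    ∀ j, 1 ≤ j → j ≤ k - 1 → ∀ Z, gcnsC b j Z ≤ gcnsC b j (Z + 1) + (s j - 1) := by
  have hbpos := gcns_bpos b s k hk hb1 hbrec
  intro j hj
  induction j, hj using Nat.le_induction with
  | base =>
    intro _ Z
    rw [gcnsC_one b hb1, gcnsC_one b hb1]
    have := hs1 1 le_rfl (by omega)
    omega
  | succ j hj ih =>
    intro hjk Z
    have hjk' : j ≤ k - 1 := by omega
    have hb : 1 ≤ b (j+1) := hbpos (j+1) (by omega) (by omega)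
    have hbj : 1 ≤ b j := hbpos j (by omega) (by omega)
    have hss : s j ≤ s (j+1) := by
      have := hsmono (j+1) (by omega) (by omega)
      simpa using this
    set t := Z / b (j+1) with ht
    set r := Z % b (j+1) with hr
    have hZ : b (j+1) * t + r = Z := Nat.div_add_mod Z (b (j+1))
    have hrlt : r < b (j+1) := Nat.mod_lt _ (by omega)
    have hCZ : gcnsC b (j+1) Z = t + gcnsC b j r := by
      rw [← hZ, gcnsC_mul_add b (j+1) (by omega) hb, gcnsC_of_lt b j r hrlt]
    rcases Nat.lt_or_ge (r + 1) (b (j+1)) with hlt | hge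
    · have hZ1 : Z + 1 = b (j+1) * t + (r + 1) := by omega
      have hCZ1 : gcnsC b (j+1) (Z + 1) = t + gcnsC b j (r + 1) := by
        rw [hZ1, gcnsC_mul_add b (j+1) (by omega) hb, gcnsC_of_lt b j _ hlt]
      have := ih hjk' r
      omega
    · have hreq : r + 1 = b (j+1) := by omega
      have hexp : b (j+1) * (t + 1) = b (j+1) * t + b (j+1) := by ring
      have hZ1 : Z + 1 = b (j+1) * (t + 1) + 0 := by omega
      have hCZ1 : gcnsC b (j+1) (Z + 1) = t + 1 := by
        rw [hZ1, gcnsC_mul_add b (j+1) (by omega) hb, gcnsC_zero]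
      have hrval : r = b j * s j + 0 := by
        have h := hbrec j (by omega) (by omega)
        rw [Nat.mul_comm (s j) (b j)] at h
        omega
      have hCr : gcnsC b j r = s j := by
        rw [hrval, gcnsC_mul_add b j (by omega) hbj, gcnsC_zero]
        omega
      have hs1j := hs1 (j+1) (by omega) (by omega)
      omega

/-- Lemma D1: adding `b (j+1)` increases the level-`j` greedy count by at least 1. -/
lemma gcns_lemD1 (hk : 2 ≤ k) (hb1 : b 1 = 1)
    (hbrec : ∀ i, 1 ≤ i → i ≤ k - 1 → b (i + 1) = s i * b i + 1)
    (hs1 : ∀ i, 1 ≤ i → i ≤ k - 1 → 1 ≤ s i)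
    (hsmono : ∀ i, 2 ≤ i → i ≤ k - 1 → s (i - 1) ≤ s i)
    (j : ℕ) (hj : 1 ≤ j) (hjk : j ≤ k - 1) (Z : ℕ) :
    gcnsC b j Z + 1 ≤ gcnsC b j (Z + b (j+1)) := by
  have hbpos := gcns_bpos b s k hk hb1 hbrec
  have hbj : 1 ≤ b j := hbpos j (by omega) (by omega)
  have hrec := hbrec j (by omega) (by omega)
  have hZ : Z + b (j+1) = b j * s j + (Z + 1) := by
    rw [Nat.mul_comm (b j) (s j)]; omega
  rw [hZ, gcnsC_mul_add b j (by omega) hbj]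
  have hE := gcns_lemE b s k hk hb1 hbrec hs1 hsmono j (by omega) hjk Z
  have := hs1 j (by omega) (by omega)
  omega

/-- Lemma D: the greedy count does not increase with the level. -/
lemma gcns_lemD (hk : 2 ≤ k) (hb1 : b 1 = 1)
    (hbrec : ∀ i, 1 ≤ i → i ≤ k - 1 → b (i + 1) = s i * b i + 1)
    (hs1 : ∀ i, 1 ≤ i → i ≤ k - 1 → 1 ≤ s i)
    (hsmono : ∀ i, 2 ≤ i → i ≤ k - 1 → s (i - 1) ≤ s i)
    (j : ℕ) (hj : 1 ≤ j) (hjk : j ≤ k - 1) (Z : ℕ) :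
    gcnsC b (j+1) Z ≤ gcnsC b j Z := by
  have hbpos := gcns_bpos b s k hk hb1 hbrec
  have hb : 1 ≤ b (j+1) := hbpos (j+1) (by omega) (by omega)
  set t := Z / b (j+1) with ht
  set r := Z % b (j+1) with hr
  have hZ : b (j+1) * t + r = Z := Nat.div_add_mod Z (b (j+1))
  have hrlt : r < b (j+1) := Nat.mod_lt _ (by omega)
  have hCZ : gcnsC b (j+1) Z = t + gcnsC b j r := by
    rw [← hZ, gcnsC_mul_add b (j+1) (by omega) hb, gcnsC_of_lt b j r hrlt]
  rw [hCZ, ← hZ]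
  clear hCZ hZ ht hr
  induction t with
  | zero => simp
  | succ t ih =>
    have hstep := gcns_lemD1 b s k hk hb1 hbrec hs1 hsmono j hj hjk
      (b (j+1) * t + r)
    have hexp : b (j+1) * (t + 1) + r = b (j+1) * t + r + b (j+1) := by ring
    rw [hexp]
    omega

/-- Optimality of greedy: lower bound for any representation. -/
lemma gcns_lower (hk : 2 ≤ k) (hb1 : b 1 = 1)
    (hbrec : ∀ i, 1 ≤ i → i ≤ k - 1 → b (i + 1) = s i * b i + 1)
    (hs1 : ∀ i, 1 ≤ i → i ≤ k - 1 → 1 ≤ s i)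
    (hsmono : ∀ i, 2 ≤ i → i ≤ k - 1 → s (i - 1) ≤ s i) :
    ∀ j, 1 ≤ j → j ≤ k → ∀ y : ℕ → ℕ,
      gcnsC b j (∑ i ∈ Finset.Icc 1 j, b i * y i) ≤ ∑ i ∈ Finset.Icc 1 j, y i := by
  have hbpos := gcns_bpos b s k hk hb1 hbrec
  intro j hj
  induction j, hj using Nat.le_induction with
  | base =>
    intro _ y
    simp [gcnsC_one b hb1, hb1]
  | succ j hj ih =>
    intro hjk y
    have hb : 1 ≤ b (j+1) := hbpos (j+1) (by omega) (by omega)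
    rw [Finset.sum_Icc_succ_top (by omega : 1 ≤ j + 1),
        Finset.sum_Icc_succ_top (by omega : 1 ≤ j + 1)]
    have h1 : ∑ i ∈ Finset.Icc 1 j, b i * y i + b (j+1) * y (j+1)
        = b (j+1) * y (j+1) + (∑ i ∈ Finset.Icc 1 j, b i * y i) := by ring
    rw [h1, gcnsC_mul_add b (j+1) (by omega) hb]
    have hD := gcns_lemD b s k hk hb1 hbrec hs1 hsmono j hj (by omega)
      (∑ i ∈ Finset.Icc 1 j, b i * y i)
    have := ih (by omega) y
    omega

/-- Existence of the greedy representation. -/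
lemma gcns_exists (hk : 2 ≤ k) (hb1 : b 1 = 1)
    (hbrec : ∀ i, 1 ≤ i → i ≤ k - 1 → b (i + 1) = s i * b i + 1) :
    ∀ j, 1 ≤ j → j ≤ k → ∀ Z : ℕ, ∃ y : ℕ → ℕ,
      (∑ i ∈ Finset.Icc 1 j, b i * y i = Z) ∧
      (∑ i ∈ Finset.Icc 1 j, y i = gcnsC b j Z) := by
  have hbpos := gcns_bpos b s k hk hb1 hbrec
  intro j hj
  induction j, hj using Nat.le_induction with
  | base =>
    intro _ Z
    exact ⟨fun _ => Z, by simp [hb1], by simp [gcnsC_one b hb1]⟩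
  | succ j hj ih =>
    intro hjk Z
    have hb : 1 ≤ b (j+1) := hbpos (j+1) (by omega) (by omega)
    obtain ⟨y, hy1, hy2⟩ := ih (by omega) (Z % b (j+1))
    refine ⟨Function.update y (j+1) (Z / b (j+1)), ?_, ?_⟩
    · rw [Finset.sum_Icc_succ_top (by omega : 1 ≤ j + 1)]
      have h2 : ∀ i ∈ Finset.Icc 1 j, b i * Function.update y (j+1) (Z / b (j+1)) i
          = b i * y i := by
        intro i hi
        simp only [Finset.mem_Icc] at hi
        rw [Function.update_of_ne (by omega)]
      rw [Finset.sum_congr rfl h2, hy1, Function.update_self]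
      have := Nat.div_add_mod Z (b (j+1))
      omega
    · rw [Finset.sum_Icc_succ_top (by omega : 1 ≤ j + 1)]
      have h2 : ∀ i ∈ Finset.Icc 1 j, Function.update y (j+1) (Z / b (j+1)) i = y i := by
        intro i hi
        simp only [Finset.mem_Icc] at hi
        rw [Function.update_of_ne (by omega)]
      rw [Finset.sum_congr rfl h2, hy2, Function.update_self, gcnsC_succ]
      omega

/-- Lemma A: `C_j(r) ≤ u (b_{j+1} - r)` for `r < b_{j+1}`. Uses `s i ≤ u`. -/
lemma gcns_lemA (hk : 2 ≤ k) (hu : 1 ≤ u) (hb1 : b 1 = 1)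
    (hbrec : ∀ i, 1 ≤ i → i ≤ k - 1 → b (i + 1) = s i * b i + 1)
    (hs1 : ∀ i, 1 ≤ i → i ≤ k - 1 → 1 ≤ s i)
    (hsu : ∀ i, 1 ≤ i → i ≤ k - 1 → s i < u + 1) :
    ∀ j, 1 ≤ j → j ≤ k - 1 → ∀ r, r < b (j+1) → gcnsC b j r ≤ u * (b (j+1) - r) := by
  have hbpos := gcns_bpos b s k hk hb1 hbrec
  intro j hj
  induction j, hj using Nat.le_induction with
  | base =>
    intro hjk r hr
    rw [gcnsC_one b hb1]
    have hrec := hbrec 1 (by omega) (by omega)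
    rw [hb1] at hrec
    have hs := hsu 1 (by omega) (by omega)
    calc r ≤ u := by omega
      _ = u * 1 := by omega
      _ ≤ u * (b (1+1) - r) := Nat.mul_le_mul_left u (by omega)
  | succ j hj ih =>
    intro hjk r hr
    have hb : 1 ≤ b (j+1) := hbpos (j+1) (by omega) (by omega)
    have hrec := hbrec (j+1) (by omega) (by omega)
    have hsuj := hsu (j+1) (by omega) (by omega)
    have hs1j := hs1 (j+1) (by omega) (by omega)
    set x := r / b (j+1) with hx
    set r' := r % b (j+1) with hr'
    have hdm : b (j+1) * x + r' = r := Nat.div_add_mod r (b (j+1))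
    have hr'lt : r' < b (j+1) := Nat.mod_lt _ (by omega)
    have hCr : gcnsC b (j+1) r = x + gcnsC b j r' := rfl
    have hxle : x ≤ s (j+1) := by
      -- r < b (j+2) = s (j+1) * b (j+1) + 1, so x = r / b (j+1) ≤ s (j+1)
      by_contra hcon
      push_neg at hcon
      have h2 : b (j+1) * (s (j+1) + 1) ≤ b (j+1) * x := Nat.mul_le_mul_left _ hcon
      have h3 : b (j+1) * (s (j+1) + 1) = s (j+1) * b (j+1) + b (j+1) := by ring
      omega
    have ihr' := ih (by omega) r' hr'lt
    rcases Nat.lt_or_ge x (s (j+1)) with hxlt | hxeq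
    · -- x ≤ s (j+1) - 1
      have key : x + u * (b (j+1) - r') ≤ u * (b (j+1+1) - r) := by
        have hexpand : b (j+1+1) - r = (s (j+1) - x - 1) * b (j+1) + (b (j+1) - r') + 1 := by
          have h1 : (s (j+1) - x - 1) * b (j+1) + b (j+1) * (x + 1) = s (j+1) * b (j+1) := by
            rw [Nat.mul_comm (b (j+1)) (x+1)]
            rw [← Nat.add_mul]
            congr 1
            omega
          have h2 : b (j+1) * (x + 1) = b (j+1) * x + b (j+1) := by ring
          omega
        rw [hexpand]
        have hrw : u * ((s (j+1) - x - 1) * b (j+1) + (b (j+1) - r') + 1)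
            = u * ((s (j+1) - x - 1) * b (j+1)) + u * (b (j+1) - r') + u := by ring
        rw [hrw]
        omega
      omega
    · -- x = s (j+1): then r' = 0 forced, count is s (j+1) ≤ u, and b (j+2) - r ≥ 1
      have hxe : x = s (j+1) := by omega
      have hrval : r = b (j+1) * s (j+1) + r' := by rw [← hxe]; omega
      have hcomm : b (j+1) * s (j+1) = s (j+1) * b (j+1) := Nat.mul_comm _ _
      have hr'0 : r' = 0 := by omega
      have hC0 : gcnsC b j r' = 0 := by rw [hr'0, gcnsC_zero]
      have h1 : 1 ≤ b (j+1+1) - r := by omega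
      calc gcnsC b (j+1) r = s (j+1) := by omega
        _ ≤ u := by omega
        _ = u * 1 := by omega
        _ ≤ u * (b (j+1+1) - r) := Nat.mul_le_mul_left u h1

/-- Cap: `C_j(r) + (j-1) ≤ Σ_{i≤j} s i` for `r < b (j+1)`. -/
lemma gcns_cap (hk : 2 ≤ k) (hb1 : b 1 = 1)
    (hbrec : ∀ i, 1 ≤ i → i ≤ k - 1 → b (i + 1) = s i * b i + 1)
    (hs1 : ∀ i, 1 ≤ i → i ≤ k - 1 → 1 ≤ s i) :
    ∀ j, 1 ≤ j → j ≤ k - 1 → ∀ r, r < b (j+1) →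
      gcnsC b j r + (j - 1) ≤ ∑ i ∈ Finset.Icc 1 j, s i := by
  have hbpos := gcns_bpos b s k hk hb1 hbrec
  intro j hj
  induction j, hj using Nat.le_induction with
  | base =>
    intro hjk r hr
    rw [gcnsC_one b hb1]
    have hrec := hbrec 1 (by omega) (by omega)
    rw [hb1] at hrec
    simp only [Finset.Icc_self, Finset.sum_singleton]
    omega
  | succ j hj ih =>
    intro hjk r hr
    have hb : 1 ≤ b (j+1) := hbpos (j+1) (by omega) (by omega)
    have hrec := hbrec (j+1) (by omega) (by omega)
    have hs1j := hs1 (j+1) (by omega) (by omega)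
    set x := r / b (j+1) with hx
    set r' := r % b (j+1) with hr'
    have hdm : b (j+1) * x + r' = r := Nat.div_add_mod r (b (j+1))
    have hr'lt : r' < b (j+1) := Nat.mod_lt _ (by omega)
    have hCr : gcnsC b (j+1) r = x + gcnsC b j r' := rfl
    have hxle : x ≤ s (j+1) := by
      by_contra hcon
      push_neg at hcon
      have h2 : b (j+1) * (s (j+1) + 1) ≤ b (j+1) * x := Nat.mul_le_mul_left _ hcon
      have h3 : b (j+1) * (s (j+1) + 1) = s (j+1) * b (j+1) + b (j+1) := by ring
      omega
    rw [Finset.sum_Icc_succ_top (by omega : 1 ≤ j + 1)]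
    have ihr' := ih (by omega) r' hr'lt
    -- lower bound on the partial sum of s
    have hslb : j ≤ ∑ i ∈ Finset.Icc 1 j, s i := by
      calc j = ∑ i ∈ Finset.Icc 1 j, 1 := by simp
        _ ≤ ∑ i ∈ Finset.Icc 1 j, s i := by
            apply Finset.sum_le_sum
            intro i hi
            simp only [Finset.mem_Icc] at hi
            exact hs1 i hi.1 (by omega)
    rcases Nat.lt_or_ge x (s (j+1)) with hxlt | hxeq
    · omega
    · have hxe : x = s (j+1) := by omega
      have hrval : r = b (j+1) * s (j+1) + r' := by rw [← hxe]; omega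
      have hcomm : b (j+1) * s (j+1) = s (j+1) * b (j+1) := Nat.mul_comm _ _
      have hr'0 : r' = 0 := by omega
      have hC0 : gcnsC b j r' = 0 := by rw [hr'0, gcnsC_zero]
      omega

/-- Lemma B: adding `N ≥ 1` drops the greedy count by at most `u*N - 1`. -/
lemma gcns_lemB (hk : 2 ≤ k) (hu : 1 ≤ u) (hb1 : b 1 = 1)
    (hbrec : ∀ i, 1 ≤ i → i ≤ k - 1 → b (i + 1) = s i * b i + 1)
    (hs1 : ∀ i, 1 ≤ i → i ≤ k - 1 → 1 ≤ s i)
    (hsu : ∀ i, 1 ≤ i → i ≤ k - 1 → s i < u + 1) :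
    ∀ j, 1 ≤ j → j ≤ k → ∀ Z N, 1 ≤ N →
      gcnsC b j Z ≤ gcnsC b j (Z + N) + (u * N - 1) := by
  have hbpos := gcns_bpos b s k hk hb1 hbrec
  intro j hj
  induction j, hj using Nat.le_induction with
  | base =>
    intro _ Z N hN
    rw [gcnsC_one b hb1, gcnsC_one b hb1]
    have : N ≤ u * N := Nat.le_mul_of_pos_left N (by omega)
    omega
  | succ j hj ih =>
    intro hjk Z N hN
    have hb : 1 ≤ b (j+1) := hbpos (j+1) (by omega) (by omega)
    set t := Z / b (j+1) with ht
    set r := Z % b (j+1) with hr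
    have hdm : b (j+1) * t + r = Z := Nat.div_add_mod Z (b (j+1))
    have hrlt : r < b (j+1) := Nat.mod_lt _ (by omega)
    set t' := (Z + N) / b (j+1) with ht'
    set r' := (Z + N) % b (j+1) with hr'
    have hdm' : b (j+1) * t' + r' = Z + N := Nat.div_add_mod (Z + N) (b (j+1))
    have hr'lt : r' < b (j+1) := Nat.mod_lt _ (by omega)
    have htt' : t ≤ t' := by
      rw [ht, ht']
      exact Nat.div_le_div_right (by omega)
    have hCZ : gcnsC b (j+1) Z = t + gcnsC b j r := rfl
    have hCZ' : gcnsC b (j+1) (Z + N) = t' + gcnsC b j r' := rfl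
    rcases Nat.eq_or_lt_of_le htt' with heq | hlt
    · -- same quotient: r' = r + N
      have hrr : r' = r + N := by
        have h2 : b (j+1) * t = b (j+1) * t' := by rw [heq]
        omega
      rw [hrr] at hCZ'
      have := ih (by omega) r N hN
      omega
    · -- quotient increases: use Lemma A
      have hA := gcns_lemA b s k u hk hu hb1 hbrec hs1 hsu j (by omega) (by omega) r hrlt
      -- N = (t' - t) * b (j+1) + r' - r ≥ (t' - t - 1) * b (j+1) + (b (j+1) - r)
      have hsplit : b (j+1) * t' = b (j+1) * t + b (j+1) * (t' - t) := by
        rw [← Nat.mul_add]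
        congr 1
        omega
      have hNval : N = b (j+1) * (t' - t) + r' - r := by omega
      have hbig : b (j+1) * (t' - t) = b (j+1) * (t' - t - 1) + b (j+1) := by
        rw [← Nat.mul_succ]
        congr 1
        omega
      -- u * N ≥ u * ((t'-t-1) * b (j+1)) + u * (b (j+1) - r) ≥ (t'-t-1) + u * (b (j+1) - r)
      have huN : u * (b (j+1) * (t' - t - 1)) + u * (b (j+1) - r) ≤ u * N := by
        have h1 : b (j+1) * (t' - t - 1) + (b (j+1) - r) ≤ N := by omega
        calc u * (b (j+1) * (t' - t - 1)) + u * (b (j+1) - r)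
            = u * (b (j+1) * (t' - t - 1) + (b (j+1) - r)) := by ring
          _ ≤ u * N := Nat.mul_le_mul_left u h1
      have hmul1 : t' - t - 1 ≤ u * (b (j+1) * (t' - t - 1)) := by
        calc t' - t - 1 ≤ 1 * (1 * (t' - t - 1)) := by omega
          _ ≤ u * (b (j+1) * (t' - t - 1)) := by
              apply Nat.mul_le_mul (by omega)
              exact Nat.mul_le_mul_right _ (by omega)
      omega

/-- One-shot: the greedy count drops by at most the cap when increasing the argument. -/
lemma gcns_oneshot (hk : 2 ≤ k) (hb1 : b 1 = 1)
    (hbrec : ∀ i, 1 ≤ i → i ≤ k - 1 → b (i + 1) = s i * b i + 1)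
    (hs1 : ∀ i, 1 ≤ i → i ≤ k - 1 → 1 ≤ s i)
    (A B : ℕ) (hAB : A ≤ B) :
    gcnsC b k A ≤ gcnsC b k B + (∑ i ∈ Finset.Icc 1 (k-1), s i - (k - 2)) := by
  have hbpos := gcns_bpos b s k hk hb1 hbrec
  obtain ⟨m, rfl⟩ : ∃ m, k = m + 1 := ⟨k - 1, by omega⟩
  have hb : 1 ≤ b (m+1) := hbpos (m+1) (by omega) (by omega)
  have hcap := gcns_cap b s (m+1) hk hb1 hbrec hs1 m (by omega) (by omega)
    (A % b (m+1)) (Nat.mod_lt _ (by omega))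
  have hdiv : A / b (m+1) ≤ B / b (m+1) := Nat.div_le_div_right hAB
  have hBle : B / b (m+1) ≤ gcnsC b (m+1) B := gcnsC_div_le' b (m+1) (by omega) B
  have hCA : gcnsC b (m+1) A = A / b (m+1) + gcnsC b m (A % b (m+1)) := rfl
  simp only [Nat.add_sub_cancel] at *
  omega

/-- Recognizing the greedy presentation: its digit sum is the greedy count. -/
lemma gcns_digits (hk : 2 ≤ k) (hb1 : b 1 = 1)
    (hbrec : ∀ i, 1 ≤ i → i ≤ k - 1 → b (i + 1) = s i * b i + 1)
    (hs1 : ∀ i, 1 ≤ i → i ≤ k - 1 → 1 ≤ s i)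
    (x : ℕ → ℕ) (Z : ℕ)
    (hxsum : ∑ i ∈ Finset.Icc 1 k, b i * x i = Z)
    (hxle : ∀ i, 1 ≤ i → i ≤ k - 1 → x i ≤ s i)
    (hxzero : ∀ i, 2 ≤ i → i ≤ k - 1 → x i = s i → ∀ j, 1 ≤ j → j < i → x j = 0) :
    ∑ i ∈ Finset.Icc 1 k, x i = gcnsC b k Z := by
  have hbpos := gcns_bpos b s k hk hb1 hbrec
  -- Claim 1: partial sums are small
  have claim1 : ∀ j, 1 ≤ j → j ≤ k - 1 →
      ∑ i ∈ Finset.Icc 1 j, b i * x i < b (j+1) := by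
    intro j hj
    induction j, hj using Nat.le_induction with
    | base =>
      intro hjk
      have hrec := hbrec 1 (by omega) (by omega)
      have hle := hxle 1 (by omega) (by omega)
      simp only [Finset.Icc_self, Finset.sum_singleton, hb1, Nat.one_mul]
      rw [hb1] at hrec
      omega
    | succ j hj ih =>
      intro hjk
      have hrec := hbrec (j+1) (by omega) (by omega)
      have hle := hxle (j+1) (by omega) (by omega)
      have hbj1 : 1 ≤ b (j+1) := hbpos (j+1) (by omega) (by omega)
      rw [Finset.sum_Icc_succ_top (by omega : 1 ≤ j + 1)]
      rcases Nat.lt_or_ge (x (j+1)) (s (j+1)) with hlt | hge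
      · have h1 : b (j+1) * x (j+1) ≤ b (j+1) * (s (j+1) - 1) :=
          Nat.mul_le_mul_left _ (by omega)
        have h2 : b (j+1) * (s (j+1) - 1) + b (j+1) = b (j+1) * s (j+1) := by
          rw [← Nat.mul_succ]
          congr 1
          omega
        have h3 : b (j+1) * s (j+1) = s (j+1) * b (j+1) := Nat.mul_comm _ _
        have := ih (by omega)
        omega
      · have hxe : x (j+1) = s (j+1) := by omega
        have hzero : ∀ i ∈ Finset.Icc 1 j, b i * x i = 0 := by
          intro i hi
          simp only [Finset.mem_Icc] at hi
          rw [hxzero (j+1) (by omega) (by omega) hxe i hi.1 (by omega)]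
          ring
        rw [Finset.sum_eq_zero hzero]
        have h3 : b (j+1) * x (j+1) = s (j+1) * b (j+1) := by
          rw [hxe, Nat.mul_comm]
        omega
  -- Claim 2: greedy count of partial sums
  have claim2 : ∀ j, 1 ≤ j → j ≤ k - 1 →
      gcnsC b j (∑ i ∈ Finset.Icc 1 j, b i * x i) = ∑ i ∈ Finset.Icc 1 j, x i := by
    intro j hj
    induction j, hj using Nat.le_induction with
    | base =>
      intro hjk
      simp only [Finset.Icc_self, Finset.sum_singleton, hb1, Nat.one_mul]
      exact gcnsC_one b hb1 _
    | succ j hj ih =>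
      intro hjk
      have hbj1 : 1 ≤ b (j+1) := hbpos (j+1) (by omega) (by omega)
      rw [Finset.sum_Icc_succ_top (by omega : 1 ≤ j + 1),
          Finset.sum_Icc_succ_top (by omega : 1 ≤ j + 1)]
      have h1 : ∑ i ∈ Finset.Icc 1 j, b i * x i + b (j+1) * x (j+1)
          = b (j+1) * x (j+1) + ∑ i ∈ Finset.Icc 1 j, b i * x i := by ring
      rw [h1, gcnsC_mul_add b (j+1) (by omega) hbj1,
          gcnsC_of_lt b j _ (claim1 j (by omega) (by omega)), ih (by omega)]
      omega
  -- conclude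
  obtain ⟨m, rfl⟩ : ∃ m, k = m + 1 := ⟨k - 1, by omega⟩
  have hbm : 1 ≤ b (m+1) := hbpos (m+1) (by omega) (by omega)
  rw [Finset.sum_Icc_succ_top (by omega : 1 ≤ m + 1)] at hxsum ⊢
  have hsmall : ∑ i ∈ Finset.Icc 1 m, b i * x i < b (m+1) := by
    apply claim1 m (by omega)
    omega
  rw [← hxsum]
  have h1 : ∑ i ∈ Finset.Icc 1 m, b i * x i + b (m+1) * x (m+1)
      = b (m+1) * x (m+1) + ∑ i ∈ Finset.Icc 1 m, b i * x i := by ring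
  rw [h1, gcnsC_mul_add b (m+1) (by omega) hbm,
      gcnsC_of_lt b m _ hsmall, claim2 m (by omega) (by omega)]
  omega
end main

set_option maxHeartbeats 2000000 in
/-- Frobenius number of the quotient of a GCNS numerical semigroup.
If `u·a + d + k − 2 ≥ Σ s_i`, `a + p·d ≥ 0`, and `s_i < u + 1` for all `i`, then
`F(⟨A⟩/p) = (Σ x_i)·(a/p) + (a/p − 1)·(u·a + d) − a/p`, where `(x_1,…,x_k)` is the
greedy presentation of `a − p`. -/
theorem stmt_5 (a k u p : ℕ) (d : ℤ) (b s : ℕ → ℕ)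
    (ha : 2 ≤ a) (hk : 2 ≤ k) (hu : 1 ≤ u)
    (hd : d ≠ 0) (hgcd : Int.gcd (a : ℤ) d = 1)
    (hb1 : b 1 = 1)
    (hbrec : ∀ i, 1 ≤ i → i ≤ k - 1 → b (i + 1) = s i * b i + 1)
    (hs1 : ∀ i, 1 ≤ i → i ≤ k - 1 → 1 ≤ s i)
    (hsmono : ∀ i, 2 ≤ i → i ≤ k - 1 → s (i - 1) ≤ s i)
    (hneg : d < 0 → ∀ i, 1 ≤ i → i ≤ k →
      1 < ((u : ℤ) * b i + 1) * a + d * b i)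
    (hp : 0 < p) (hpa : p ∣ a) (hpne : p ≠ a)
    (hcond : (∑ i ∈ Finset.Icc 1 (k - 1), (s i : ℤ)) ≤ (u : ℤ) * a + d + k - 2)
    (hapd : 0 ≤ (a : ℤ) + p * d)
    (hsu : ∀ i, 1 ≤ i → i ≤ k - 1 → s i < u + 1)
    (x : ℕ → ℕ)
    (hxsum : ∑ i ∈ Finset.Icc 1 k, b i * x i = a - p)
    (hxk : x k = (a - p) / b k)
    (hxle : ∀ i, 1 ≤ i → i ≤ k - 1 → x i ≤ s i)
    (hxzero : ∀ i, 2 ≤ i → i ≤ k - 1 → x i = s i → ∀ j, 1 ≤ j → j < i → x j = 0) :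
    IsGreatest {z : ℤ | ¬ ∃ n : ℕ, (n : ℤ) = z ∧
        ∃ y : ℕ → ℕ, (p * n : ℤ) = (y 0 : ℤ) * a +
          ∑ i ∈ Finset.Icc 1 k, (y i : ℤ) * (((u : ℤ) * b i + 1) * a + d * b i)}
      (((∑ i ∈ Finset.Icc 1 k, x i : ℕ) : ℤ) * ((a / p : ℕ) : ℤ) +
        (((a / p : ℕ) : ℤ) - 1) * ((u : ℤ) * a + d) - ((a / p : ℕ) : ℤ)) := by
  have hbpos := gcns_bpos b s k hk hb1 hbrec
  set q : ℕ := a / p with hqdef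
  have hq : p * q = a := Nat.mul_div_cancel' hpa
  have hplt : p < a := lt_of_le_of_ne (Nat.le_of_dvd (by omega) hpa) hpne
  have hq2 : 2 ≤ q := by
    by_contra hcon
    push_neg at hcon
    interval_cases q <;> omega
  set c : ℤ := (u : ℤ) * a + d with hcdef
  have hdq : -(q : ℤ) ≤ d := by
    have hpq0 : ((p : ℤ) * q : ℤ) = (a : ℤ) := by exact_mod_cast congrArg (Nat.cast : ℕ → ℤ) hq
    have h1 : (0 : ℤ) ≤ (p : ℤ) * ((q : ℤ) + d) := by linear_combination hapd - hpq0
    by_contra hcon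
    push_neg at hcon
    have hp0 : (0 : ℤ) < (p : ℤ) := by exact_mod_cast hp
    have h2 : (p : ℤ) * ((q : ℤ) + d) ≤ (p : ℤ) * (-1) :=
      mul_le_mul_of_nonneg_left (by omega) (le_of_lt hp0)
    omega
  have hcge : (u : ℤ) * a - q ≤ c := by rw [hcdef]; linarith
  have hac : IsCoprime (a : ℤ) c := by
    have had : IsCoprime (a : ℤ) d := Int.isCoprime_iff_gcd_eq_one.mpr hgcd
    have h2 := had.add_mul_left_right (u : ℤ)
    have : c = d + (a : ℤ) * u := by rw [hcdef]; ring
    rwa [← this] at h2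
  have hqa : (q : ℤ) ≤ (a : ℤ) := by
    have : q ≤ a := Nat.div_le_self a p
    exact_mod_cast this
  have hc0 : 0 ≤ c := by
    have h1 : (1 : ℤ) * a ≤ (u : ℤ) * a :=
      mul_le_mul_of_nonneg_right (by exact_mod_cast hu) (by positivity)
    have h2 : (0 : ℤ) ≤ (a : ℤ) := by positivity
    linarith
  have hc1 : 1 ≤ c := by
    rcases hc0.lt_or_eq with h | h
    · omega
    · exfalso
      rw [← h] at hac
      rw [Int.isCoprime_iff_gcd_eq_one] at hac
      simp at hac
      omega
  set G : ℕ → ℕ := gcnsC b k with hGdef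
  set Sx : ℕ := ∑ i ∈ Finset.Icc 1 k, x i with hSxdef
  have hSxG : Sx = G (a - p) := gcns_digits b s k hk hb1 hbrec hs1 x (a - p) hxsum hxle hxzero
  -- cap bound in ℤ
  have hcapc : ((∑ i ∈ Finset.Icc 1 (k-1), s i : ℕ) : ℤ) - ((k : ℤ) - 2) ≤ c := by
    push_cast
    push_cast at hcond
    linarith
  -- generator rewriting
  have hgen : ∀ y : ℕ → ℕ,
      ∑ i ∈ Finset.Icc 1 k, (y i : ℤ) * (((u : ℤ) * b i + 1) * a + d * b i)
      = ((∑ i ∈ Finset.Icc 1 k, y i : ℕ) : ℤ) * a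
        + ((∑ i ∈ Finset.Icc 1 k, b i * y i : ℕ) : ℤ) * c := by
    intro y
    push_cast
    rw [Finset.sum_mul, Finset.sum_mul, ← Finset.sum_add_distrib]
    apply Finset.sum_congr rfl
    intro i _
    rw [hcdef]
    ring
  -- lower bound instance
  have hlow : ∀ y : ℕ → ℕ, G (∑ i ∈ Finset.Icc 1 k, b i * y i) ≤ ∑ i ∈ Finset.Icc 1 k, y i :=
    fun y => gcns_lower b s k hk hb1 hbrec hs1 hsmono k (by omega) le_rfl y
  constructor
  · -- the Frobenius number is a gap
    rintro ⟨n, hn, y, hy⟩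
    rw [hgen y] at hy
    set Y' : ℕ := ∑ i ∈ Finset.Icc 1 k, y i with hY'def
    set Z : ℕ := ∑ i ∈ Finset.Icc 1 k, b i * y i with hZdef
    have hqZ : (p : ℤ) * ((Sx : ℤ) * q + ((q : ℤ) - 1) * c - q)
        = (Sx : ℤ) * a + ((a : ℤ) - p) * c - a := by
      have hpq : ((p : ℤ) * q) = (a : ℤ) := by exact_mod_cast hq
      linear_combination ((Sx : ℤ) + c - 1) * hpq
    have heq : (((y 0 : ℤ) + Y' + 1 - Sx)) * a = ((a : ℤ) - p - Z) * c := by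
      rw [hn] at hy
      linear_combination hqZ - hy
    have hdvd : (a : ℤ) ∣ ((a : ℤ) - p - Z) := by
      apply hac.dvd_of_dvd_mul_right
      exact ⟨(y 0 : ℤ) + Y' + 1 - Sx, by linarith [heq]⟩
    obtain ⟨t, ht⟩ := hdvd
    have htle : t ≤ 0 := by
      by_contra hcon
      push_neg at hcon
      have : (a : ℤ) * 1 ≤ (a : ℤ) * t := by
        apply mul_le_mul_of_nonneg_left (by omega) (by positivity)
      have hZ0 : (0 : ℤ) ≤ (Z : ℤ) := by positivity
      omega
    have heq2 : (y 0 : ℤ) + Y' + 1 - Sx = t * c := by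
      have ha0 : (a : ℤ) ≠ 0 := by positivity
      have : (((y 0 : ℤ) + Y' + 1 - Sx)) * a = (t * c) * a := by rw [heq, ht]; ring
      exact mul_right_cancel₀ ha0 this
    have hYlow : G Z ≤ Y' := hlow y
    rcases htle.lt_or_eq with htneg | ht0
    · -- t ≤ -1 : Z ≥ a - p + a, use one-shot
      have hZge : (a : ℕ) - p ≤ Z := by
        have h1 : (a : ℤ) * t ≤ (a : ℤ) * (-1) := by
          apply mul_le_mul_of_nonneg_left (by omega) (by positivity)
        have h2 : ((a : ℕ) - p : ℕ) ≤ a := by omega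
        have h3 : (((a : ℕ) - p : ℕ) : ℤ) = (a : ℤ) - p := by
          push_cast; omega
        omega
      have hos := gcns_oneshot b s k hk hb1 hbrec hs1 (a - p) Z hZge
      have hcap2 : ((∑ i ∈ Finset.Icc 1 (k-1), s i - (k - 2) : ℕ) : ℤ)
          ≤ c := by
        have hslb : k - 1 ≤ ∑ i ∈ Finset.Icc 1 (k-1), s i := by
          calc k - 1 = ∑ i ∈ Finset.Icc 1 (k-1), 1 := by simp
            _ ≤ _ := by
              apply Finset.sum_le_sum
              intro i hi
              simp only [Finset.mem_Icc] at hi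
              exact hs1 i hi.1 hi.2
        have : ((∑ i ∈ Finset.Icc 1 (k-1), s i - (k - 2) : ℕ) : ℤ)
            = ((∑ i ∈ Finset.Icc 1 (k-1), s i : ℕ) : ℤ) - ((k:ℤ) - 2) := by
          push_cast [Nat.cast_sub (show k - 2 ≤ ∑ i ∈ Finset.Icc 1 (k-1), s i by omega)]
          omega
        omega
      have htc : t * c ≤ -c := by
        have := mul_le_mul_of_nonneg_right (show t ≤ -1 by omega) (show (0:ℤ) ≤ c by omega)
        linarith
      -- Sx = G(a-p) ≤ G Z + cap ≤ Y' + c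
      have hSxle : (Sx : ℤ) ≤ (Y' : ℤ) + c := by
        have h1 : (Sx : ℕ) ≤ G Z + (∑ i ∈ Finset.Icc 1 (k-1), s i - (k - 2)) := by
          rw [hSxG]; exact hos
        have h2 : ((Sx : ℕ) : ℤ) ≤ (G Z : ℤ) + ((∑ i ∈ Finset.Icc 1 (k-1), s i - (k - 2) : ℕ) : ℤ) := by
          exact_mod_cast h1
        have h3 : ((G Z : ℕ) : ℤ) ≤ (Y' : ℤ) := by exact_mod_cast hYlow
        omega
      have hy00 : (0 : ℤ) ≤ (y 0 : ℤ) := by exact_mod_cast Nat.zero_le _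
      omega
    · -- t = 0 : Z = a - p
      have ht' : (Z : ℤ) = (a : ℤ) - p := by rw [ht0] at ht; linear_combination - ht
      have hZeq : Z = a - p := by omega
      rw [ht0] at heq2
      have : (Sx : ℕ) ≤ Y' := by rw [hSxG, ← hZeq]; exact hYlow
      have hy00 : (0 : ℤ) ≤ (y 0 : ℤ) := by exact_mod_cast Nat.zero_le _
      have : ((Sx : ℕ) : ℤ) ≤ (Y' : ℤ) := by exact_mod_cast this
      omega
  · -- upper bound
    intro z hz
    by_contra hzF
    push_neg at hzF
    apply hz
    have hF1 : (-1 : ℤ) ≤ (Sx : ℤ) * q + ((q : ℤ) - 1) * c - q := by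
      have h1 : (0 : ℤ) ≤ (Sx : ℤ) * q := by positivity
      have h3 : (2 : ℤ) ≤ (q : ℤ) := by exact_mod_cast hq2
      have h2 : ((q : ℤ) - 1) * 1 ≤ ((q : ℤ) - 1) * c :=
        mul_le_mul_of_nonneg_left hc1 (by omega)
      linarith
    have hz0 : 0 ≤ z := by omega
    refine ⟨z.toNat, by omega, ?_⟩
    set n : ℕ := z.toNat with hndef
    have hnz : (n : ℤ) = z := by omega
    -- coprimality of q and c
    have hqc : IsCoprime (q : ℤ) c := by
      have h1 : IsCoprime ((p : ℤ) * q) c := by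
        have : ((p : ℤ) * q) = (a : ℤ) := by exact_mod_cast hq
        rw [this]; exact hac
      exact IsCoprime.of_mul_left_right h1
    obtain ⟨α, β, hαβ⟩ := hqc
    set W0 : ℕ := ((β * n) % q).toNat with hW0def
    have hq0 : (0 : ℤ) < (q : ℤ) := by exact_mod_cast (by omega : 0 < q)
    have hW0 : (W0 : ℤ) = (β * n) % q := by
      rw [hW0def]
      exact Int.toNat_of_nonneg (Int.emod_nonneg _ (by omega))
    have hW0lt : (W0 : ℤ) < q := by
      rw [hW0]; exact Int.emod_lt_of_pos _ hq0
    have hW0lt' : W0 < q := by exact_mod_cast hW0lt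
    have hqdvd : (q : ℤ) ∣ ((n : ℤ) - W0 * c) := by
      refine ⟨(n : ℤ) * α + ((β * n) / q) * c, ?_⟩
      have hmod : (W0 : ℤ) = β * n - q * ((β * n) / q) := by
        rw [hW0, Int.emod_def]
      calc (n : ℤ) - W0 * c = (n : ℤ) * (α * q + β * c) - W0 * c := by rw [hαβ]; ring
        _ = (q : ℤ) * ((n : ℤ) * α + ((β * n) / q) * c) := by rw [hmod]; ring
    -- telescoping inequality
    have htel : ∀ t : ℕ, t ≤ q - 1 →
        (G (p * (q - 1 - t)) : ℤ) * q ≤ (Sx : ℤ) * q + (t : ℤ) * c := by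
      intro t
      induction t with
      | zero =>
        intro _
        have hs0 : q - 1 - 0 = q - 1 := Nat.sub_zero _
        have h2 : p * (q - 1) + p * 1 = p * q := by
          rw [← Nat.mul_add]
          congr 1
          omega
        have harg : p * (q - 1 - 0) = a - p := by rw [hs0]; omega
        rw [harg, ← hSxG]
        push_cast
        simp
      | succ t ih =>
        intro htq
        have ih' := ih (by omega)
        have hB := gcns_lemB b s k u hk hu hb1 hbrec hs1 hsu k (by omega) le_rfl
          (p * (q - 1 - (t+1))) p (by omega)
        have harg : p * (q - 1 - (t+1)) + p = p * (q - 1 - t) := by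
          have h1 : q - 1 - t = (q - 1 - (t+1)) + 1 := by omega
          rw [h1, Nat.mul_succ]
        rw [harg] at hB
        -- cast and multiply by q
        have hup1 : 1 ≤ u * p := Nat.mul_pos hu hp
        have hBZ : (G (p * (q - 1 - (t+1))) : ℤ)
            ≤ (G (p * (q - 1 - t)) : ℤ) + ((u : ℤ) * p - 1) := by
          have := hB
          have h2 : ((u * p - 1 : ℕ) : ℤ) = (u : ℤ) * p - 1 := by
            push_cast [Nat.cast_sub hup1]
            ring
          have h3 : (G (p * (q - 1 - (t+1))) : ℤ) ≤ (G (p * (q - 1 - t)) : ℤ) + ((u * p - 1 : ℕ) : ℤ) := by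
            exact_mod_cast this
          omega
        have hmulq := mul_le_mul_of_nonneg_right hBZ (le_of_lt hq0)
        have hpq : ((p : ℤ) * q) = (a : ℤ) := by exact_mod_cast hq
        have hua : ((u : ℤ) * p - 1) * q = (u : ℤ) * a - q := by
          rw [← hpq]; ring
        have hfin : ((u : ℤ) * p - 1) * q ≤ c := by omega
        calc (G (p * (q - 1 - (t+1))) : ℤ) * q
            ≤ ((G (p * (q - 1 - t)) : ℤ) + ((u : ℤ) * p - 1)) * q := hmulq
          _ = (G (p * (q - 1 - t)) : ℤ) * q + ((u : ℤ) * p - 1) * q := by ring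
          _ ≤ (Sx : ℤ) * q + (t : ℤ) * c + c := by linarith
          _ = (Sx : ℤ) * q + ((t : ℤ) + 1) * c := by ring
          _ = (Sx : ℤ) * q + (((t : ℕ) + 1 : ℕ) : ℤ) * c := by push_cast; ring
    -- key inequality
    have hK : (G (p * W0) : ℤ) * q + (W0 : ℤ) * c ≤ (Sx : ℤ) * q + ((q : ℤ) - 1) * c := by
      have h1 := htel (q - 1 - W0) (by omega)
      have harg : q - 1 - (q - 1 - W0) = W0 := by omega
      rw [harg] at h1
      have hcast : ((q - 1 - W0 : ℕ) : ℤ) = (q : ℤ) - 1 - W0 := by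
        push_cast [Nat.cast_sub (show W0 ≤ q - 1 by omega), Nat.cast_sub (show 1 ≤ q by omega)]
        ring
      rw [hcast] at h1
      have hexp : ((q : ℤ) - 1 - W0) * c + (W0 : ℤ) * c = ((q : ℤ) - 1) * c := by ring
      linarith
    -- n is at least the Apery element in its class
    have hdvd2 : (q : ℤ) ∣ ((n : ℤ) - W0 * c - (G (p * W0) : ℤ) * q) :=
      dvd_sub hqdvd ⟨(G (p * W0) : ℤ), by ring⟩
    obtain ⟨e, he⟩ := hdvd2
    have hnF : (Sx : ℤ) * q + ((q : ℤ) - 1) * c - q < (n : ℤ) := by omega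
    have he0 : 0 ≤ e := by
      by_contra hcon
      push_neg at hcon
      have h1 : (q : ℤ) * e ≤ (q : ℤ) * (-1) := by
        apply mul_le_mul_of_nonneg_left (by omega) (le_of_lt hq0)
      omega
    -- construct the representation
    obtain ⟨w, hw1, hw2⟩ := gcns_exists b s k hk hb1 hbrec k (by omega) le_rfl (p * W0)
    obtain ⟨en, hen⟩ : ∃ en : ℕ, (en : ℤ) = e := ⟨e.toNat, Int.toNat_of_nonneg he0⟩
    refine ⟨fun i => if i = 0 then en else w i, ?_⟩
    have hgenw : ∑ i ∈ Finset.Icc 1 k,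
        (((fun i => if i = 0 then en else w i) i : ℕ) : ℤ) * (((u : ℤ) * b i + 1) * a + d * b i)
        = ∑ i ∈ Finset.Icc 1 k, (w i : ℤ) * (((u : ℤ) * b i + 1) * a + d * b i) := by
      apply Finset.sum_congr rfl
      intro i hi
      simp only [Finset.mem_Icc] at hi
      have : i ≠ 0 := by omega
      simp [this]
    rw [hgenw, hgen w, hw1, hw2]
    norm_num
    -- p * n = e * a + G(pW0) * a + (p*W0) * c
    have hpq : ((p : ℤ) * q) = (a : ℤ) := by exact_mod_cast hq
    -- from he : n - W0*c - G*q = q*e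
    simp only [hGdef] at he ⊢
    linear_combination (p : ℤ) * he + ((gcnsC b k (p * W0) : ℤ) + e) * hpq - (a : ℤ) * hen
end

section
/- Let ⟨A⟩ be a GCNS numerical semigroup with parameters a, k, d, u, B = (b_1,...,b_k), s_1 ≤ ⋯ ≤ s_{k−1}, where d is a POSITIVE integer, and let p be a positive divisor of a with p ≠ a. Let X(a−p) = (x_1, x_2, ..., x_k) be the greedy presentation of a − p. If u*a + d + k − 2 ≥ Σ_{i=1}^{k−1} s_i and s_i ≤ u + 1 for all 1 ≤ i ≤ k−1, then the Frobenius number of the quotient is F(⟨A⟩/p) = (Σ_{i=1}^k x_i) * (a/p) + (a/p − 1)*(u*a + d) − a/p. -/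
open Finset

lemma sum_split2 {S : Finset ℕ} {i j : ℕ} (hi : i ∈ S) (hj : j ∈ S) (hij : i ≠ j)
    (f : ℕ → ℕ) :
    (∑ t ∈ (S.erase i).erase j, f t) + f j + f i = ∑ t ∈ S, f t := by
  rw [Finset.sum_erase_add _ _ (Finset.mem_erase.2 ⟨hij.symm, hj⟩),
    Finset.sum_erase_add _ _ hi]

lemma sum_split3 {S : Finset ℕ} {i j l : ℕ} (hi : i ∈ S) (hj : j ∈ S) (hl : l ∈ S)
    (hij : i ≠ j) (hil : i ≠ l) (hjl : j ≠ l) (f : ℕ → ℕ) :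
    (∑ t ∈ ((S.erase i).erase j).erase l, f t) + f l + f j + f i = ∑ t ∈ S, f t := by
  rw [Finset.sum_erase_add _ _ (Finset.mem_erase.2 ⟨hjl.symm, Finset.mem_erase.2 ⟨hil.symm, hl⟩⟩)]
  exact sum_split2 hi hj hij f

lemma sum_split4 {S : Finset ℕ} {i j l n : ℕ} (hi : i ∈ S) (hj : j ∈ S) (hl : l ∈ S)
    (hn : n ∈ S) (hij : i ≠ j) (hil : i ≠ l) (hjl : j ≠ l)
    (hin : i ≠ n) (hjn : j ≠ n) (hln : l ≠ n) (f : ℕ → ℕ) :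
    (∑ t ∈ (((S.erase i).erase j).erase l).erase n, f t) + f n + f l + f j + f i
      = ∑ t ∈ S, f t := by
  rw [Finset.sum_erase_add _ _ (Finset.mem_erase.2 ⟨hln.symm, Finset.mem_erase.2 ⟨hjn.symm,
    Finset.mem_erase.2 ⟨hin.symm, hn⟩⟩⟩)]
  exact sum_split3 hi hj hl hij hil hjl f

section
variable (k u : ℕ) (b s : ℕ → ℕ)

lemma s_chain (hs1 : ∀ i, 1 ≤ i → i ≤ k - 1 → 1 ≤ s i)
    (hsmono : ∀ i, 2 ≤ i → i ≤ k - 1 → s (i - 1) ≤ s i) :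
    ∀ j, j ≤ k - 1 → ∀ i, 1 ≤ i → i ≤ j → s i ≤ s j := by
  intro j
  induction j with
  | zero => intro _ i hi1 hi2; omega
  | succ j ih =>
    intro hj i hi1 hi2
    rcases Nat.lt_or_ge i (j + 1) with h | h
    · have h1 : s i ≤ s j := ih (by omega) i hi1 (by omega)
      have h2 : s j ≤ s (j + 1) := by
        have := hsmono (j + 1) (by omega) hj
        simpa using this
      omega
    · have : i = j + 1 := by omega
      rw [this]
end

section
variable (k : ℕ) (b s : ℕ → ℕ)

lemma b_pos (hb1 : b 1 = 1)
    (hbrec : ∀ i, 1 ≤ i → i ≤ k - 1 → b (i + 1) = s i * b i + 1) :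
    ∀ j, 1 ≤ j → j ≤ k → 1 ≤ b j := by
  intro j hj1 hjk
  rcases Nat.lt_or_ge j 2 with h | h
  · interval_cases j
    · simp [hb1]
  · have : j = (j - 1) + 1 := by omega
    rw [this, hbrec (j - 1) (by omega) (by omega)]
    omega

lemma T_lt_BIG (hk : 2 ≤ k) (hb1 : b 1 = 1)
    (hbrec : ∀ i, 1 ≤ i → i ≤ k - 1 → b (i + 1) = s i * b i + 1)
    (m : ℕ) (yy : ℕ → ℕ) (hrep : ∑ i ∈ Finset.Icc 1 k, b i * yy i = m) :
    (∑ i ∈ Finset.Icc 1 k, yy i * (m + 2) ^ i) + 2 ≤ (m + 2) ^ (k + 1) := by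
  have h1 : (∑ i ∈ Finset.Icc 1 k, yy i * (m + 2) ^ i)
      ≤ ∑ i ∈ Finset.Icc 1 k, yy i * (m + 2) ^ k := by
    apply Finset.sum_le_sum
    intro i hi
    exact Nat.mul_le_mul_left (yy i) (Nat.pow_le_pow_right (by omega) (Finset.mem_Icc.1 hi).2)
  have h2 : ∑ i ∈ Finset.Icc 1 k, yy i * (m + 2) ^ k
      = (∑ i ∈ Finset.Icc 1 k, yy i) * (m + 2) ^ k := by
    rw [Finset.sum_mul]
  have h3 : (∑ i ∈ Finset.Icc 1 k, yy i) ≤ m := by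
    rw [← hrep]
    apply Finset.sum_le_sum
    intro i hi
    have hb := b_pos k b s hb1 hbrec i (Finset.mem_Icc.1 hi).1 (Finset.mem_Icc.1 hi).2
    calc yy i = 1 * yy i := (one_mul _).symm
    _ ≤ b i * yy i := Nat.mul_le_mul_right _ hb
  have h4 : (∑ i ∈ Finset.Icc 1 k, yy i) * (m + 2) ^ k ≤ m * (m + 2) ^ k :=
    Nat.mul_le_mul_right _ h3
  have h5 : m * (m + 2) ^ k + 2 * (m + 2) ^ k = (m + 2) ^ (k + 1) := by
    rw [pow_succ]; ring
  have h6 : 1 ≤ (m + 2) ^ k := Nat.one_le_pow _ _ (by omega)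
  omega
end

section
variable (k : ℕ) (b s : ℕ → ℕ)

lemma canonicalize (hk : 2 ≤ k) (hb1 : b 1 = 1)
    (hbrec : ∀ i, 1 ≤ i → i ≤ k - 1 → b (i + 1) = s i * b i + 1)
    (hs1 : ∀ i, 1 ≤ i → i ≤ k - 1 → 1 ≤ s i)
    (hsmono : ∀ i, 2 ≤ i → i ≤ k - 1 → s (i - 1) ≤ s i)
    (m : ℕ) (y : ℕ → ℕ) (hyrep : ∑ i ∈ Finset.Icc 1 k, b i * y i = m) :
    ∃ z : ℕ → ℕ, (∑ i ∈ Finset.Icc 1 k, b i * z i = m) ∧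
      (∀ i, 1 ≤ i → i ≤ k - 1 → z i ≤ s i) ∧
      (∀ i, 2 ≤ i → i ≤ k - 1 → z i = s i → ∀ j, 1 ≤ j → j < i → z j = 0) ∧
      (∑ i ∈ Finset.Icc 1 k, z i ≤ ∑ i ∈ Finset.Icc 1 k, y i) := by
  have main : ∀ W D (yy : ℕ → ℕ), (∑ i ∈ Finset.Icc 1 k, b i * yy i = m) →
      (∑ i ∈ Finset.Icc 1 k, yy i ≤ W) →
      ((m + 2) ^ (k + 1) - (∑ i ∈ Finset.Icc 1 k, yy i * (m + 2) ^ i) ≤ D) →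
      ∃ z : ℕ → ℕ, (∑ i ∈ Finset.Icc 1 k, b i * z i = m) ∧
        (∀ i, 1 ≤ i → i ≤ k - 1 → z i ≤ s i) ∧
        (∀ i, 2 ≤ i → i ≤ k - 1 → z i = s i → ∀ j, 1 ≤ j → j < i → z j = 0) ∧
        (∑ i ∈ Finset.Icc 1 k, z i ≤ ∑ i ∈ Finset.Icc 1 k, yy i) := by
    intro W
    induction W with
    | zero =>
      intro D yy h1 h2 _
      have hz : ∀ i ∈ Finset.Icc 1 k, yy i = 0 := by
        intro i hi
        have h0 : ∑ i ∈ Finset.Icc 1 k, yy i = 0 := Nat.le_zero.1 h2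
        exact (Finset.sum_eq_zero_iff.1 h0) i hi
      refine ⟨yy, h1, ?_, ?_, le_rfl⟩
      · intro i hi1 hi2
        rw [hz i (Finset.mem_Icc.2 ⟨hi1, by omega⟩)]
        exact Nat.zero_le _
      · intro i hi2 hik _ j hj1 hji
        exact hz j (Finset.mem_Icc.2 ⟨hj1, by omega⟩)
    | succ W ihW =>
      intro D
      induction D with
      | zero =>
        intro yy h1 _ h3
        exfalso
        have := T_lt_BIG k b s hk hb1 hbrec m yy h1
        omega
      | succ D ihD =>
        intro yy h1 h2 h3
        by_cases hA : ∃ i, 1 ≤ i ∧ i ≤ k - 1 ∧ s i < yy i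
        · obtain ⟨i, hi1, hik, hsy⟩ := hA
          rcases Nat.lt_or_ge i 2 with hi2 | hi2
          · -- move A, i = 1
            have hieq : i = 1 := by omega
            subst hieq
            have mem1 : (1 : ℕ) ∈ Finset.Icc 1 k := Finset.mem_Icc.2 ⟨le_rfl, by omega⟩
            have mem2 : (2 : ℕ) ∈ Finset.Icc 1 k := Finset.mem_Icc.2 ⟨by omega, by omega⟩
            have hb2 : b 2 = s 1 + 1 := by
              have := hbrec 1 le_rfl (by omega)
              rw [hb1] at this
              norm_num at this
              exact this
            obtain ⟨v, hv⟩ : ∃ v, yy 1 = v + (s 1 + 1) := ⟨yy 1 - (s 1 + 1), by omega⟩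
            set y' : ℕ → ℕ := fun t => if t = 1 then v else if t = 2 then yy 2 + 1 else yy t
              with hy'
            have hag : ∀ t ∈ ((Finset.Icc 1 k).erase 2).erase 1, y' t = yy t := by
              intro t ht
              have ht1 : t ≠ 1 := (Finset.mem_erase.1 ht).1
              have ht2 : t ≠ 2 := (Finset.mem_erase.1 (Finset.mem_erase.1 ht).2).1
              simp [hy', ht1, ht2]
            have n21 : (2 : ℕ) ≠ 1 := by omega
            have s1 := sum_split2 mem2 mem1 n21 (fun t => b t * yy t)
            have s2 := sum_split2 mem2 mem1 n21 (fun t => b t * y' t)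
            have s3 := sum_split2 mem2 mem1 n21 (fun t => yy t)
            have s4 := sum_split2 mem2 mem1 n21 (fun t => y' t)
            have e1 : ∑ t ∈ ((Finset.Icc 1 k).erase 2).erase 1, b t * y' t
                = ∑ t ∈ ((Finset.Icc 1 k).erase 2).erase 1, b t * yy t :=
              Finset.sum_congr rfl fun t ht => by rw [hag t ht]
            have e2 : ∑ t ∈ ((Finset.Icc 1 k).erase 2).erase 1, y' t
                = ∑ t ∈ ((Finset.Icc 1 k).erase 2).erase 1, yy t :=
              Finset.sum_congr rfl fun t ht => by rw [hag t ht]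
            have hv1 : y' 1 = v := by simp [hy']
            have hv2 : y' 2 = yy 2 + 1 := by simp [hy']
            rw [e1, hv1, hv2] at s2
            rw [e2, hv1, hv2] at s4
            rw [hb1, one_mul] at s1 s2
            rw [hv] at s1
            have d1 : b 2 * (yy 2 + 1) = b 2 * yy 2 + b 2 := by ring
            rw [h1] at s1
            have hrep' : ∑ i ∈ Finset.Icc 1 k, b i * y' i = m := by omega
            have hs11 : 1 ≤ s 1 := hs1 1 le_rfl (by omega)
            rw [hv] at s3
            have hwlt : (∑ i ∈ Finset.Icc 1 k, y' i) + 1 ≤ ∑ i ∈ Finset.Icc 1 k, yy i := by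
              omega
            obtain ⟨z, hz1, hz2, hz3, hz4⟩ := ihW ((m + 2) ^ (k + 1)) y' hrep' (by omega)
              (by omega)
            exact ⟨z, hz1, hz2, hz3, by omega⟩
          · -- move A, i ≥ 2
            obtain ⟨i0, rfl⟩ : ∃ i0, i = i0 + 1 := ⟨i - 1, by omega⟩
            have hi01 : 1 ≤ i0 := by omega
            have memA : i0 ∈ Finset.Icc 1 k := Finset.mem_Icc.2 ⟨hi01, by omega⟩
            have memB : i0 + 1 ∈ Finset.Icc 1 k := Finset.mem_Icc.2 ⟨by omega, by omega⟩
            have memC : i0 + 2 ∈ Finset.Icc 1 k := Finset.mem_Icc.2 ⟨by omega, by omega⟩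
            have hbA : b (i0 + 1) = s i0 * b i0 + 1 := hbrec i0 hi01 (by omega)
            have hbB : b (i0 + 2) = s (i0 + 1) * b (i0 + 1) + 1 := hbrec (i0 + 1) (by omega)
              (by omega)
            have hsm : s i0 ≤ s (i0 + 1) := by
              have := hsmono (i0 + 1) (by omega) (by omega)
              simpa using this
            obtain ⟨v, hv⟩ : ∃ v, yy (i0 + 1) = v + (s (i0 + 1) + 1) :=
              ⟨yy (i0 + 1) - (s (i0 + 1) + 1), by omega⟩
            set y' : ℕ → ℕ := fun t => if t = i0 + 1 then v else if t = i0 then yy i0 + s i0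
              else if t = i0 + 2 then yy (i0 + 2) + 1 else yy t with hy'
            have nBA : i0 + 1 ≠ i0 := by omega
            have nBC : i0 + 1 ≠ i0 + 2 := by omega
            have nAC : i0 ≠ i0 + 2 := by omega
            have hag : ∀ t ∈ (((Finset.Icc 1 k).erase (i0 + 1)).erase i0).erase (i0 + 2),
                y' t = yy t := by
              intro t ht
              have h1' : t ≠ i0 + 2 := (Finset.mem_erase.1 ht).1
              have h2' : t ≠ i0 := (Finset.mem_erase.1 (Finset.mem_erase.1 ht).2).1
              have h3' : t ≠ i0 + 1 :=
                (Finset.mem_erase.1 (Finset.mem_erase.1 (Finset.mem_erase.1 ht).2).2).1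
              simp [hy', h1', h2', h3']
            have s1 := sum_split3 memB memA memC nBA nBC nAC (fun t => b t * yy t)
            have s2 := sum_split3 memB memA memC nBA nBC nAC (fun t => b t * y' t)
            have s3 := sum_split3 memB memA memC nBA nBC nAC (fun t => yy t)
            have s4 := sum_split3 memB memA memC nBA nBC nAC (fun t => y' t)
            have e1 : ∑ t ∈ (((Finset.Icc 1 k).erase (i0 + 1)).erase i0).erase (i0 + 2),
                b t * y' t = ∑ t ∈ (((Finset.Icc 1 k).erase (i0 + 1)).erase i0).erase (i0 + 2),
                b t * yy t := Finset.sum_congr rfl fun t ht => by rw [hag t ht]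
            have e2 : ∑ t ∈ (((Finset.Icc 1 k).erase (i0 + 1)).erase i0).erase (i0 + 2),
                y' t = ∑ t ∈ (((Finset.Icc 1 k).erase (i0 + 1)).erase i0).erase (i0 + 2),
                yy t := Finset.sum_congr rfl fun t ht => by rw [hag t ht]
            have hvB : y' (i0 + 1) = v := by simp [hy']
            have hvA : y' i0 = yy i0 + s i0 := by simp [hy', nBA.symm]
            have hvC : y' (i0 + 2) = yy (i0 + 2) + 1 := by simp [hy', nBC.symm, nAC.symm]
            rw [e1, hvA, hvB, hvC] at s2
            rw [e2, hvA, hvB, hvC] at s4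
            rw [hv, h1] at s1
            rw [hv] at s3
            have d0 : b i0 * (yy i0 + s i0) = b i0 * yy i0 + s i0 * b i0 := by ring
            have d1 : b (i0 + 2) * (yy (i0 + 2) + 1) = b (i0 + 2) * yy (i0 + 2) + b (i0 + 2) := by
              ring
            have d2 : b (i0 + 1) * (v + (s (i0 + 1) + 1))
                = b (i0 + 1) * v + s (i0 + 1) * b (i0 + 1) + b (i0 + 1) := by ring
            rw [d2] at s1
            rw [d0, d1] at s2
            have hrep' : ∑ i ∈ Finset.Icc 1 k, b i * y' i = m := by omega
            have hwle : (∑ i ∈ Finset.Icc 1 k, y' i) + s (i0 + 1)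
                = (∑ i ∈ Finset.Icc 1 k, yy i) + s i0 := by omega
            rcases lt_or_eq_of_le hsm with hlt | heq
            · obtain ⟨z, hz1, hz2, hz3, hz4⟩ := ihW ((m + 2) ^ (k + 1)) y' hrep' (by omega)
                (by omega)
              exact ⟨z, hz1, hz2, hz3, by omega⟩
            · -- equal s; weight unchanged, potential increases
              have s5 := sum_split3 memB memA memC nBA nBC nAC (fun t => yy t * (m + 2) ^ t)
              have s6 := sum_split3 memB memA memC nBA nBC nAC (fun t => y' t * (m + 2) ^ t)
              have e3 : ∑ t ∈ (((Finset.Icc 1 k).erase (i0 + 1)).erase i0).erase (i0 + 2),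
                  y' t * (m + 2) ^ t
                  = ∑ t ∈ (((Finset.Icc 1 k).erase (i0 + 1)).erase i0).erase (i0 + 2),
                  yy t * (m + 2) ^ t := Finset.sum_congr rfl fun t ht => by rw [hag t ht]
              rw [e3, hvA, hvB, hvC] at s6
              rw [hv] at s5
              have g1 : (v + (s (i0 + 1) + 1)) * (m + 2) ^ (i0 + 1)
                  = v * (m + 2) ^ (i0 + 1) + s (i0 + 1) * (m + 2) ^ (i0 + 1)
                    + (m + 2) ^ (i0 + 1) := by ring
              have g2 : (yy i0 + s i0) * (m + 2) ^ i0
                  = yy i0 * (m + 2) ^ i0 + s i0 * (m + 2) ^ i0 := by ring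
              have g3 : (yy (i0 + 2) + 1) * (m + 2) ^ (i0 + 2)
                  = yy (i0 + 2) * (m + 2) ^ (i0 + 2) + (m + 2) ^ (i0 + 2) := by ring
              rw [g1] at s5
              rw [g2, g3] at s6
              -- bound : s (i0+1) + 2 ≤ m + 2
              have hbposB : 1 ≤ b (i0 + 1) := b_pos k b s hb1 hbrec (i0 + 1) (by omega)
                (by omega)
              have q2 : s (i0 + 1) * 1 ≤ s (i0 + 1) * b (i0 + 1) :=
                Nat.mul_le_mul_left _ hbposB
              have hsbound : s (i0 + 1) + 2 ≤ m + 2 := by omega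
              have p1 : (m + 2) ^ (i0 + 1) * (s (i0 + 1) + 2)
                  ≤ (m + 2) ^ (i0 + 1) * (m + 2) := Nat.mul_le_mul_left _ hsbound
              have p2 : (m + 2) ^ (i0 + 1) * (s (i0 + 1) + 2)
                  = s (i0 + 1) * (m + 2) ^ (i0 + 1) + (m + 2) ^ (i0 + 1)
                    + (m + 2) ^ (i0 + 1) := by ring
              have p3 : (m + 2) ^ (i0 + 2) = (m + 2) ^ (i0 + 1) * (m + 2) := by ring
              have p4 : 1 ≤ (m + 2) ^ (i0 + 1) := Nat.one_le_pow _ _ (by omega)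
              have hTlt : (∑ i ∈ Finset.Icc 1 k, yy i * (m + 2) ^ i) + 1
                  ≤ ∑ i ∈ Finset.Icc 1 k, y' i * (m + 2) ^ i := by omega
              obtain ⟨z, hz1, hz2, hz3, hz4⟩ := ihD y' hrep' (by omega) (by omega)
              exact ⟨z, hz1, hz2, hz3, by omega⟩
        · by_cases hB : ∃ i, 2 ≤ i ∧ i ≤ k - 1 ∧ yy i = s i ∧ ∃ j, 1 ≤ j ∧ j < i ∧ 0 < yy j
          · obtain ⟨i, hi2, hik, hyi, j, hj1, hji, hyj⟩ := hB
            have hbI : b (i + 1) = s i * b i + 1 := hbrec i (by omega) hik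
            rcases Nat.lt_or_ge j 2 with hj2 | hj2
            · -- move B, j = 1
              have hjeq : j = 1 := by omega
              subst hjeq
              have memJ : (1 : ℕ) ∈ Finset.Icc 1 k := Finset.mem_Icc.2 ⟨le_rfl, by omega⟩
              have memI : i ∈ Finset.Icc 1 k := Finset.mem_Icc.2 ⟨by omega, by omega⟩
              have memI1 : i + 1 ∈ Finset.Icc 1 k := Finset.mem_Icc.2 ⟨by omega, by omega⟩
              have nIJ : i ≠ 1 := by omega
              have nII1 : i ≠ i + 1 := by omega
              have nJI1 : (1 : ℕ) ≠ i + 1 := by omega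
              obtain ⟨w, hw⟩ : ∃ w, yy 1 = w + 1 := ⟨yy 1 - 1, by omega⟩
              set y' : ℕ → ℕ := fun t => if t = i then 0 else if t = i + 1 then yy (i + 1) + 1
                else if t = 1 then w else yy t with hy'
              have hag : ∀ t ∈ (((Finset.Icc 1 k).erase i).erase 1).erase (i + 1),
                  y' t = yy t := by
                intro t ht
                have h1' : t ≠ i + 1 := (Finset.mem_erase.1 ht).1
                have h2' : t ≠ 1 := (Finset.mem_erase.1 (Finset.mem_erase.1 ht).2).1
                have h3' : t ≠ i :=
                  (Finset.mem_erase.1 (Finset.mem_erase.1 (Finset.mem_erase.1 ht).2).2).1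
                simp [hy', h1', h2', h3']
              have s1 := sum_split3 memI memJ memI1 nIJ nII1 nJI1 (fun t => b t * yy t)
              have s2 := sum_split3 memI memJ memI1 nIJ nII1 nJI1 (fun t => b t * y' t)
              have s3 := sum_split3 memI memJ memI1 nIJ nII1 nJI1 (fun t => yy t)
              have s4 := sum_split3 memI memJ memI1 nIJ nII1 nJI1 (fun t => y' t)
              have e1 : ∑ t ∈ (((Finset.Icc 1 k).erase i).erase 1).erase (i + 1), b t * y' t
                  = ∑ t ∈ (((Finset.Icc 1 k).erase i).erase 1).erase (i + 1), b t * yy t :=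
                Finset.sum_congr rfl fun t ht => by rw [hag t ht]
              have e2 : ∑ t ∈ (((Finset.Icc 1 k).erase i).erase 1).erase (i + 1), y' t
                  = ∑ t ∈ (((Finset.Icc 1 k).erase i).erase 1).erase (i + 1), yy t :=
                Finset.sum_congr rfl fun t ht => by rw [hag t ht]
              have hvI : y' i = 0 := by simp [hy']
              have hvJ : y' 1 = w := by simp [hy', nIJ.symm, nJI1]; intro h0; omega
              have hvI1 : y' (i + 1) = yy (i + 1) + 1 := by simp [hy', nII1.symm]
              rw [e1, hvI, hvJ, hvI1] at s2
              rw [e2, hvI, hvJ, hvI1] at s4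
              rw [hb1, one_mul] at s1 s2
              rw [hw, hyi, h1] at s1
              rw [hw, hyi] at s3
              have d1 : b (i + 1) * (yy (i + 1) + 1) = b (i + 1) * yy (i + 1) + b (i + 1) := by
                ring
              have d2 : b i * s i = s i * b i := by ring
              have hrep' : ∑ i ∈ Finset.Icc 1 k, b i * y' i = m := by omega
              have hsI : 1 ≤ s i := hs1 i (by omega) hik
              have hwlt : (∑ i ∈ Finset.Icc 1 k, y' i) + 1 ≤ ∑ i ∈ Finset.Icc 1 k, yy i := by
                omega
              obtain ⟨z, hz1, hz2, hz3, hz4⟩ := ihW ((m + 2) ^ (k + 1)) y' hrep' (by omega)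
                (by omega)
              exact ⟨z, hz1, hz2, hz3, by omega⟩
            · -- move B, j ≥ 2
              obtain ⟨j0, rfl⟩ : ∃ j0, j = j0 + 1 := ⟨j - 1, by omega⟩
              have hj01 : 1 ≤ j0 := by omega
              have memA : j0 ∈ Finset.Icc 1 k := Finset.mem_Icc.2 ⟨hj01, by omega⟩
              have memB' : j0 + 1 ∈ Finset.Icc 1 k := Finset.mem_Icc.2 ⟨by omega, by omega⟩
              have memI : i ∈ Finset.Icc 1 k := Finset.mem_Icc.2 ⟨by omega, by omega⟩
              have memI1 : i + 1 ∈ Finset.Icc 1 k := Finset.mem_Icc.2 ⟨by omega, by omega⟩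
              have hbJ : b (j0 + 1) = s j0 * b j0 + 1 := hbrec j0 hj01 (by omega)
              have hsij : s j0 ≤ s i := s_chain k s hs1 hsmono i hik j0 hj01 (by omega)
              have nIA : i ≠ j0 := by omega
              have nIB : i ≠ j0 + 1 := by omega
              have nAB : j0 ≠ j0 + 1 := by omega
              have nII1 : i ≠ i + 1 := by omega
              have nAI1 : j0 ≠ i + 1 := by omega
              have nBI1 : j0 + 1 ≠ i + 1 := by omega
              obtain ⟨w, hw⟩ : ∃ w, yy (j0 + 1) = w + 1 := ⟨yy (j0 + 1) - 1, by omega⟩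
              set y' : ℕ → ℕ := fun t => if t = i then 0 else if t = i + 1 then yy (i + 1) + 1
                else if t = j0 + 1 then w else if t = j0 then yy j0 + s j0 else yy t with hy'
              have hag : ∀ t ∈ ((((Finset.Icc 1 k).erase i).erase j0).erase (j0 + 1)).erase
                  (i + 1), y' t = yy t := by
                intro t ht
                have h1' : t ≠ i + 1 := (Finset.mem_erase.1 ht).1
                have h2' : t ≠ j0 + 1 := (Finset.mem_erase.1 (Finset.mem_erase.1 ht).2).1
                have h3' : t ≠ j0 :=
                  (Finset.mem_erase.1 (Finset.mem_erase.1 (Finset.mem_erase.1 ht).2).2).1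
                have h4' : t ≠ i := (Finset.mem_erase.1 (Finset.mem_erase.1
                  (Finset.mem_erase.1 (Finset.mem_erase.1 ht).2).2).2).1
                simp [hy', h1', h2', h3', h4']
              have s1 := sum_split4 memI memA memB' memI1 nIA nIB nAB nII1 nAI1 nBI1
                (fun t => b t * yy t)
              have s2 := sum_split4 memI memA memB' memI1 nIA nIB nAB nII1 nAI1 nBI1
                (fun t => b t * y' t)
              have s3 := sum_split4 memI memA memB' memI1 nIA nIB nAB nII1 nAI1 nBI1
                (fun t => yy t)
              have s4 := sum_split4 memI memA memB' memI1 nIA nIB nAB nII1 nAI1 nBI1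
                (fun t => y' t)
              have e1 : ∑ t ∈ ((((Finset.Icc 1 k).erase i).erase j0).erase (j0 + 1)).erase
                  (i + 1), b t * y' t
                  = ∑ t ∈ ((((Finset.Icc 1 k).erase i).erase j0).erase (j0 + 1)).erase
                  (i + 1), b t * yy t := Finset.sum_congr rfl fun t ht => by rw [hag t ht]
              have e2 : ∑ t ∈ ((((Finset.Icc 1 k).erase i).erase j0).erase (j0 + 1)).erase
                  (i + 1), y' t
                  = ∑ t ∈ ((((Finset.Icc 1 k).erase i).erase j0).erase (j0 + 1)).erase
                  (i + 1), yy t := Finset.sum_congr rfl fun t ht => by rw [hag t ht]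
              have hvI : y' i = 0 := by simp [hy']
              have hvI1 : y' (i + 1) = yy (i + 1) + 1 := by simp [hy', nII1.symm]
              have hvB : y' (j0 + 1) = w := by simp [hy', nIB.symm, nBI1, nIA.symm]
              have hvA : y' j0 = yy j0 + s j0 := by simp [hy', nIA.symm, nAI1, nAB]
              rw [e1, hvI, hvI1, hvB, hvA] at s2
              rw [e2, hvI, hvI1, hvB, hvA] at s4
              rw [hw, hyi, h1] at s1
              rw [hw, hyi] at s3
              have d1 : b (i + 1) * (yy (i + 1) + 1) = b (i + 1) * yy (i + 1) + b (i + 1) := by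
                ring
              have d2 : b i * s i = s i * b i := by ring
              have d3 : b (j0 + 1) * (w + 1) = b (j0 + 1) * w + b (j0 + 1) := by ring
              have d4 : b j0 * (yy j0 + s j0) = b j0 * yy j0 + s j0 * b j0 := by ring
              rw [d3] at s1
              rw [d4] at s2
              have hrep' : ∑ i ∈ Finset.Icc 1 k, b i * y' i = m := by omega
              have hwle : (∑ i ∈ Finset.Icc 1 k, y' i) + s i
                  = (∑ i ∈ Finset.Icc 1 k, yy i) + s j0 := by omega
              rcases lt_or_eq_of_le hsij with hlt | heq
              · obtain ⟨z, hz1, hz2, hz3, hz4⟩ := ihW ((m + 2) ^ (k + 1)) y' hrep' (by omega)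
                  (by omega)
                exact ⟨z, hz1, hz2, hz3, by omega⟩
              · have s5 := sum_split4 memI memA memB' memI1 nIA nIB nAB nII1 nAI1 nBI1
                  (fun t => yy t * (m + 2) ^ t)
                have s6 := sum_split4 memI memA memB' memI1 nIA nIB nAB nII1 nAI1 nBI1
                  (fun t => y' t * (m + 2) ^ t)
                have e3 : ∑ t ∈ ((((Finset.Icc 1 k).erase i).erase j0).erase (j0 + 1)).erase
                    (i + 1), y' t * (m + 2) ^ t
                    = ∑ t ∈ ((((Finset.Icc 1 k).erase i).erase j0).erase (j0 + 1)).erase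
                    (i + 1), yy t * (m + 2) ^ t :=
                  Finset.sum_congr rfl fun t ht => by rw [hag t ht]
                rw [e3, hvI, hvI1, hvB, hvA] at s6
                rw [hw, hyi] at s5
                have g1 : (w + 1) * (m + 2) ^ (j0 + 1)
                    = w * (m + 2) ^ (j0 + 1) + (m + 2) ^ (j0 + 1) := by ring
                have g2 : (yy j0 + s j0) * (m + 2) ^ j0
                    = yy j0 * (m + 2) ^ j0 + s j0 * (m + 2) ^ j0 := by ring
                have g3 : (yy (i + 1) + 1) * (m + 2) ^ (i + 1)
                    = yy (i + 1) * (m + 2) ^ (i + 1) + (m + 2) ^ (i + 1) := by ring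
                rw [g1] at s5
                rw [g2, g3] at s6
                -- bound : s i + 2 ≤ m + 2
                have hbposI : 1 ≤ b i := b_pos k b s hb1 hbrec i (by omega) (by omega)
                have q2 : s i * 1 ≤ s i * b i := Nat.mul_le_mul_left _ hbposI
                have hsbound : s i + 2 ≤ m + 2 := by omega
                have p1 : (m + 2) ^ i * (s i + 2) ≤ (m + 2) ^ i * (m + 2) :=
                  Nat.mul_le_mul_left _ hsbound
                have p2 : (m + 2) ^ i * (s i + 2)
                    = s i * (m + 2) ^ i + (m + 2) ^ i + (m + 2) ^ i := by ring
                have p3 : (m + 2) ^ (i + 1) = (m + 2) ^ i * (m + 2) := by ring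
                have p4 : 1 ≤ (m + 2) ^ i := Nat.one_le_pow _ _ (by omega)
                have p5 : (m + 2) ^ (j0 + 1) ≤ (m + 2) ^ i :=
                  Nat.pow_le_pow_right (by omega) (by omega)
                have hTlt : (∑ i ∈ Finset.Icc 1 k, yy i * (m + 2) ^ i) + 1
                    ≤ ∑ i ∈ Finset.Icc 1 k, y' i * (m + 2) ^ i := by omega
                obtain ⟨z, hz1, hz2, hz3, hz4⟩ := ihD y' hrep' (by omega) (by omega)
                exact ⟨z, hz1, hz2, hz3, by omega⟩
          · push_neg at hA hB
            refine ⟨yy, h1, ?_, ?_, le_rfl⟩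
            · intro i hi1 hi2
              exact hA i hi1 hi2
            · intro i hi2 hik hsi j hj1 hji
              have := hB i hi2 hik hsi j hj1 hji
              omega
  exact main (∑ i ∈ Finset.Icc 1 k, y i) ((m + 2) ^ (k + 1)) y hyrep le_rfl (by omega)

end

noncomputable def wgt (k : ℕ) (b : ℕ → ℕ) (m : ℕ) : ℕ :=
  sInf {t | ∃ y : ℕ → ℕ, (∑ i ∈ Finset.Icc 1 k, b i * y i = m) ∧ (∑ i ∈ Finset.Icc 1 k, y i = t)}

lemma wgt_le (k : ℕ) (b : ℕ → ℕ) {m : ℕ} (y : ℕ → ℕ)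
    (hy : ∑ i ∈ Finset.Icc 1 k, b i * y i = m) :
    wgt k b m ≤ ∑ i ∈ Finset.Icc 1 k, y i :=
  Nat.sInf_le ⟨y, hy, rfl⟩

lemma rep_exists (k : ℕ) (b : ℕ → ℕ) (hk : 1 ≤ k) (hb1 : b 1 = 1) (m : ℕ) :
    (∑ i ∈ Finset.Icc 1 k, b i * (if i = 1 then m else 0) = m) ∧
      (∑ i ∈ Finset.Icc 1 k, (if i = 1 then m else 0) = m) := by
  have h1 : (1 : ℕ) ∈ Finset.Icc 1 k := by simp [hk]
  constructor
  · rw [Finset.sum_eq_single_of_mem 1 h1]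
    · simp [hb1]
    · intro i _ hi; simp [hi]
  · rw [Finset.sum_eq_single_of_mem 1 h1]
    · simp
    · intro i _ hi; simp [hi]

lemma wgt_exists (k : ℕ) (b : ℕ → ℕ) (hk : 1 ≤ k) (hb1 : b 1 = 1) (m : ℕ) :
    ∃ y : ℕ → ℕ, (∑ i ∈ Finset.Icc 1 k, b i * y i = m) ∧
      (∑ i ∈ Finset.Icc 1 k, y i = wgt k b m) := by
  have : wgt k b m ∈ {t | ∃ y : ℕ → ℕ, (∑ i ∈ Finset.Icc 1 k, b i * y i = m) ∧
      (∑ i ∈ Finset.Icc 1 k, y i = t)} := by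
    apply Nat.sInf_mem
    obtain ⟨h1, h2⟩ := rep_exists k b hk hb1 m
    exact ⟨m, _, h1, h2⟩
  exact this

lemma wgt_lipschitz (k u : ℕ) (b s : ℕ → ℕ) (hk : 2 ≤ k) (hb1 : b 1 = 1)
    (hbrec : ∀ i, 1 ≤ i → i ≤ k - 1 → b (i + 1) = s i * b i + 1)
    (hsu : ∀ i, 1 ≤ i → i ≤ k - 1 → s i ≤ u + 1)
    (m : ℕ) : wgt k b m ≤ wgt k b (m + 1) + u := by
  obtain ⟨y, hy, hw⟩ := wgt_exists k b (by omega) hb1 (m + 1)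
  have hex : ∃ j ∈ Finset.Icc 1 k, b j * y j ≠ 0 := by
    by_contra h
    push_neg at h
    have : ∑ i ∈ Finset.Icc 1 k, b i * y i = 0 := Finset.sum_eq_zero h
    omega
  obtain ⟨j, hjmem, hjne⟩ := hex
  have hj1 : 1 ≤ j := (Finset.mem_Icc.1 hjmem).1
  have hjk : j ≤ k := (Finset.mem_Icc.1 hjmem).2
  have hyj : 1 ≤ y j := Nat.one_le_iff_ne_zero.2 (fun h0 => hjne (by simp [h0]))
  obtain ⟨v, hv⟩ : ∃ v, y j = v + 1 := ⟨y j - 1, by omega⟩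
  rcases eq_or_lt_of_le hj1 with h1j | h2j
  · -- j = 1 : remove one copy of b 1
    have hbj : b j = 1 := by rw [← h1j]; exact hb1
    set y' : ℕ → ℕ := fun t => if t = j then v else y t with hy'
    have h1 := Finset.sum_erase_add (Finset.Icc 1 k) (fun t => b t * y t) hjmem
    have h2 := Finset.sum_erase_add (Finset.Icc 1 k) (fun t => b t * y' t) hjmem
    have h3 := Finset.sum_erase_add (Finset.Icc 1 k) (fun t => y t) hjmem
    have h4 := Finset.sum_erase_add (Finset.Icc 1 k) (fun t => y' t) hjmem
    have e1 : ∑ t ∈ (Finset.Icc 1 k).erase j, b t * y' t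
        = ∑ t ∈ (Finset.Icc 1 k).erase j, b t * y t := by
      apply Finset.sum_congr rfl
      intro t ht
      have : t ≠ j := (Finset.mem_erase.1 ht).1
      simp [hy', this]
    have e2 : ∑ t ∈ (Finset.Icc 1 k).erase j, y' t
        = ∑ t ∈ (Finset.Icc 1 k).erase j, y t := by
      apply Finset.sum_congr rfl
      intro t ht
      have : t ≠ j := (Finset.mem_erase.1 ht).1
      simp [hy', this]
    have hyj' : y' j = v := by simp [hy']
    rw [e1, hyj', hbj, one_mul] at h2
    rw [hbj, one_mul, hv] at h1
    have hrep : ∑ i ∈ Finset.Icc 1 k, b i * y' i = m := by omega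
    have := wgt_le k b y' hrep
    rw [e2, hyj'] at h4
    rw [hv] at h3
    omega
  · -- j ≥ 2 : replace b j by s (j-1) copies of b (j-1) (plus remove the +1)
    have hj2 : 2 ≤ j := h2j
    have hj1k : 1 ≤ j - 1 := by omega
    have hj1k' : j - 1 ≤ k - 1 := by omega
    have hjm1mem : j - 1 ∈ Finset.Icc 1 k := Finset.mem_Icc.2 ⟨hj1k, by omega⟩
    have hne : j ≠ j - 1 := by omega
    have hb : b j = s (j - 1) * b (j - 1) + 1 := by
      have := hbrec (j - 1) hj1k hj1k'
      rwa [Nat.sub_add_cancel hj1] at this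
    set y' : ℕ → ℕ := fun t => if t = j then v else if t = j - 1 then y (j - 1) + s (j - 1) else y t with hy'
    have e0 : ∀ t ∈ ((Finset.Icc 1 k).erase j).erase (j - 1), y' t = y t := by
      intro t ht
      have h1 : t ≠ j - 1 := (Finset.mem_erase.1 ht).1
      have h2 : t ≠ j := (Finset.mem_erase.1 (Finset.mem_erase.1 ht).2).1
      simp [hy', h1, h2]
    have h1 := sum_split2 hjmem hjm1mem hne (fun t => b t * y t)
    have h2 := sum_split2 hjmem hjm1mem hne (fun t => b t * y' t)
    have h3 := sum_split2 hjmem hjm1mem hne (fun t => y t)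
    have h4 := sum_split2 hjmem hjm1mem hne (fun t => y' t)
    have e1 : ∑ t ∈ ((Finset.Icc 1 k).erase j).erase (j - 1), b t * y' t
        = ∑ t ∈ ((Finset.Icc 1 k).erase j).erase (j - 1), b t * y t :=
      Finset.sum_congr rfl (fun t ht => by rw [e0 t ht])
    have e2 : ∑ t ∈ ((Finset.Icc 1 k).erase j).erase (j - 1), y' t
        = ∑ t ∈ ((Finset.Icc 1 k).erase j).erase (j - 1), y t :=
      Finset.sum_congr rfl (fun t ht => by rw [e0 t ht])
    have hyj' : y' j = v := by simp [hy']
    have hyjm1' : y' (j - 1) = y (j - 1) + s (j - 1) := by simp [hy', hne.symm]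
    simp only [hyj', hyjm1', e1, e2] at h2 h4
    have hrep : ∑ i ∈ Finset.Icc 1 k, b i * y' i = m := by
      rw [hb, hv] at h1
      rw [hb] at h2
      have d1 : b (j-1) * (y (j-1) + s (j-1)) = b (j-1) * y (j-1) + s (j-1) * b (j-1) := by ring
      have d2 : (s (j-1) * b (j-1) + 1) * (v + 1) = s (j-1) * b (j-1) * v + v + s (j-1) * b (j-1) + 1 := by
        ring
      have d3 : (s (j-1) * b (j-1) + 1) * v = s (j-1) * b (j-1) * v + v := by ring
      rw [d2] at h1
      rw [d1, d3] at h2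
      omega
    have := wgt_le k b y' hrep
    have hsle := hsu (j - 1) hj1k hj1k'
    rw [hv] at h3
    omega

section
variable (k : ℕ) (b s : ℕ → ℕ)

/-- the prefix bound for canonical digit vectors -/
lemma prefix_bound (hk : 2 ≤ k) (hb1 : b 1 = 1)
    (hbrec : ∀ i, 1 ≤ i → i ≤ k - 1 → b (i + 1) = s i * b i + 1)
    (y : ℕ → ℕ)
    (hyle : ∀ i, 1 ≤ i → i ≤ k - 1 → y i ≤ s i)
    (hyzero : ∀ i, 2 ≤ i → i ≤ k - 1 → y i = s i → ∀ j, 1 ≤ j → j < i → y j = 0) :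
    ∀ j, j ≤ k - 1 → ∑ i ∈ Finset.Icc 1 j, b i * y i < b (j + 1) := by
  intro j
  induction j with
  | zero =>
    intro _
    simp [hb1]
  | succ j ih =>
    intro hjk
    rw [Finset.sum_Icc_succ_top (by omega : 1 ≤ j + 1)]
    have hb : b (j + 1 + 1) = s (j + 1) * b (j + 1) + 1 := hbrec (j + 1) (by omega) hjk
    rcases Nat.eq_zero_or_pos j with rfl | hj0
    · -- j + 1 = 1
      have : y 1 ≤ s 1 := hyle 1 le_rfl (by omega)
      have h0 : ∑ i ∈ Finset.Icc 1 0, b i * y i = 0 := by simp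
      rw [h0, hb1] at *
      simp only [zero_add, one_mul] at *
      omega
    · -- j + 1 ≥ 2
      have ihj := ih (by omega)
      by_cases hcase : y (j + 1) = s (j + 1)
      · have hz : ∀ i ∈ Finset.Icc 1 j, b i * y i = 0 := by
          intro i hi
          have := hyzero (j + 1) (by omega) hjk hcase i (Finset.mem_Icc.1 hi).1
            (by have := (Finset.mem_Icc.1 hi).2; omega)
          simp [this]
        rw [Finset.sum_eq_zero hz, hcase]
        have : s (j + 1) * b (j + 1) = b (j + 1) * s (j + 1) := by ring
        omega
      · have hyle' : y (j + 1) + 1 ≤ s (j + 1) := by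
          have := hyle (j + 1) (by omega) hjk
          omega
        have hmul : b (j + 1) * (y (j + 1) + 1) ≤ b (j + 1) * s (j + 1) :=
          Nat.mul_le_mul_left _ hyle'
        have hdist : b (j + 1) * (y (j + 1) + 1) = b (j + 1) * y (j + 1) + b (j + 1) := by ring
        have : s (j + 1) * b (j + 1) = b (j + 1) * s (j + 1) := by ring
        omega

lemma div_unique_aux {B c1 c2 r1 r2 : ℕ} (h1 : r1 < B) (h2 : r2 < B)
    (h : B * c1 + r1 = B * c2 + r2) : c1 = c2 ∧ r1 = r2 := by
  have e1 : (B * c1 + r1) / B = c1 := by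
    rw [Nat.mul_add_div (by omega), Nat.div_eq_of_lt h1, add_zero]
  have e2 : (B * c2 + r2) / B = c2 := by
    rw [Nat.mul_add_div (by omega), Nat.div_eq_of_lt h2, add_zero]
  have : c1 = c2 := by rw [← e1, h, e2]
  constructor
  · exact this
  · subst this; omega

/-- uniqueness of canonical representations -/
lemma canonical_unique (hk : 2 ≤ k) (hb1 : b 1 = 1)
    (hbrec : ∀ i, 1 ≤ i → i ≤ k - 1 → b (i + 1) = s i * b i + 1)
    (m : ℕ) (y z : ℕ → ℕ)
    (hyrep : ∑ i ∈ Finset.Icc 1 k, b i * y i = m)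
    (hzrep : ∑ i ∈ Finset.Icc 1 k, b i * z i = m)
    (hyle : ∀ i, 1 ≤ i → i ≤ k - 1 → y i ≤ s i)
    (hyzero : ∀ i, 2 ≤ i → i ≤ k - 1 → y i = s i → ∀ j, 1 ≤ j → j < i → y j = 0)
    (hzle : ∀ i, 1 ≤ i → i ≤ k - 1 → z i ≤ s i)
    (hzzero : ∀ i, 2 ≤ i → i ≤ k - 1 → z i = s i → ∀ j, 1 ≤ j → j < i → z j = 0) :
    ∀ i, 1 ≤ i → i ≤ k → y i = z i := by
  have key : ∀ t, t ≤ k →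
      (∑ i ∈ Finset.Icc 1 (k - t), b i * y i = ∑ i ∈ Finset.Icc 1 (k - t), b i * z i) ∧
      (∀ j, k - t < j → j ≤ k → y j = z j) := by
    intro t
    induction t with
    | zero =>
      intro _
      refine ⟨by rw [Nat.sub_zero, hyrep, hzrep], fun j hj1 hj2 => absurd hj1 (by omega)⟩
    | succ t ih =>
      intro ht
      obtain ⟨ihsum, ihpt⟩ := ih (by omega)
      set j := k - t with hj
      have hj1 : 1 ≤ j := by omega
      have e : j = (j - 1) + 1 := by omega
      rw [e, Finset.sum_Icc_succ_top (by omega : 1 ≤ (j - 1) + 1),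
        Finset.sum_Icc_succ_top (by omega : 1 ≤ (j - 1) + 1)] at ihsum
      rw [← e] at ihsum
      have hby := prefix_bound k b s hk hb1 hbrec y hyle hyzero (j - 1) (by omega)
      have hbz := prefix_bound k b s hk hb1 hbrec z hzle hzzero (j - 1) (by omega)
      rw [← e] at hby hbz
      have heq : b j * y j + (∑ i ∈ Finset.Icc 1 (j - 1), b i * y i)
          = b j * z j + (∑ i ∈ Finset.Icc 1 (j - 1), b i * z i) := by omega
      obtain ⟨hjeq, hreq⟩ := div_unique_aux hby hbz heq
      constructor
      · have : k - (t + 1) = j - 1 := by omega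
        rw [this]; exact hreq
      · intro j' hj'1 hj'2
        rcases Nat.lt_or_ge (k - t) j' with h | h
        · exact ihpt j' h hj'2
        · have : j' = j := by omega
          rw [this]; exact hjeq
  intro i hi1 hik
  exact (key k le_rfl).2 i (by omega) hik

end

lemma wgt_le_self (k : ℕ) (b : ℕ → ℕ) (hk : 1 ≤ k) (hb1 : b 1 = 1) (m : ℕ) :
    wgt k b m ≤ m := by
  obtain ⟨h1, h2⟩ := rep_exists k b hk hb1 m
  exact le_of_le_of_eq (wgt_le k b _ h1) h2

lemma wgt_lip_iter (k u : ℕ) (b s : ℕ → ℕ) (hk : 2 ≤ k) (hb1 : b 1 = 1)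
    (hbrec : ∀ i, 1 ≤ i → i ≤ k - 1 → b (i + 1) = s i * b i + 1)
    (hsu : ∀ i, 1 ≤ i → i ≤ k - 1 → s i ≤ u + 1)
    (m : ℕ) : ∀ n, wgt k b m ≤ wgt k b (m + n) + n * u := by
  intro n
  induction n with
  | zero => simp
  | succ n ih =>
    have h1 := wgt_lipschitz k u b s hk hb1 hbrec hsu (m + n)
    have h2 : m + n + 1 = m + (n + 1) := by omega
    rw [h2] at h1
    have h3 : (n + 1) * u = n * u + u := by ring
    omega

lemma wgt_eq_of_canonical (k : ℕ) (b s : ℕ → ℕ) (hk : 2 ≤ k) (hb1 : b 1 = 1)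
    (hbrec : ∀ i, 1 ≤ i → i ≤ k - 1 → b (i + 1) = s i * b i + 1)
    (hs1 : ∀ i, 1 ≤ i → i ≤ k - 1 → 1 ≤ s i)
    (hsmono : ∀ i, 2 ≤ i → i ≤ k - 1 → s (i - 1) ≤ s i)
    (m : ℕ) (x : ℕ → ℕ)
    (hxrep : ∑ i ∈ Finset.Icc 1 k, b i * x i = m)
    (hxle : ∀ i, 1 ≤ i → i ≤ k - 1 → x i ≤ s i)
    (hxzero : ∀ i, 2 ≤ i → i ≤ k - 1 → x i = s i → ∀ j, 1 ≤ j → j < i → x j = 0) :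
    wgt k b m = ∑ i ∈ Finset.Icc 1 k, x i := by
  have hle : wgt k b m ≤ ∑ i ∈ Finset.Icc 1 k, x i := wgt_le k b x hxrep
  obtain ⟨y, hyrep, hyw⟩ := wgt_exists k b (by omega) hb1 m
  obtain ⟨z, hz1, hz2, hz3, hz4⟩ := canonicalize k b s hk hb1 hbrec hs1 hsmono m y hyrep
  have huniq := canonical_unique k b s hk hb1 hbrec m z x hz1 hxrep hz2 hz3 hxle hxzero
  have hzx : ∑ i ∈ Finset.Icc 1 k, z i = ∑ i ∈ Finset.Icc 1 k, x i := by
    apply Finset.sum_congr rfl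
    intro i hi
    exact huniq i (Finset.mem_Icc.1 hi).1 (Finset.mem_Icc.1 hi).2
  omega

set_option maxHeartbeats 1000000 in
/-- Frobenius number of the quotient of a GCNS numerical semigroup with
positive `d`. If `u·a + d + k − 2 ≥ Σ s_i` and `s_i ≤ u + 1` for all `i`, then
`F(⟨A⟩/p) = (Σ x_i)·(a/p) + (a/p − 1)·(u·a + d) − a/p`, where `(x_1,…,x_k)` is the
greedy presentation of `a − p`. -/
theorem stmt_6 (a k u p : ℕ) (d : ℤ) (b s : ℕ → ℕ)
    (ha : 2 ≤ a) (hk : 2 ≤ k) (hu : 1 ≤ u)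
    (hd : 0 < d) (hgcd : Int.gcd (a : ℤ) d = 1)
    (hb1 : b 1 = 1)
    (hbrec : ∀ i, 1 ≤ i → i ≤ k - 1 → b (i + 1) = s i * b i + 1)
    (hs1 : ∀ i, 1 ≤ i → i ≤ k - 1 → 1 ≤ s i)
    (hsmono : ∀ i, 2 ≤ i → i ≤ k - 1 → s (i - 1) ≤ s i)
    (hp : 0 < p) (hpa : p ∣ a) (hpne : p ≠ a)
    (hcond : (∑ i ∈ Finset.Icc 1 (k - 1), (s i : ℤ)) ≤ (u : ℤ) * a + d + k - 2)
    (hsu : ∀ i, 1 ≤ i → i ≤ k - 1 → s i ≤ u + 1)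
    -- `x` is the greedy presentation of `a - p`
    (x : ℕ → ℕ)
    (hxsum : ∑ i ∈ Finset.Icc 1 k, b i * x i = a - p)
    (hxk : x k = (a - p) / b k)
    (hxle : ∀ i, 1 ≤ i → i ≤ k - 1 → x i ≤ s i)
    (hxzero : ∀ i, 2 ≤ i → i ≤ k - 1 → x i = s i → ∀ j, 1 ≤ j → j < i → x j = 0) :
    IsGreatest {z : ℤ | ¬ ∃ n : ℕ, (n : ℤ) = z ∧
        ∃ y : ℕ → ℕ, (p * n : ℤ) = (y 0 : ℤ) * a +
          ∑ i ∈ Finset.Icc 1 k, (y i : ℤ) * (((u : ℤ) * b i + 1) * a + d * b i)}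
      (((∑ i ∈ Finset.Icc 1 k, x i : ℕ) : ℤ) * ((a / p : ℕ) : ℤ) +
        (((a / p : ℕ) : ℤ) - 1) * ((u : ℤ) * a + d) - ((a / p : ℕ) : ℤ)) := by
  -- ===== setup =====
  have hpa' : p < a := lt_of_le_of_ne (Nat.le_of_dvd (by omega) hpa) hpne
  set q := a / p with hqdef
  have haq : a = p * q := by rw [hqdef, Nat.mul_div_cancel' hpa]
  have hq2 : 2 ≤ q := by
    rcases Nat.lt_or_ge q 2 with h | h
    · interval_cases q
      · simp at haq; omega
      · simp at haq; omega
    · exact h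
  have hapq : (a : ℤ) = (p : ℤ) * q := by exact_mod_cast congrArg (Nat.cast : ℕ → ℤ) haq
  have hqp : (q - 1) * p = a - p := by
    have h1 : (q - 1) * p = q * p - p := by rw [Nat.sub_mul, one_mul]
    rw [h1, Nat.mul_comm, ← haq]
  have hcod : IsCoprime (a : ℤ) d := Int.isCoprime_iff_gcd_eq_one.2 hgcd
  have hco : IsCoprime (a : ℤ) ((u : ℤ) * a + d) := by
    have h := hcod.add_mul_left_right u
    have e : (u : ℤ) * a + d = d + a * u := by ring
    rw [e]; exact h
  have hcoq : IsCoprime (q : ℤ) ((u : ℤ) * a + d) := by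
    have h2 : IsCoprime ((p : ℤ) * q) ((u : ℤ) * a + d) := by rw [← hapq]; exact hco
    exact h2.of_mul_left_right
  set c : ℤ := (u : ℤ) * a + d with hcdef
  have hc1 : (a : ℤ) + 1 ≤ c := by
    have h1 : (1 : ℤ) ≤ (u : ℤ) := by exact_mod_cast hu
    have h2 : (0 : ℤ) ≤ (a : ℤ) := by positivity
    have h3 : 1 * (a : ℤ) ≤ (u : ℤ) * a := mul_le_mul_of_nonneg_right h1 h2
    rw [hcdef]
    linarith
  set Sx : ℕ := ∑ i ∈ Finset.Icc 1 k, x i with hSx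
  set F : ℤ := (Sx : ℤ) * (q : ℤ) + ((q : ℤ) - 1) * c - (q : ℤ) with hF
  -- optimality of the greedy presentation
  have hopt : wgt k b (a - p) = Sx :=
    wgt_eq_of_canonical k b s hk hb1 hbrec hs1 hsmono (a - p) x hxsum hxle hxzero
  -- cast of a - p
  have hap : ((a - p : ℕ) : ℤ) = (a : ℤ) - p := by
    have : p ≤ a := le_of_lt hpa'
    exact_mod_cast Int.ofNat_sub this
  -- p * F
  have hpF : (p : ℤ) * F = (Sx : ℤ) * a + ((a : ℤ) - p) * c - a := by
    rw [hF, hcdef, hapq]; ring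
  -- Sx is at most a - p
  have hSxle : (Sx : ℤ) ≤ (a : ℤ) - p := by
    have h1 : Sx ≤ a - p := by
      rw [hSx, ← hxsum]
      apply Finset.sum_le_sum
      intro i hi
      have hb := b_pos k b s hb1 hbrec i (Finset.mem_Icc.1 hi).1 (Finset.mem_Icc.1 hi).2
      calc x i = 1 * x i := (one_mul _).symm
      _ ≤ b i * x i := Nat.mul_le_mul_right _ hb
    calc (Sx : ℤ) ≤ ((a - p : ℕ) : ℤ) := by exact_mod_cast h1
    _ = (a : ℤ) - p := hap
  -- characterization of representability
  have hid : ∀ y : ℕ → ℕ, ∑ i ∈ Finset.Icc 1 k, (y i : ℤ) * (((u : ℤ) * b i + 1) * a + d * b i)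
      = ((∑ i ∈ Finset.Icc 1 k, y i : ℕ) : ℤ) * a
        + ((∑ i ∈ Finset.Icc 1 k, b i * y i : ℕ) : ℤ) * c := by
    intro y
    rw [hcdef]
    push_cast
    rw [Finset.sum_mul, Finset.sum_mul, ← Finset.sum_add_distrib]
    apply Finset.sum_congr rfl
    intro i _
    ring
  have hchar : ∀ n : ℕ,
      (∃ y : ℕ → ℕ, (p * n : ℤ) = (y 0 : ℤ) * a +
        ∑ i ∈ Finset.Icc 1 k, (y i : ℤ) * (((u : ℤ) * b i + 1) * a + d * b i)) ↔
      (∃ t m : ℕ, wgt k b m ≤ t ∧ (p * n : ℤ) = (t : ℤ) * a + (m : ℤ) * c) := by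
    intro n
    constructor
    · rintro ⟨y, hy⟩
      rw [hid y] at hy
      refine ⟨y 0 + ∑ i ∈ Finset.Icc 1 k, y i, ∑ i ∈ Finset.Icc 1 k, b i * y i, ?_, ?_⟩
      · have := wgt_le k b y rfl
        omega
      · rw [hy]; push_cast; ring
    · rintro ⟨t, m, hwt, heq⟩
      obtain ⟨y, hyrep, hyw⟩ := wgt_exists k b (by omega) hb1 m
      set Y : ℕ → ℕ := fun i => if i = 0 then t - wgt k b m else y i with hY
      have hag : ∀ i ∈ Finset.Icc 1 k, Y i = y i := by
        intro i hi
        have : i ≠ 0 := by have := (Finset.mem_Icc.1 hi).1; omega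
        simp [hY, this]
      refine ⟨Y, ?_⟩
      have e1 : ∑ i ∈ Finset.Icc 1 k, (Y i : ℤ) * (((u : ℤ) * b i + 1) * a + d * b i)
          = ∑ i ∈ Finset.Icc 1 k, (y i : ℤ) * (((u : ℤ) * b i + 1) * a + d * b i) :=
        Finset.sum_congr rfl fun i hi => by rw [hag i hi]
      have hY0 : (Y 0 : ℤ) = (t : ℤ) - wgt k b m := by
        have : Y 0 = t - wgt k b m := by simp [hY]
        rw [this]
        exact_mod_cast Int.ofNat_sub hwt
      rw [e1, hid y, hyrep, hyw, hY0, heq]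
      ring
  -- ===== part 1 : F is not representable =====
  have hmem : ¬ ∃ n : ℕ, (n : ℤ) = F ∧
      ∃ y : ℕ → ℕ, (p * n : ℤ) = (y 0 : ℤ) * a +
        ∑ i ∈ Finset.Icc 1 k, (y i : ℤ) * (((u : ℤ) * b i + 1) * a + d * b i) := by
    rintro ⟨n, hnF, hrep⟩
    obtain ⟨t, m, hwt, heq⟩ := (hchar n).1 hrep
    rw [hnF] at heq
    rw [hpF] at heq
    -- heq : Sx * a + (a - p) * c - a = t * a + m * c
    have ha0 : (a : ℤ) ≠ 0 := by positivity
    have hdvd : (a : ℤ) ∣ ((m : ℤ) - ((a : ℤ) - p)) := by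
      apply hco.dvd_of_dvd_mul_right
      exact ⟨(Sx : ℤ) - 1 - t, by rw [hcdef] at heq ⊢; linear_combination -heq⟩
    obtain ⟨j, hj⟩ := hdvd
    have hjc : (j : ℤ) * c = (Sx : ℤ) - 1 - t := by
      apply mul_left_cancel₀ ha0
      rw [hcdef] at heq ⊢
      linear_combination -heq - ((u : ℤ) * a + d) * hj
    have hm0 : (0 : ℤ) ≤ (m : ℤ) := by positivity
    have ht0 : (0 : ℤ) ≤ (t : ℤ) := by positivity
    have hp1 : (1 : ℤ) ≤ (p : ℤ) := by exact_mod_cast hp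
    rcases lt_trichotomy j 0 with hcase | hcase | hcase
    · -- j ≤ -1 : m < 0, contradiction
      have h1 : (a : ℤ) * j ≤ (a : ℤ) * (-1) :=
        mul_le_mul_of_nonneg_left (by omega) (by positivity)
      linarith
    · -- j = 0 : greedy optimality is violated
      subst hcase
      have hmn : (m : ℤ) = ((a - p : ℕ) : ℤ) := by rw [hap]; linarith
      have hmn' : m = a - p := by exact_mod_cast hmn
      rw [hmn', hopt] at hwt
      have : (Sx : ℤ) ≤ (t : ℤ) := by exact_mod_cast hwt
      simp at hjc
      linarith
    · -- j ≥ 1 : t < 0, contradiction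
      have h1 : c ≤ (j : ℤ) * c := le_mul_of_one_le_left (by linarith) (by omega)
      linarith
  -- ===== part 2 : upper bound =====
  constructor
  · exact hmem
  · intro z hz
    by_contra hgt
    push_neg at hgt
    -- hgt : F < z
    have hq2' : (2 : ℤ) ≤ (q : ℤ) := by exact_mod_cast hq2
    have hqa : (q : ℤ) ≤ (a : ℤ) := by
      have : q ≤ a := Nat.div_le_self a p
      exact_mod_cast this
    have hF0 : 0 ≤ F := by
      have h1 : ((q : ℤ) - 1) * ((q : ℤ) + 1) ≤ ((q : ℤ) - 1) * c := by
        apply mul_le_mul_of_nonneg_left (by linarith) (by linarith)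
      have h2 : (0 : ℤ) ≤ (Sx : ℤ) * q := by positivity
      have h3 : 2 * (q : ℤ) ≤ (q : ℤ) * q := by
        have := mul_le_mul_of_nonneg_right hq2' (by linarith : (0 : ℤ) ≤ (q : ℤ))
        linarith
      have h4 : ((q : ℤ) - 1) * ((q : ℤ) + 1) = (q : ℤ) * q - 1 := by ring
      rw [hF]
      linarith
    have hz0 : 0 ≤ z := le_trans hF0 (le_of_lt hgt)
    set n : ℕ := z.toNat with hn
    have hzn : (n : ℤ) = z := Int.toNat_of_nonneg hz0
    apply hz
    refine ⟨n, hzn, ?_⟩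
    rw [hchar n]
    -- construct the representation
    obtain ⟨α, β, hαβ⟩ := hcoq
    have hq0 : (q : ℤ) ≠ 0 := by positivity
    have hq0' : (0 : ℤ) < (q : ℤ) := by positivity
    set L : ℤ := ((n : ℤ) * β) % q with hL
    have hL0 : 0 ≤ L := Int.emod_nonneg _ hq0
    have hLlt : L < q := Int.emod_lt_of_pos _ hq0'
    have hkey : (n : ℤ) - L * c = (q : ℤ) * ((n : ℤ) * α + (((n : ℤ) * β) / q) * c) := by
      rw [hL, Int.emod_def]
      linear_combination (-(n : ℤ)) * hαβ
    set ℓ : ℕ := L.toNat with hℓ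
    have hℓL : (ℓ : ℤ) = L := Int.toNat_of_nonneg hL0
    have hℓq : ℓ ≤ q - 1 := by
      have : (ℓ : ℤ) < q := by rw [hℓL]; exact hLlt
      have : ℓ < q := by exact_mod_cast this
      omega
    set m : ℕ := ℓ * p with hm
    set δ : ℕ := q - 1 - ℓ with hδ
    have hmδ : m + δ * p = a - p := by
      have h1 : m + δ * p = (ℓ + δ) * p := by rw [hm]; ring
      have h2 : ℓ + δ = q - 1 := by omega
      rw [h1, h2, hqp]
    have hlip : wgt k b m ≤ Sx + δ * p * u := by
      have h := wgt_lip_iter k u b s hk hb1 hbrec hsu m (δ * p)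
      rw [hmδ, hopt] at h
      omega
    -- divisibility : a ∣ p*n - W
    obtain ⟨K, hK⟩ : ∃ K : ℤ, (n : ℤ) - L * c = (q : ℤ) * K := ⟨_, hkey⟩
    have hWdvd : (p : ℤ) * n - (((wgt k b m : ℕ) : ℤ) * a + (m : ℤ) * c)
        = (a : ℤ) * (K - (wgt k b m : ℤ)) := by
      have hmc : (m : ℤ) = (ℓ : ℤ) * p := by rw [hm]; push_cast; ring
      rw [hmc, hapq]
      linear_combination (p : ℤ) * hK - (p : ℤ) * c * hℓL
    -- W ≤ p*F + a
    have hWle : ((wgt k b m : ℕ) : ℤ) * a + (m : ℤ) * c ≤ (p : ℤ) * F + a := by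
      rw [hpF]
      have hδc : ((a : ℤ) - p) = (m : ℤ) + (δ : ℤ) * p := by
        rw [← hap]
        rw [← hmδ]
        push_cast
        ring
      have h1 : ((wgt k b m : ℕ) : ℤ) ≤ (Sx : ℤ) + (δ : ℤ) * p * u := by
        exact_mod_cast hlip
      have h2 : ((wgt k b m : ℕ) : ℤ) * a ≤ ((Sx : ℤ) + (δ : ℤ) * p * u) * a :=
        mul_le_mul_of_nonneg_right h1 (by positivity)
      have h3 : ((δ : ℤ) * p * u) * a ≤ ((δ : ℤ) * p) * c := by
        rw [hcdef]
        have h5 : (0 : ℤ) ≤ ((δ : ℤ) * p) * d := by positivity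
        have e : ((δ : ℤ) * p) * ((u : ℤ) * a + d) = (δ : ℤ) * p * u * a + ((δ : ℤ) * p) * d := by
          ring
        linarith
      rw [hδc]
      have e2 : (((m : ℤ) + (δ : ℤ) * p)) * c = (m : ℤ) * c + ((δ : ℤ) * p) * c := by ring
      have e3 : ((Sx : ℤ) + (δ : ℤ) * p * u) * a = (Sx : ℤ) * a + ((δ : ℤ) * p * u) * a := by ring
      linarith
    -- conclude : the quotient is nonnegative
    have hzF : F + 1 ≤ (n : ℤ) := by rw [hzn]; omega
    have hpn : (p : ℤ) * F + p ≤ (p : ℤ) * n := by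
      have h1 : (p : ℤ) * (F + 1) ≤ (p : ℤ) * n :=
        mul_le_mul_of_nonneg_left hzF (by positivity)
      linarith
    have hp1 : (1 : ℤ) ≤ (p : ℤ) := by exact_mod_cast hp
    have ha0' : (0 : ℤ) < (a : ℤ) := by positivity
    have hT0 : 0 ≤ K - (wgt k b m : ℤ) := by
      by_contra hneg
      push_neg at hneg
      have h1 : K - (wgt k b m : ℤ) ≤ -1 := by omega
      have h2 : (a : ℤ) * (K - (wgt k b m : ℤ)) ≤ (a : ℤ) * (-1) :=
        mul_le_mul_of_nonneg_left h1 (by positivity)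
      linarith [hWdvd, hWle, hpn]
    set T : ℤ := K - (wgt k b m : ℤ) with hT
    refine ⟨wgt k b m + T.toNat, m, by omega, ?_⟩
    have hTn : (T.toNat : ℤ) = T := Int.toNat_of_nonneg hT0
    push_cast
    rw [hTn]
    linarith [hWdvd]
end
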